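/- arXiv:1903.01622 — 10 statements merged into one kernel-verified Lean document; each statement's English description precedes it below -/
import Mathlib

section
/- Let k ≥ d ≥ 3 be integers and let F be a (d, 2k+d−3)-conditionally intersecting family of k-element subsets of [n]. Then F can be partitioned into three subfamilies H, B and S, the ground set [n] can be partitioned into two subsets Y and Z, and Z can be partitioned into sets V_1, …, V_t each of size at most 2k, such that: (a) every member of H is a subset of Y and contains a (k−1)-element subset that is contained in no other member of F; (b) every member of B is a subset of some V_i; (c) no member of S is a subset of Y, and for every S ∈ S and every i ∈ {1,…,t}, the intersection S ∩ V_i is either empty or has size at least d. -/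
/-- A family `F` of finsets is `(d, s)`-conditionally intersecting if there do not exist
`d` distinct members of `F` whose union has size at most `s` and whose intersection is empty. -/
def CondIntersecting {n : ℕ} (d s : ℕ) (F : Finset (Finset (Fin n))) : Prop :=
  ¬ ∃ D ⊆ F, D.card = d ∧ (D.sup id).card ≤ s ∧ D.inf id = ∅

namespace Stmt0Aux

variable {n k d : ℕ} {F : Finset (Finset (Fin n))}

lemma mem_of_inf {D : Finset (Finset (Fin n))} {X : Finset (Fin n)} {z : Fin n}
    (hX : X ∈ D) (hz : z ∈ D.inf id) : z ∈ X :=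
  Finset.le_iff_subset.mp (Finset.inf_le hX) hz

/-- irreducibility: every (k-1)-subset extends to another member -/
def Irr (F : Finset (Finset (Fin n))) (k : ℕ) (A : Finset (Fin n)) : Prop :=
  ∀ G ⊆ A, G.card = k - 1 → ∃ S ∈ F, G ⊆ S ∧ S ≠ A

lemma irr_ext (hk : 1 ≤ k) (hunif : ∀ S ∈ F, S.card = k) {A : Finset (Fin n)}
    (hA : A ∈ F) (hirr : Irr F k A) {x : Fin n} (hx : x ∈ A) :
    ∃ y, y ∉ A ∧ insert y (A.erase x) ∈ F := by
  have hkA : A.card = k := hunif A hA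
  have hce : (A.erase x).card = k - 1 := by rw [Finset.card_erase_of_mem hx, hkA]
  obtain ⟨C, hCF, hsub, hne⟩ := hirr (A.erase x) (Finset.erase_subset _ _) hce
  have hkC : C.card = k := hunif C hCF
  have hsd : (C \ (A.erase x)).card = 1 := by
    rw [Finset.card_sdiff_of_subset hsub, hkC, hce]; omega
  obtain ⟨y, hy⟩ := Finset.card_eq_one.mp hsd
  have hyC : y ∈ C \ (A.erase x) := by rw [hy]; exact Finset.mem_singleton_self y
  have hyne : y ∉ A.erase x := (Finset.mem_sdiff.mp hyC).2
  have hCeq : C = insert y (A.erase x) := by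
    have h1 : A.erase x ∪ C \ (A.erase x) = C := Finset.union_sdiff_of_subset hsub
    rw [hy] at h1
    rw [← h1]; ext z
    simp only [Finset.mem_union, Finset.mem_insert, Finset.mem_singleton]
    tauto
  have hyA : y ∉ A := by
    intro hyA
    have hxy : y = x := by
      by_contra hne2
      exact hyne (Finset.mem_erase.mpr ⟨hne2, hyA⟩)
    apply hne
    rw [hCeq, hxy, Finset.insert_erase hx]
  exact ⟨y, hyA, hCeq ▸ hCF⟩

lemma ext_fun (hk : 1 ≤ k) (hunif : ∀ S ∈ F, S.card = k) {A T : Finset (Fin n)}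
    (hA : A ∈ F) (hirr : Irr F k A) (hTA : T ⊆ A) (hne : A.Nonempty) :
    ∃ yf : Fin n → Fin n, ∀ x ∈ T, yf x ∉ A ∧ insert (yf x) (A.erase x) ∈ F := by
  obtain ⟨a₀, _⟩ := hne
  have h : ∀ x : Fin n, ∃ y : Fin n, x ∈ T → (y ∉ A ∧ insert y (A.erase x) ∈ F) := by
    intro x
    by_cases hx : x ∈ T
    · obtain ⟨y, h1, h2⟩ := irr_ext hk hunif hA hirr (hTA hx)
      exact ⟨y, fun _ => ⟨h1, h2⟩⟩
    · exact ⟨a₀, fun h => absurd h hx⟩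
  choose yf hyf using h
  exact ⟨yf, fun x hx => hyf x hx⟩

lemma Cf_inter {A : Finset (Fin n)} {y x : Fin n} (hyA : y ∉ A) :
    insert y (A.erase x) ∩ A = A.erase x := by
  ext z
  simp only [Finset.mem_inter, Finset.mem_insert, Finset.mem_erase]
  constructor
  · rintro ⟨h1 | h1, h2⟩
    · exact absurd (h1 ▸ h2) hyA
    · exact h1
  · intro h; exact ⟨Or.inr h, h.2⟩

lemma not_mem_Cf {A : Finset (Fin n)} {y x : Fin n} (hyA : y ∉ A) (hx : x ∈ A) :
    x ∉ insert y (A.erase x) := by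
  simp only [Finset.mem_insert, Finset.mem_erase]
  rintro (h | ⟨h, _⟩)
  · exact hyA (h ▸ hx)
  · exact h rfl

lemma Cf_ne_A {A : Finset (Fin n)} {y x : Fin n} (hyA : y ∉ A) (hx : x ∈ A) :
    insert y (A.erase x) ≠ A := by
  intro h
  have hx' := hx
  rw [← h] at hx'
  exact not_mem_Cf hyA hx hx'

lemma Cf_injOn {A T : Finset (Fin n)} (hTA : T ⊆ A) {yf : Fin n → Fin n}
    (hyA : ∀ x ∈ T, yf x ∉ A) :
    Set.InjOn (fun x => insert (yf x) (A.erase x)) ↑T := by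
  intro x hx x' hx' heq
  simp only [Finset.mem_coe] at hx hx'
  simp only at heq
  have h1 : A.erase x = A.erase x' := by
    have h := congrArg (· ∩ A) heq
    simpa [Cf_inter (hyA x hx), Cf_inter (hyA x' hx')] using h
  by_contra hne
  have hx2 : x ∈ A.erase x' := Finset.mem_erase.mpr ⟨hne, hTA hx⟩
  rw [← h1] at hx2
  exact (Finset.notMem_erase x A) hx2

lemma lem1 (hd : 3 ≤ d) (hdk : d ≤ k) (hunif : ∀ S ∈ F, S.card = k)
    (hci : CondIntersecting d (2 * k + d - 3) F)
    {A B : Finset (Fin n)} (hA : A ∈ F) (hirr : Irr F k A)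
    (hB : B ∈ F) (hBA : B ≠ A) (hnon : (A ∩ B).Nonempty) :
    d - 1 ≤ (A ∩ B).card := by
  classical
  by_contra hlt
  push_neg at hlt
  have hkA : A.card = k := hunif A hA
  have hkB : B.card = k := hunif B hB
  have hm1 : 1 ≤ (A ∩ B).card := Finset.card_pos.mpr hnon
  have hm2 : (A ∩ B).card ≤ d - 2 := by omega
  obtain ⟨T, hABT, hTA, hTcard⟩ :=
    Finset.exists_subsuperset_card_eq (Finset.inter_subset_left : A ∩ B ⊆ A) hm2
      (by omega)
  have hAne : A.Nonempty := Finset.card_pos.mp (by omega)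
  obtain ⟨yf, hyf⟩ := ext_fun (by omega) hunif hA hirr hTA hAne
  set Cf : Fin n → Finset (Fin n) := fun x => insert (yf x) (A.erase x) with hCfdef
  have hCfF : ∀ x ∈ T, Cf x ∈ F := fun x hx => (hyf x hx).2
  have hCfyA : ∀ x ∈ T, yf x ∉ A := fun x hx => (hyf x hx).1
  set D : Finset (Finset (Fin n)) := insert A (insert B (T.image Cf)) with hDdef
  have hinj : Set.InjOn Cf ↑T := Cf_injOn hTA hCfyA
  have himcard : (T.image Cf).card = d - 2 := by
    rw [Finset.card_image_of_injOn hinj, hTcard]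
  have hAnotim : A ∉ T.image Cf := by
    simp only [Finset.mem_image]
    rintro ⟨x, hx, hEq⟩
    exact Cf_ne_A (hCfyA x hx) (hTA hx) hEq
  have hBnotim : B ∉ T.image Cf := by
    simp only [Finset.mem_image]
    rintro ⟨x, hx, hEq⟩
    have h1 : A ∩ B = A.erase x := by
      rw [← hEq, Finset.inter_comm]
      exact Cf_inter (hCfyA x hx)
    have h2 : (A ∩ B).card = k - 1 := by
      rw [h1, Finset.card_erase_of_mem (hTA hx), hkA]
    omega
  have hABne : A ≠ B := fun h => hBA h.symm
  have hDcard : D.card = d := by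
    rw [hDdef, Finset.card_insert_of_notMem (by
        simp only [Finset.mem_insert]
        push_neg
        exact ⟨hABne, hAnotim⟩),
      Finset.card_insert_of_notMem hBnotim, himcard]
    omega
  have hDF : D ⊆ F := by
    intro X hX
    rw [hDdef] at hX
    simp only [Finset.mem_insert, Finset.mem_image] at hX
    rcases hX with rfl | rfl | ⟨x, hx, rfl⟩
    exacts [hA, hB, hCfF x hx]
  have hinf : D.inf id = ∅ := by
    rw [Finset.eq_empty_iff_forall_notMem]
    intro z hz
    have hzA : z ∈ A := mem_of_inf (by rw [hDdef]; simp) hz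
    have hzB : z ∈ B := mem_of_inf (by rw [hDdef]; simp) hz
    have hzT : z ∈ T := hABT (Finset.mem_inter.mpr ⟨hzA, hzB⟩)
    have hzC : z ∈ Cf z := mem_of_inf (by
      rw [hDdef]
      simp only [Finset.mem_insert, Finset.mem_image]
      exact Or.inr (Or.inr ⟨z, hzT, rfl⟩)) hz
    exact not_mem_Cf (hCfyA z hzT) (hTA hzT) hzC
  have hsup : D.sup id ⊆ (A ∪ B) ∪ T.image yf := by
    rw [← Finset.le_iff_subset]
    apply Finset.sup_le
    intro X hX
    rw [hDdef] at hX
    simp only [Finset.mem_insert, Finset.mem_image] at hX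
    rw [Finset.le_iff_subset]
    rcases hX with rfl | rfl | ⟨x, hx, rfl⟩
    · intro z hz
      simp only [id_eq] at hz
      simp only [Finset.mem_union]
      exact Or.inl (Or.inl hz)
    · intro z hz
      simp only [id_eq] at hz
      simp only [Finset.mem_union]
      exact Or.inl (Or.inr hz)
    · intro z hz
      simp only [id_eq, hCfdef, Finset.mem_insert] at hz
      simp only [Finset.mem_union, Finset.mem_image]
      rcases hz with rfl | hz
      · exact Or.inr ⟨x, hx, rfl⟩
      · exact Or.inl (Or.inl (Finset.mem_of_mem_erase hz))
  have hsupcard : (D.sup id).card ≤ 2 * k + d - 3 := by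
    have h1 := Finset.card_le_card hsup
    have h2 := Finset.card_union_le (A ∪ B) (T.image yf)
    have h3 := Finset.card_image_le (s := T) (f := yf)
    have h4 := Finset.card_union_add_card_inter A B
    omega
  exact hci ⟨D, hDF, hDcard, hsupcard, hinf⟩

lemma lem2 (hd : 3 ≤ d) (hdk : d ≤ k) (hunif : ∀ S ∈ F, S.card = k)
    (hci : CondIntersecting d (2 * k + d - 3) F)
    {A S : Finset (Fin n)} (hA : A ∈ F) (hirr : Irr F k A)
    (hS : S ∈ F) (hcard : (S ∩ A).card = d - 1) :
    ∃ y, y ∉ A ∧ y ∈ S ∧ ∀ x ∈ S ∩ A, insert y (A.erase x) ∈ F := by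
  classical
  have hkA : A.card = k := hunif A hA
  have hkS : S.card = k := hunif S hS
  have hTA : S ∩ A ⊆ A := Finset.inter_subset_right
  have hAne : A.Nonempty := Finset.card_pos.mp (by omega)
  obtain ⟨yf, hyf⟩ := ext_fun (by omega) hunif hA hirr hTA hAne
  set Cf : Fin n → Finset (Fin n) := fun x => insert (yf x) (A.erase x) with hCfdef
  have hCfF : ∀ x ∈ S ∩ A, Cf x ∈ F := fun x hx => (hyf x hx).2
  have hCfyA : ∀ x ∈ S ∩ A, yf x ∉ A := fun x hx => (hyf x hx).1
  set D : Finset (Finset (Fin n)) := insert S ((S ∩ A).image Cf) with hDdef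
  have hinj : Set.InjOn Cf ↑(S ∩ A) := Cf_injOn hTA hCfyA
  have himcard : ((S ∩ A).image Cf).card = d - 1 := by
    rw [Finset.card_image_of_injOn hinj, hcard]
  have hSnotim : S ∉ (S ∩ A).image Cf := by
    simp only [Finset.mem_image]
    rintro ⟨x, hx, hEq⟩
    have h1 : S ∩ A = A.erase x := by
      rw [← hEq]
      exact Cf_inter (hCfyA x hx)
    have hx2 : x ∈ A.erase x := h1 ▸ hx
    exact Finset.notMem_erase x A hx2
  have hDcard : D.card = d := by
    rw [hDdef, Finset.card_insert_of_notMem hSnotim, himcard]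
    omega
  have hDF : D ⊆ F := by
    intro X hX
    rw [hDdef] at hX
    simp only [Finset.mem_insert, Finset.mem_image] at hX
    rcases hX with rfl | ⟨x, hx, rfl⟩
    exacts [hS, hCfF x hx]
  have hsup : D.sup id ⊆ (S ∪ A) ∪ (S ∩ A).image yf := by
    rw [← Finset.le_iff_subset]
    apply Finset.sup_le
    intro X hX
    rw [hDdef] at hX
    simp only [Finset.mem_insert, Finset.mem_image] at hX
    rw [Finset.le_iff_subset]
    rcases hX with rfl | ⟨x, hx, rfl⟩
    · intro z hz
      simp only [id_eq] at hz
      simp only [Finset.mem_union]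
      exact Or.inl (Or.inl hz)
    · intro z hz
      simp only [id_eq, hCfdef, Finset.mem_insert] at hz
      simp only [Finset.mem_union, Finset.mem_image]
      rcases hz with rfl | hz
      · exact Or.inr ⟨x, hx, rfl⟩
      · exact Or.inl (Or.inr (Finset.mem_of_mem_erase hz))
  have hsupcard : (D.sup id).card ≤ 2 * k + d - 3 := by
    have h1 := Finset.card_le_card hsup
    have h2 := Finset.card_union_le (S ∪ A) ((S ∩ A).image yf)
    have h3 := Finset.card_image_le (s := S ∩ A) (f := yf)
    have h4 := Finset.card_union_add_card_inter S A
    omega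
  have hinfne : D.inf id ≠ ∅ := fun h => hci ⟨D, hDF, hDcard, hsupcard, h⟩
  obtain ⟨z, hz⟩ := Finset.nonempty_iff_ne_empty.mpr hinfne
  have hzS : z ∈ S := mem_of_inf (by rw [hDdef]; simp) hz
  have hzC : ∀ x ∈ S ∩ A, z ∈ Cf x := by
    intro x hx
    refine mem_of_inf (by
      rw [hDdef]
      simp only [Finset.mem_insert, Finset.mem_image]
      exact Or.inr ⟨x, hx, rfl⟩) hz
  have hzA : z ∉ A := by
    intro hzA
    have hzT : z ∈ S ∩ A := Finset.mem_inter.mpr ⟨hzS, hzA⟩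
    exact not_mem_Cf (hCfyA z hzT) (hTA hzT) (hzC z hzT)
  refine ⟨z, hzA, hzS, fun x hx => ?_⟩
  have h2 := hzC x hx
  simp only [hCfdef, Finset.mem_insert] at h2
  have h3 : z = yf x := by
    rcases h2 with h | h
    · exact h
    · exact absurd (Finset.mem_of_mem_erase h) hzA
  rw [h3]
  exact (hyf x hx).2

lemma lem3 (hd : 3 ≤ d) (hdk : d ≤ k) (hunif : ∀ S ∈ F, S.card = k)
    (hci : CondIntersecting d (2 * k + d - 3) F)
    {A S : Finset (Fin n)} {x₀ y : Fin n} (hA : A ∈ F) (hirr : Irr F k A)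
    (hx₀ : x₀ ∈ A) (hyA : y ∉ A) (hyF : insert y (A.erase x₀) ∈ F)
    (hS : S ∈ F) (hyS : y ∈ S) (hSA : S ∩ A = ∅) : False := by
  classical
  have hkA : A.card = k := hunif A hA
  have hkS : S.card = k := hunif S hS
  obtain ⟨T, hxT, hTA, hTcard⟩ :=
    Finset.exists_subsuperset_card_eq (n := d - 2) (Finset.singleton_subset_iff.mpr hx₀)
      (by rw [Finset.card_singleton]; omega) (by omega)
  have hx₀T : x₀ ∈ T := hxT (Finset.mem_singleton_self x₀)
  have hAne : A.Nonempty := ⟨x₀, hx₀⟩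
  obtain ⟨yf0, hyf0⟩ := ext_fun (by omega) hunif hA hirr hTA hAne
  set yf : Fin n → Fin n := fun x => if x = x₀ then y else yf0 x with hyfdef
  have hyfA : ∀ x ∈ T, yf x ∉ A := by
    intro x hx
    by_cases h : x = x₀
    · simp only [hyfdef, h, if_pos]
      exact hyA
    · simp only [hyfdef, if_neg h]
      exact (hyf0 x hx).1
  set Cf : Fin n → Finset (Fin n) := fun x => insert (yf x) (A.erase x) with hCfdef
  have hCfF : ∀ x ∈ T, Cf x ∈ F := by
    intro x hx
    by_cases h : x = x₀
    · subst h
      simp only [hCfdef, hyfdef, if_pos rfl]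
      exact hyF
    · simp only [hCfdef, hyfdef, if_neg h]
      exact (hyf0 x hx).2
  set D : Finset (Finset (Fin n)) := insert A (insert S (T.image Cf)) with hDdef
  have hinj : Set.InjOn Cf ↑T := Cf_injOn hTA hyfA
  have himcard : (T.image Cf).card = d - 2 := by
    rw [Finset.card_image_of_injOn hinj, hTcard]
  have hAnotim : A ∉ T.image Cf := by
    simp only [Finset.mem_image]
    rintro ⟨x, hx, hEq⟩
    exact Cf_ne_A (hyfA x hx) (hTA hx) hEq
  have hSnotim : S ∉ T.image Cf := by
    simp only [Finset.mem_image]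
    rintro ⟨x, hx, hEq⟩
    have h1 : S ∩ A = A.erase x := by
      rw [← hEq]
      exact Cf_inter (hyfA x hx)
    rw [hSA] at h1
    have h2 : (A.erase x).card = k - 1 := by
      rw [Finset.card_erase_of_mem (hTA hx), hkA]
    rw [← h1] at h2
    simp only [Finset.card_empty] at h2
    omega
  have hASne : A ≠ S := by
    intro h
    rw [← h, Finset.inter_self] at hSA
    rw [hSA] at hkA
    simp only [Finset.card_empty] at hkA
    omega
  have hDcard : D.card = d := by
    rw [hDdef, Finset.card_insert_of_notMem (by
        simp only [Finset.mem_insert]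
        push_neg
        exact ⟨hASne, hAnotim⟩),
      Finset.card_insert_of_notMem hSnotim, himcard]
    omega
  have hDF : D ⊆ F := by
    intro X hX
    rw [hDdef] at hX
    simp only [Finset.mem_insert, Finset.mem_image] at hX
    rcases hX with rfl | rfl | ⟨x, hx, rfl⟩
    exacts [hA, hS, hCfF x hx]
  have hinf : D.inf id = ∅ := by
    rw [Finset.eq_empty_iff_forall_notMem]
    intro z hz
    have hzA : z ∈ A := mem_of_inf (by rw [hDdef]; simp) hz
    have hzS : z ∈ S := mem_of_inf (by rw [hDdef]; simp) hz
    have : z ∈ S ∩ A := Finset.mem_inter.mpr ⟨hzS, hzA⟩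
    rw [hSA] at this
    exact Finset.notMem_empty z this
  have hsup : D.sup id ⊆ (A ∪ S) ∪ (T.erase x₀).image yf := by
    rw [← Finset.le_iff_subset]
    apply Finset.sup_le
    intro X hX
    rw [hDdef] at hX
    simp only [Finset.mem_insert, Finset.mem_image] at hX
    rw [Finset.le_iff_subset]
    rcases hX with rfl | rfl | ⟨x, hx, rfl⟩
    · intro z hz
      simp only [id_eq] at hz
      simp only [Finset.mem_union]
      exact Or.inl (Or.inl hz)
    · intro z hz
      simp only [id_eq] at hz
      simp only [Finset.mem_union]
      exact Or.inl (Or.inr hz)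
    · intro z hz
      simp only [id_eq, hCfdef, Finset.mem_insert] at hz
      simp only [Finset.mem_union, Finset.mem_image]
      rcases hz with rfl | hz
      · by_cases h : x = x₀
        · subst h
          simp only [hyfdef, if_pos rfl]
          exact Or.inl (Or.inr hyS)
        · exact Or.inr ⟨x, Finset.mem_erase.mpr ⟨h, hx⟩, rfl⟩
      · exact Or.inl (Or.inl (Finset.mem_of_mem_erase hz))
  have hsupcard : (D.sup id).card ≤ 2 * k + d - 3 := by
    have h1 := Finset.card_le_card hsup
    have h2 := Finset.card_union_le (A ∪ S) ((T.erase x₀).image yf)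
    have h3 := Finset.card_image_le (s := T.erase x₀) (f := yf)
    have h4 := Finset.card_union_add_card_inter A S
    have h5 : (A ∩ S).card = 0 := by
      rw [Finset.inter_comm, hSA, Finset.card_empty]
    have h6 : (T.erase x₀).card = d - 2 - 1 := by
      rw [Finset.card_erase_of_mem hx₀T, hTcard]
    omega
  exact hci ⟨D, hDF, hDcard, hsupcard, hinf⟩

lemma lem5 (hd : 3 ≤ d) (hdk : d ≤ k) (hunif : ∀ S ∈ F, S.card = k)
    (hci : CondIntersecting d (2 * k + d - 3) F)
    {A S : Finset (Fin n)} {x y : Fin n} (hA : A ∈ F) (hirr : Irr F k A)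
    (hS : S ∈ F) (hcard : (S ∩ A).card = d - 1) (hx : x ∈ S ∩ A)
    (hyA : y ∉ A) (hyF : insert y (A.erase x) ∈ F) : y ∈ S := by
  classical
  by_contra hyS
  obtain ⟨y₁, hy₁A, hy₁S, hy₁F⟩ := lem2 hd hdk hunif hci hA hirr hS hcard
  have hkA : A.card = k := hunif A hA
  have hkS : S.card = k := hunif S hS
  have hxS : x ∈ S := (Finset.mem_inter.mp hx).1
  have hxA : x ∈ A := (Finset.mem_inter.mp hx).2
  have hTA : S ∩ A ⊆ A := Finset.inter_subset_right
  set C₀ : Finset (Fin n) := insert y (A.erase x) with hC₀def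
  set Cf : Fin n → Finset (Fin n) := fun x' => insert y₁ (A.erase x') with hCfdef
  set T' : Finset (Fin n) := (S ∩ A).erase x with hT'def
  have hT'A : T' ⊆ A := fun z hz => hTA (Finset.mem_of_mem_erase hz)
  have hCfF : ∀ x' ∈ T', Cf x' ∈ F := fun x' hx' => hy₁F x' (Finset.mem_of_mem_erase hx')
  set D : Finset (Finset (Fin n)) := insert S (insert C₀ (T'.image Cf)) with hDdef
  have hinj : Set.InjOn Cf ↑T' := Cf_injOn hT'A (fun _ _ => hy₁A)
  have himcard : (T'.image Cf).card = d - 2 := by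
    rw [Finset.card_image_of_injOn hinj, hT'def, Finset.card_erase_of_mem hx, hcard]
    omega
  have hC₀notim : C₀ ∉ T'.image Cf := by
    simp only [Finset.mem_image]
    rintro ⟨x', hx', hEq⟩
    have h1 : A.erase x' = A.erase x := by
      have h := congrArg (· ∩ A) hEq
      simpa [Cf_inter (hy₁A), hC₀def, Cf_inter (hyA), hCfdef] using h
    have hxx' : x' ≠ x := (Finset.mem_erase.mp hx').1
    have : x' ∈ A.erase x' := by
      rw [h1]
      exact Finset.mem_erase.mpr ⟨hxx', hT'A hx'⟩
    exact Finset.notMem_erase x' A this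
  have hSnotC₀ : S ≠ C₀ := by
    intro h
    apply hyS
    rw [h]
    exact Finset.mem_insert_self y _
  have hSnotim : S ∉ T'.image Cf := by
    simp only [Finset.mem_image]
    rintro ⟨x', hx', hEq⟩
    have h1 : S ∩ A = A.erase x' := by
      rw [← hEq]
      exact Cf_inter hy₁A
    have hx'T : x' ∈ S ∩ A := Finset.mem_of_mem_erase hx'
    have : x' ∈ A.erase x' := h1 ▸ hx'T
    exact Finset.notMem_erase x' A this
  have hDcard : D.card = d := by
    rw [hDdef, Finset.card_insert_of_notMem (by
        simp only [Finset.mem_insert]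
        push_neg
        exact ⟨hSnotC₀, hSnotim⟩),
      Finset.card_insert_of_notMem hC₀notim, himcard]
    omega
  have hDF : D ⊆ F := by
    intro X hX
    rw [hDdef] at hX
    simp only [Finset.mem_insert, Finset.mem_image] at hX
    rcases hX with rfl | rfl | ⟨x', hx', rfl⟩
    exacts [hS, hyF, hCfF x' hx']
  have hinf : D.inf id = ∅ := by
    rw [Finset.eq_empty_iff_forall_notMem]
    intro z hz
    have hzS : z ∈ S := mem_of_inf (by rw [hDdef]; simp) hz
    have hzC₀ : z ∈ C₀ := mem_of_inf (by rw [hDdef]; simp) hz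
    by_cases hzA : z ∈ A
    · have hzT : z ∈ S ∩ A := Finset.mem_inter.mpr ⟨hzS, hzA⟩
      have hzx : z ≠ x := by
        intro h
        subst h
        exact not_mem_Cf hyA hzA hzC₀
      have hzT' : z ∈ T' := Finset.mem_erase.mpr ⟨hzx, hzT⟩
      have hzCf : z ∈ Cf z := mem_of_inf (by
        rw [hDdef]
        simp only [Finset.mem_insert, Finset.mem_image]
        exact Or.inr (Or.inr ⟨z, hzT', rfl⟩)) hz
      exact not_mem_Cf hy₁A hzA hzCf
    · simp only [hC₀def, Finset.mem_insert] at hzC₀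
      rcases hzC₀ with rfl | h
      · exact hyS hzS
      · exact hzA (Finset.mem_of_mem_erase h)
  have hsup : D.sup id ⊆ (S ∪ A) ∪ {y} := by
    rw [← Finset.le_iff_subset]
    apply Finset.sup_le
    intro X hX
    rw [hDdef] at hX
    simp only [Finset.mem_insert, Finset.mem_image] at hX
    rw [Finset.le_iff_subset]
    rcases hX with rfl | rfl | ⟨x', hx', rfl⟩
    · intro z hz
      simp only [id_eq] at hz
      simp only [Finset.mem_union]
      exact Or.inl (Or.inl hz)
    · intro z hz
      simp only [id_eq, hC₀def, Finset.mem_insert] at hz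
      simp only [Finset.mem_union, Finset.mem_singleton]
      rcases hz with rfl | hz
      · exact Or.inr rfl
      · exact Or.inl (Or.inr (Finset.mem_of_mem_erase hz))
    · intro z hz
      simp only [id_eq, hCfdef, Finset.mem_insert] at hz
      simp only [Finset.mem_union]
      rcases hz with rfl | hz
      · exact Or.inl (Or.inl hy₁S)
      · exact Or.inl (Or.inr (Finset.mem_of_mem_erase hz))
  have hsupcard : (D.sup id).card ≤ 2 * k + d - 3 := by
    have h1 := Finset.card_le_card hsup
    have h2 := Finset.card_union_le (S ∪ A) ({y} : Finset (Fin n))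
    have h4 := Finset.card_union_add_card_inter S A
    have h5 : ({y} : Finset (Fin n)).card = 1 := Finset.card_singleton y
    omega
  exact hci ⟨D, hDF, hDcard, hsupcard, hinf⟩

lemma blockA (hd : 3 ≤ d) (hdk : d ≤ k) (hunif : ∀ S ∈ F, S.card = k)
    (hci : CondIntersecting d (2 * k + d - 3) F)
    {A : Finset (Fin n)} (hA : A ∈ F) (hirr : Irr F k A) :
    ∃ P : Finset (Fin n),
      (∀ y ∈ P, y ∉ A ∧ ∃ x ∈ A, insert y (A.erase x) ∈ F) ∧
      (A ∪ P).card ≤ 2 * k ∧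
      ∀ S ∈ F, S ∩ (A ∪ P) = ∅ ∨ d ≤ (S ∩ (A ∪ P)).card := by
  classical
  have hkA : A.card = k := hunif A hA
  have hAne : A.Nonempty := Finset.card_pos.mp (by omega)
  obtain ⟨a₀, ha₀⟩ := hAne
  -- traces of size d-1
  set 𝒯 : Finset (Finset (Fin n)) :=
    (F.filter (fun S => (S ∩ A).card = d - 1)).image (fun S => S ∩ A) with h𝒯def
  have h𝒯prop : ∀ T ∈ 𝒯, T ⊆ A ∧ T.card = d - 1 ∧ ∃ S ∈ F, S ∩ A = T := by
    intro T hT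
    rw [h𝒯def] at hT
    simp only [Finset.mem_image, Finset.mem_filter] at hT
    obtain ⟨S, ⟨hSF, hScard⟩, rfl⟩ := hT
    exact ⟨Finset.inter_subset_right, hScard, S, hSF, rfl⟩
  -- maximal pairwise disjoint subcollection
  set 𝒢 : Finset (Finset (Finset (Fin n))) :=
    (𝒯.powerset).filter (fun 𝓣 => ∀ T₁ ∈ 𝓣, ∀ T₂ ∈ 𝓣, T₁ ≠ T₂ → T₁ ∩ T₂ = ∅) with h𝒢def
  have h𝒢ne : 𝒢.Nonempty := ⟨∅, by
    rw [h𝒢def, Finset.mem_filter]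
    exact ⟨Finset.empty_mem_powerset 𝒯, by intro T₁ h; exact absurd h (Finset.notMem_empty T₁)⟩⟩
  obtain ⟨𝓣, h𝓣𝒢, h𝓣max⟩ := Finset.exists_max_image 𝒢 Finset.card h𝒢ne
  rw [h𝒢def, Finset.mem_filter, Finset.mem_powerset] at h𝓣𝒢
  obtain ⟨h𝓣𝒯, h𝓣disj⟩ := h𝓣𝒢
  have hmeet : ∀ T'' ∈ 𝒯, ∃ T ∈ 𝓣, (T ∩ T'').Nonempty := by
    intro T'' hT''
    by_contra hcon
    push_neg at hcon
    have hcon' : ∀ T ∈ 𝓣, T ∩ T'' = ∅ := fun T hT =>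
      hcon T hT
    have hT''ne : T''.Nonempty := by
      have := (h𝒯prop T'' hT'').2.1
      exact Finset.card_pos.mp (by omega)
    have hT''notin : T'' ∉ 𝓣 := by
      intro h
      have := hcon' T'' h
      rw [Finset.inter_self] at this
      rw [this] at hT''ne
      exact Finset.not_nonempty_empty hT''ne
    have hgood : insert T'' 𝓣 ∈ 𝒢 := by
      rw [h𝒢def, Finset.mem_filter, Finset.mem_powerset]
      refine ⟨Finset.insert_subset hT'' h𝓣𝒯, ?_⟩
      intro T₁ h₁ T₂ h₂ hne
      rcases Finset.mem_insert.mp h₁ with he₁ | h₁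
      · rcases Finset.mem_insert.mp h₂ with he₂ | h₂
        · exact absurd (he₁.trans he₂.symm) hne
        · rw [he₁, Finset.inter_comm]
          exact hcon' T₂ h₂
      · rcases Finset.mem_insert.mp h₂ with he₂ | h₂
        · rw [he₂]
          exact hcon' T₁ h₁
        · exact h𝓣disj T₁ h₁ T₂ h₂ hne
    have := h𝓣max _ hgood
    rw [Finset.card_insert_of_notMem hT''notin] at this
    omega
  -- choose attachment point for each T in 𝓣
  have hych : ∀ T : Finset (Fin n), ∃ y : Fin n, T ∈ 𝓣 →
      (y ∉ A ∧ ∀ x ∈ T, insert y (A.erase x) ∈ F) := by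
    intro T
    by_cases hT : T ∈ 𝓣
    · obtain ⟨hTsubA, hTcard, S, hSF, hSA⟩ := h𝒯prop T (h𝓣𝒯 hT)
      obtain ⟨y, hy1, hy2, hy3⟩ := lem2 hd hdk hunif hci hA hirr hSF (by rw [hSA]; exact hTcard)
      refine ⟨y, fun _ => ⟨hy1, ?_⟩⟩
      intro x hx
      exact hy3 x (by rw [hSA]; exact hx)
    · exact ⟨a₀, fun h => absurd h hT⟩
  choose yT hyT using hych
  set P : Finset (Fin n) := 𝓣.image yT with hPdef
  have hPprop : ∀ y ∈ P, y ∉ A ∧ ∃ x ∈ A, insert y (A.erase x) ∈ F := by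
    intro y hy
    rw [hPdef] at hy
    simp only [Finset.mem_image] at hy
    obtain ⟨T, hT, rfl⟩ := hy
    obtain ⟨hTsubA, hTcard, _⟩ := h𝒯prop T (h𝓣𝒯 hT)
    have hTne : T.Nonempty := Finset.card_pos.mp (by omega)
    obtain ⟨x, hxT⟩ := hTne
    exact ⟨(hyT T hT).1, x, hTsubA hxT, (hyT T hT).2 x hxT⟩
  -- size bound
  have h𝓣card : 𝓣.card ≤ k := by
    have hrep : ∀ T : Finset (Fin n), ∃ a : Fin n, T ∈ 𝓣 → a ∈ T := by
      intro T
      by_cases hT : T ∈ 𝓣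
      · obtain ⟨hTsubA, hTcard, _⟩ := h𝒯prop T (h𝓣𝒯 hT)
        obtain ⟨x, hx⟩ : T.Nonempty := Finset.card_pos.mp (by omega)
        exact ⟨x, fun _ => hx⟩
      · exact ⟨a₀, fun h => absurd h hT⟩
    choose rep hrep using hrep
    have : 𝓣.card ≤ A.card := by
      apply Finset.card_le_card_of_injOn rep
      · intro T hT
        exact (h𝒯prop T (h𝓣𝒯 hT)).1 (hrep T hT)
      · intro T₁ h₁ T₂ h₂ heq
        simp only [Finset.mem_coe] at h₁ h₂
        by_contra hne
        have h3 := h𝓣disj T₁ h₁ T₂ h₂ hne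
        have : rep T₁ ∈ T₁ ∩ T₂ := Finset.mem_inter.mpr ⟨hrep T₁ h₁, heq ▸ hrep T₂ h₂⟩
        rw [h3] at this
        exact Finset.notMem_empty _ this
    omega
  have hsize : (A ∪ P).card ≤ 2 * k := by
    have h1 := Finset.card_union_le A P
    have h2 : P.card ≤ 𝓣.card := by
      rw [hPdef]; exact Finset.card_image_le
    omega
  refine ⟨P, hPprop, hsize, ?_⟩
  intro S hSF
  have hkS : S.card = k := hunif S hSF
  by_cases h0 : (S ∩ A).card = 0
  · left
    have hSA : S ∩ A = ∅ := Finset.card_eq_zero.mp h0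
    rw [Finset.eq_empty_iff_forall_notMem]
    intro z hz
    obtain ⟨hzS, hzAP⟩ := Finset.mem_inter.mp hz
    rcases Finset.mem_union.mp hzAP with hzA | hzP
    · have : z ∈ S ∩ A := Finset.mem_inter.mpr ⟨hzS, hzA⟩
      rw [hSA] at this
      exact Finset.notMem_empty _ this
    · obtain ⟨hzA, x, hxA, hxF⟩ := hPprop z hzP
      exact lem3 hd hdk hunif hci hA hirr hxA hzA hxF hSF hzS hSA
  by_cases h1 : (S ∩ A).card ≤ d - 2
  · -- impossible by lem1
    exfalso
    have hSneA : S ≠ A := by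
      intro h
      rw [h, Finset.inter_self] at h1
      omega
    have := lem1 hd hdk hunif hci hA hirr hSF hSneA
      (by rw [Finset.inter_comm]; exact Finset.card_pos.mp (by omega))
    rw [Finset.inter_comm] at this
    omega
  by_cases h2 : (S ∩ A).card = d - 1
  · right
    have hT''mem : S ∩ A ∈ 𝒯 := by
      rw [h𝒯def]
      simp only [Finset.mem_image, Finset.mem_filter]
      exact ⟨S, ⟨hSF, h2⟩, rfl⟩
    obtain ⟨T, hT𝓣, hTmeet⟩ := hmeet (S ∩ A) hT''mem
    obtain ⟨x, hxmem⟩ := hTmeet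
    obtain ⟨hxT, hxSA⟩ := Finset.mem_inter.mp hxmem
    have hyTA := (hyT T hT𝓣).1
    have hyTF := (hyT T hT𝓣).2 x hxT
    have hyTS : yT T ∈ S := lem5 hd hdk hunif hci hA hirr hSF h2 hxSA hyTA hyTF
    have hsub : insert (yT T) (S ∩ A) ⊆ S ∩ (A ∪ P) := by
      intro z hz
      rcases Finset.mem_insert.mp hz with rfl | hz
      · exact Finset.mem_inter.mpr ⟨hyTS, Finset.mem_union_right _
          (by rw [hPdef]; exact Finset.mem_image_of_mem yT hT𝓣)⟩
      · obtain ⟨hz1, hz2⟩ := Finset.mem_inter.mp hz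
        exact Finset.mem_inter.mpr ⟨hz1, Finset.mem_union_left _ hz2⟩
    have hcardins : (insert (yT T) (S ∩ A)).card = d := by
      rw [Finset.card_insert_of_notMem (fun h => hyTA (Finset.mem_inter.mp h).2), h2]
      omega
    calc d = (insert (yT T) (S ∩ A)).card := hcardins.symm
      _ ≤ (S ∩ (A ∪ P)).card := Finset.card_le_card hsub
  · right
    have : S ∩ A ⊆ S ∩ (A ∪ P) := by
      intro z hz
      obtain ⟨hz1, hz2⟩ := Finset.mem_inter.mp hz
      exact Finset.mem_inter.mpr ⟨hz1, Finset.mem_union_left _ hz2⟩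
    have := Finset.card_le_card this
    omega

end Stmt0Aux

theorem stmt0 (n k d : ℕ) (hd : 3 ≤ d) (hdk : d ≤ k)
    (F : Finset (Finset (Fin n))) (hunif : ∀ S ∈ F, S.card = k)
    (hci : CondIntersecting d (2 * k + d - 3) F) :
    ∃ (𝓗 𝓑 𝓢 : Finset (Finset (Fin n))) (Y Z : Finset (Fin n))
      (t : ℕ) (V : Fin t → Finset (Fin n)),
      Disjoint 𝓗 𝓑 ∧ Disjoint 𝓗 𝓢 ∧ Disjoint 𝓑 𝓢 ∧ 𝓗 ∪ 𝓑 ∪ 𝓢 = F ∧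
      Disjoint Y Z ∧ Y ∪ Z = Finset.univ ∧
      (∀ i j : Fin t, i ≠ j → Disjoint (V i) (V j)) ∧
      Finset.univ.sup V = Z ∧
      (∀ i : Fin t, (V i).card ≤ 2 * k) ∧
      (∀ H ∈ 𝓗, H ⊆ Y ∧ ∃ G ⊆ H, G.card = k - 1 ∧ ∀ S ∈ F, G ⊆ S → S = H) ∧
      (∀ E ∈ 𝓑, ∃ i : Fin t, E ⊆ V i) ∧
      (∀ S ∈ 𝓢, ¬ S ⊆ Y ∧ ∀ i : Fin t, S ∩ V i = ∅ ∨ d ≤ (S ∩ V i).card) := by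
  classical
  -- the irreducible members
  set I : Finset (Finset (Fin n)) :=
    F.filter (fun A => ¬ ∃ G ⊆ A, G.card = k - 1 ∧ ∀ S ∈ F, G ⊆ S → S = A) with hIdef
  have hIirr : ∀ A ∈ I, A ∈ F ∧ Stmt0Aux.Irr F k A := by
    intro A hAI
    rw [hIdef, Finset.mem_filter] at hAI
    refine ⟨hAI.1, fun G hG hGc => ?_⟩
    by_contra hcon
    push_neg at hcon
    exact hAI.2 ⟨G, hG, hGc, fun S hS hGS => hcon S hS hGS⟩
  have hknz : ∀ A ∈ F, A.Nonempty := fun A hA =>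
    Finset.card_pos.mp (by rw [hunif A hA]; omega)
  -- maximal pairwise disjoint subfamily M of I
  set 𝒢 : Finset (Finset (Finset (Fin n))) :=
    (I.powerset).filter (fun M => ∀ A ∈ M, ∀ B ∈ M, A ≠ B → A ∩ B = ∅) with h𝒢def
  have h𝒢ne : 𝒢.Nonempty := ⟨∅, by
    rw [h𝒢def, Finset.mem_filter]
    exact ⟨Finset.empty_mem_powerset I, by intro A h; exact absurd h (Finset.notMem_empty A)⟩⟩
  obtain ⟨M, hM𝒢, hMmax⟩ := Finset.exists_max_image 𝒢 Finset.card h𝒢ne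
  rw [h𝒢def, Finset.mem_filter, Finset.mem_powerset] at hM𝒢
  obtain ⟨hMI, hMdisj⟩ := hM𝒢
  have hMF : ∀ A ∈ M, A ∈ F := fun A hA => (hIirr A (hMI hA)).1
  have hMmeet : ∀ A ∈ I, ∃ B ∈ M, (A ∩ B).Nonempty := by
    intro A hAI
    by_contra hcon
    push_neg at hcon
    have hcon' : ∀ B ∈ M, A ∩ B = ∅ := fun B hB =>
      hcon B hB
    have hANe : A.Nonempty := hknz A (hIirr A hAI).1
    have hAM : A ∉ M := by
      intro h
      have := hcon' A h
      rw [Finset.inter_self] at this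
      rw [this] at hANe
      exact Finset.not_nonempty_empty hANe
    have hgood : insert A M ∈ 𝒢 := by
      rw [h𝒢def, Finset.mem_filter, Finset.mem_powerset]
      refine ⟨Finset.insert_subset hAI hMI, ?_⟩
      intro X h₁ Y h₂ hne
      rcases Finset.mem_insert.mp h₁ with he₁ | h₁
      · rcases Finset.mem_insert.mp h₂ with he₂ | h₂
        · exact absurd (he₁.trans he₂.symm) hne
        · rw [he₁]
          exact hcon' Y h₂
      · rcases Finset.mem_insert.mp h₂ with he₂ | h₂
        · rw [he₂, Finset.inter_comm]
          exact hcon' X h₁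
        · exact hMdisj X h₁ Y h₂ hne
    have := hMmax _ hgood
    rw [Finset.card_insert_of_notMem hAM] at this
    omega
  -- blocks
  have hblock : ∀ A : Finset (Fin n), ∃ P : Finset (Fin n), A ∈ M →
      ((∀ y ∈ P, y ∉ A ∧ ∃ x ∈ A, insert y (A.erase x) ∈ F) ∧
       (A ∪ P).card ≤ 2 * k ∧
       ∀ S ∈ F, S ∩ (A ∪ P) = ∅ ∨ d ≤ (S ∩ (A ∪ P)).card) := by
    intro A
    by_cases hAM : A ∈ M
    · obtain ⟨P, h⟩ := Stmt0Aux.blockA hd hdk hunif hci (hIirr A (hMI hAM)).1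
        (hIirr A (hMI hAM)).2
      exact ⟨P, fun _ => h⟩
    · exact ⟨∅, fun h => absurd h hAM⟩
  choose Pf hPf using hblock
  set Vf : Finset (Fin n) → Finset (Fin n) := fun A => A ∪ Pf A with hVfdef
  have hVfsub : ∀ A ∈ M, A ⊆ Vf A := fun A _ => Finset.subset_union_left
  -- disjointness of blocks
  have hblockdisj : ∀ A ∈ M, ∀ B ∈ M, A ≠ B → Vf A ∩ Vf B = ∅ := by
    intro A hAM B hBM hne
    have hAB : A ∩ B = ∅ := hMdisj A hAM B hBM hne
    have hAF : A ∈ F := hMF A hAM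
    have hBF : B ∈ F := hMF B hBM
    have hirrA := (hIirr A (hMI hAM)).2
    have hirrB := (hIirr B (hMI hBM)).2
    have hAprops := hPf A hAM
    have hBprops := hPf B hBM
    rw [Finset.eq_empty_iff_forall_notMem]
    intro z hz
    obtain ⟨hz1, hz2⟩ := Finset.mem_inter.mp hz
    rw [hVfdef] at hz1 hz2
    simp only at hz1 hz2
    rcases Finset.mem_union.mp hz1 with hzA | hzPA <;>
      rcases Finset.mem_union.mp hz2 with hzB | hzPB
    · have : z ∈ A ∩ B := Finset.mem_inter.mpr ⟨hzA, hzB⟩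
      rw [hAB] at this
      exact Finset.notMem_empty _ this
    · obtain ⟨hzBnot, x, hxB, hxF⟩ := hBprops.1 z hzPB
      exact Stmt0Aux.lem3 hd hdk hunif hci hBF hirrB hxB hzBnot hxF hAF hzA hAB
    · obtain ⟨hzAnot, x, hxA, hxF⟩ := hAprops.1 z hzPA
      exact Stmt0Aux.lem3 hd hdk hunif hci hAF hirrA hxA hzAnot hxF hBF hzB
        (by rw [Finset.inter_comm]; exact hAB)
    · obtain ⟨hzAnot, x, hxA, hxFA⟩ := hAprops.1 z hzPA
      obtain ⟨hzBnot, x', hx'B, hxFB⟩ := hBprops.1 z hzPB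
      have hCB : (insert z (A.erase x)) ∩ B = ∅ := by
        rw [Finset.eq_empty_iff_forall_notMem]
        intro w hw
        obtain ⟨hw1, hw2⟩ := Finset.mem_inter.mp hw
        rcases Finset.mem_insert.mp hw1 with he | hw1
        · exact hzBnot (he ▸ hw2)
        · have : w ∈ A ∩ B := Finset.mem_inter.mpr ⟨Finset.mem_of_mem_erase hw1, hw2⟩
          rw [hAB] at this
          exact Finset.notMem_empty _ this
      exact Stmt0Aux.lem3 hd hdk hunif hci hBF hirrB hx'B hzBnot hxFB hxFA
        (Finset.mem_insert_self z _) hCB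
  -- enumerate M
  set t : ℕ := M.card with htdef
  let σ : Fin t ≃ {x // x ∈ M} := M.equivFin.symm
  set V : Fin t → Finset (Fin n) := fun i => Vf ((σ i : {x // x ∈ M}) : Finset (Fin n)) with hVdef
  have hVM : ∀ i : Fin t, ((σ i : {x // x ∈ M}) : Finset (Fin n)) ∈ M := fun i => (σ i).2
  have hVmem : ∀ B ∈ M, ∃ i : Fin t, V i = Vf B := by
    intro B hB
    refine ⟨σ.symm ⟨B, hB⟩, ?_⟩
    rw [hVdef]
    simp only [Equiv.apply_symm_apply]
  set Z : Finset (Fin n) := Finset.univ.sup V with hZdef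
  set Y : Finset (Fin n) := Zᶜ with hYdef
  have hZmem : ∀ z : Fin n, z ∈ Z ↔ ∃ i : Fin t, z ∈ V i := by
    intro z
    rw [hZdef, Finset.mem_sup]
    constructor
    · rintro ⟨i, _, h⟩
      exact ⟨i, h⟩
    · rintro ⟨i, h⟩
      exact ⟨i, Finset.mem_univ i, h⟩
  have hMZ : ∀ B ∈ M, ∀ z ∈ B, z ∈ Z := by
    intro B hB z hz
    obtain ⟨i, hi⟩ := hVmem B hB
    rw [hZmem]
    exact ⟨i, by rw [hi]; exact hVfsub B hB hz⟩
  -- the three families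
  set 𝓑 : Finset (Finset (Fin n)) := F.filter (fun S => ∃ i : Fin t, S ⊆ V i) with h𝓑def
  set 𝓢 : Finset (Finset (Fin n)) :=
    F.filter (fun S => ¬ (∃ i : Fin t, S ⊆ V i) ∧ (S ∩ Z).Nonempty) with h𝓢def
  set 𝓗 : Finset (Finset (Fin n)) :=
    F.filter (fun S => ¬ (∃ i : Fin t, S ⊆ V i) ∧ ¬ (S ∩ Z).Nonempty) with h𝓗def
  refine ⟨𝓗, 𝓑, 𝓢, Y, Z, t, V, ?_, ?_, ?_, ?_, ?_, ?_, ?_, ?_, ?_, ?_, ?_, ?_⟩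
  · -- Disjoint 𝓗 𝓑
    rw [Finset.disjoint_left]
    intro S hS hS'
    rw [h𝓗def, Finset.mem_filter] at hS
    rw [h𝓑def, Finset.mem_filter] at hS'
    exact hS.2.1 hS'.2
  · -- Disjoint 𝓗 𝓢
    rw [Finset.disjoint_left]
    intro S hS hS'
    rw [h𝓗def, Finset.mem_filter] at hS
    rw [h𝓢def, Finset.mem_filter] at hS'
    exact hS.2.2 hS'.2.2
  · -- Disjoint 𝓑 𝓢
    rw [Finset.disjoint_left]
    intro S hS hS'
    rw [h𝓑def, Finset.mem_filter] at hS
    rw [h𝓢def, Finset.mem_filter] at hS'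
    exact hS'.2.1 hS.2
  · -- union
    ext S
    rw [Finset.mem_union, Finset.mem_union, h𝓗def, h𝓑def, h𝓢def,
      Finset.mem_filter, Finset.mem_filter, Finset.mem_filter]
    constructor
    · rintro ((h | h) | h) <;> exact h.1
    · intro hS
      by_cases hb : ∃ i : Fin t, S ⊆ V i
      · exact Or.inl (Or.inr ⟨hS, hb⟩)
      · by_cases hz : (S ∩ Z).Nonempty
        · exact Or.inr ⟨hS, hb, hz⟩
        · exact Or.inl (Or.inl ⟨hS, hb, hz⟩)
  · -- Disjoint Y Z
    rw [hYdef]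
    exact disjoint_compl_left
  · -- Y ∪ Z = univ
    rw [hYdef]
    ext z
    simp only [Finset.mem_union, Finset.mem_compl, Finset.mem_univ, iff_true]
    tauto
  · -- blocks pairwise disjoint
    intro i j hij
    have hne : ((σ i : {x // x ∈ M}) : Finset (Fin n)) ≠ ((σ j : {x // x ∈ M}) : Finset (Fin n)) := by
      intro h
      apply hij
      have : σ i = σ j := Subtype.ext h
      exact σ.injective this
    rw [Finset.disjoint_iff_inter_eq_empty, hVdef]
    exact hblockdisj _ (hVM i) _ (hVM j) hne
  · -- sup V = Z
    rw [hZdef]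
  · -- card bound
    intro i
    rw [hVdef]
    exact (hPf _ (hVM i)).2.1
  · -- 𝓗 properties
    intro H hH
    rw [h𝓗def, Finset.mem_filter] at hH
    obtain ⟨hHF, hHnb, hHnz⟩ := hH
    have hHZ : ∀ z ∈ H, z ∉ Z := by
      intro z hz hzZ
      exact hHnz ⟨z, Finset.mem_inter.mpr ⟨hz, hzZ⟩⟩
    constructor
    · intro z hz
      rw [hYdef, Finset.mem_compl]
      exact hHZ z hz
    · by_contra hcon
      have hHI : H ∈ I := by
        rw [hIdef, Finset.mem_filter]
        exact ⟨hHF, hcon⟩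
      obtain ⟨B, hBM, hne⟩ := hMmeet H hHI
      obtain ⟨z, hz⟩ := hne
      obtain ⟨hz1, hz2⟩ := Finset.mem_inter.mp hz
      exact hHZ z hz1 (hMZ B hBM z hz2)
  · -- 𝓑 properties
    intro E hE
    rw [h𝓑def, Finset.mem_filter] at hE
    exact hE.2
  · -- 𝓢 properties
    intro S hS
    rw [h𝓢def, Finset.mem_filter] at hS
    obtain ⟨hSF, hSnb, hSz⟩ := hS
    constructor
    · intro hSY
      obtain ⟨z, hz⟩ := hSz
      obtain ⟨hz1, hz2⟩ := Finset.mem_inter.mp hz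
      have := hSY hz1
      rw [hYdef, Finset.mem_compl] at this
      exact this hz2
    · intro i
      have := (hPf _ (hVM i)).2.2 S hSF
      rw [hVdef]
      exact this
end

section
/- Let k ≥ 3 be an integer and let F be a (k, 2k)-conditionally intersecting family of k-element subsets of [n]. Then F can be partitioned into two subfamilies H and B, the ground set [n] can be partitioned into two subsets Y and Z, and Z can be partitioned into sets V_1, …, V_t each of size exactly k+1 (so t = |Z|/(k+1)), such that: (a) every member of H is a subset of Y and contains a (k−1)-element subset that is contained in no other member of F; (b) B is exactly the union over i ∈ {1,…,t} of the family of all k-element subsets of V_i, i.e., B is the vertex-disjoint union of t copies of the complete k-graph on k+1 vertices. -/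
/-- `H` has a private `(k-1)`-subset. -/
def Priv {n : ℕ} (k : ℕ) (F : Finset (Finset (Fin n))) (H : Finset (Fin n)) : Prop :=
  ∃ G ⊆ H, G.card = k - 1 ∧ ∀ S ∈ F, G ⊆ S → S = H

open Finset in
lemma lemA {n k : ℕ} (hk : 3 ≤ k) {F : Finset (Finset (Fin n))}
    (hunif : ∀ S ∈ F, S.card = k) (hci : CondIntersecting k (2 * k) F)
    {H : Finset (Fin n)} (hHF : H ∈ F) (hnp : ¬ Priv k F H) :
    ∃ y ∉ H, (∀ a ∈ H, insert y (H.erase a) ∈ F) ∧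
      (∀ S ∈ F, S ≠ H → (S ∩ H).card = k - 1 → S ⊆ insert y H) := by
  classical
  have hkH : H.card = k := hunif H hHF
  have hnp' : ∀ G ⊆ H, G.card = k - 1 → ∃ S ∈ F, G ⊆ S ∧ S ≠ H := by
    intro G hG hGc
    by_contra hcon
    push_neg at hcon
    exact hnp ⟨G, hG, hGc, hcon⟩
  have hS : ∀ a ∈ H, ∃ S ∈ F, H.erase a ⊆ S ∧ S ≠ H := by
    intro a ha
    exact hnp' _ (erase_subset _ _) (by rw [card_erase_of_mem ha, hkH])
  choose! Sa hSaF hSasub hSane using hS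
  have hSacard : ∀ a ∈ H, (Sa a).card = k := fun a ha => hunif _ (hSaF a ha)
  have hnotmem : ∀ a ∈ H, a ∉ Sa a := by
    intro a ha hmem
    apply hSane a ha
    have hsub : H ⊆ Sa a := by
      intro z hz
      by_cases hza : z = a
      · exact hza ▸ hmem
      · exact hSasub a ha (mem_erase.mpr ⟨hza, hz⟩)
    exact (eq_of_subset_of_card_le hsub (by rw [hSacard a ha, hkH])).symm
  have hX : ∀ a ∈ H, ∃ x, x ∉ H ∧ Sa a = insert x (H.erase a) := by
    intro a ha
    have h1 : (Sa a \ H.erase a).card = 1 := by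
      rw [card_sdiff_of_subset (hSasub a ha), hSacard a ha, card_erase_of_mem ha, hkH]
      omega
    obtain ⟨x, hx⟩ := card_eq_one.mp h1
    have hxd : x ∈ Sa a \ H.erase a := hx ▸ mem_singleton_self x
    have hxS : x ∈ Sa a := (mem_sdiff.mp hxd).1
    have hxE : x ∉ H.erase a := (mem_sdiff.mp hxd).2
    refine ⟨x, ?_, ?_⟩
    · intro hxH
      have hxa : x ≠ a := fun h => hnotmem a ha (h ▸ hxS)
      exact hxE (mem_erase.mpr ⟨hxa, hxH⟩)
    · have hsub : insert x (H.erase a) ⊆ Sa a :=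
        insert_subset hxS (hSasub a ha)
      refine (eq_of_subset_of_card_le hsub ?_).symm
      rw [card_insert_of_notMem hxE, card_erase_of_mem ha, hkH, hSacard a ha]
      omega
  choose! X hXH hXeq using hX
  set D : Finset (Finset (Fin n)) := H.image Sa with hD
  have hDsub : D ⊆ F := by
    intro S hS
    obtain ⟨a, ha, rfl⟩ := mem_image.mp hS
    exact hSaF a ha
  have hinj : Set.InjOn Sa H := by
    intro a ha b hb hab
    by_contra hne
    have hbS : b ∈ Sa a := hSasub a ha (mem_erase.mpr ⟨fun h => hne h.symm, hb⟩)
    rw [hab] at hbS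
    exact hnotmem b hb hbS
  have hDcard : D.card = k := by rw [hD, card_image_of_injOn hinj, hkH]
  have hDsup : (D.sup id).card ≤ 2 * k := by
    have hsub : D.sup id ≤ H ∪ H.image X := by
      refine Finset.sup_le ?_
      intro S hS
      show S ⊆ H ∪ H.image X
      obtain ⟨a, ha, rfl⟩ := mem_image.mp hS
      rw [hXeq a ha]
      intro z hz
      rcases mem_insert.mp hz with h | h
      · exact mem_union_right _ (h ▸ mem_image_of_mem X ha)
      · exact mem_union_left _ (mem_of_mem_erase h)
    calc (D.sup id).card ≤ (H ∪ H.image X).card := card_le_card hsub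
      _ ≤ H.card + (H.image X).card := card_union_le _ _
      _ ≤ k + k := add_le_add hkH.le (le_trans card_image_le hkH.le)
      _ = 2 * k := (two_mul k).symm
  have hDinf : D.inf id ≠ ∅ := fun h => hci ⟨D, hDsub, hDcard, hDsup, h⟩
  obtain ⟨y0, hy0⟩ := nonempty_iff_ne_empty.mpr hDinf
  have hy0mem : ∀ a ∈ H, y0 ∈ Sa a := by
    intro a ha
    have hle : D.inf id ≤ id (Sa a) := Finset.inf_le (mem_image_of_mem Sa ha)
    exact hle hy0
  have hy0H : y0 ∉ H := fun hyH => hnotmem y0 hyH (hy0mem y0 hyH)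
  have hy0X : ∀ a ∈ H, Sa a = insert y0 (H.erase a) := by
    intro a ha
    have h1 : y0 ∈ insert (X a) (H.erase a) := (hXeq a ha) ▸ hy0mem a ha
    rcases mem_insert.mp h1 with h | h
    · rw [hXeq a ha, ← h]
    · exact absurd (mem_of_mem_erase h) hy0H
  refine ⟨y0, hy0H, fun a ha => (hy0X a ha) ▸ hSaF a ha, ?_⟩
  intro S hSF hSne hScard
  have hkS : S.card = k := hunif S hSF
  have hHdiff : (H \ S).card = 1 := by
    have := card_inter_add_card_sdiff H S
    rw [inter_comm] at this
    omega
  obtain ⟨a0, ha0⟩ := card_eq_one.mp hHdiff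
  have ha0m : a0 ∈ H \ S := ha0 ▸ mem_singleton_self a0
  have ha0H : a0 ∈ H := (mem_sdiff.mp ha0m).1
  have ha0S : a0 ∉ S := (mem_sdiff.mp ha0m).2
  have hHes : H.erase a0 ⊆ S := by
    intro z hz
    obtain ⟨hza0, hzH⟩ := mem_erase.mp hz
    by_contra hzS
    have : z ∈ H \ S := mem_sdiff.mpr ⟨hzH, hzS⟩
    rw [ha0] at this
    exact hza0 (mem_singleton.mp this)
  have hSdiff : (S \ H).card = 1 := by
    have := card_inter_add_card_sdiff S H
    omega
  obtain ⟨x', hx'⟩ := card_eq_one.mp hSdiff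
  have hx'm : x' ∈ S \ H := hx' ▸ mem_singleton_self x'
  have hx'S : x' ∈ S := (mem_sdiff.mp hx'm).1
  have hx'H : x' ∉ H := (mem_sdiff.mp hx'm).2
  have hSeq : S = insert x' (H.erase a0) := by
    have hsub : insert x' (H.erase a0) ⊆ S := insert_subset hx'S hHes
    refine (eq_of_subset_of_card_le hsub ?_).symm
    rw [card_insert_of_notMem (fun h => hx'H (mem_of_mem_erase h)),
      card_erase_of_mem ha0H, hkH, hkS]
    omega
  by_cases hxy : x' = y0
  · rw [hSeq, hxy]
    exact insert_subset_insert _ (erase_subset _ _)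
  · exfalso
    set D' : Finset (Finset (Fin n)) :=
      insert S ((H.erase a0).image (fun a => insert y0 (H.erase a))) with hD'
    have hSnot : S ∉ (H.erase a0).image (fun a => insert y0 (H.erase a)) := by
      intro h
      obtain ⟨a, ha, heq⟩ := mem_image.mp h
      have : x' ∈ insert y0 (H.erase a) := heq ▸ hx'S
      rcases mem_insert.mp this with h' | h'
      · exact hxy h'
      · exact hx'H (mem_of_mem_erase h')
    have hinj' : Set.InjOn (fun a => insert y0 (H.erase a)) (H.erase a0) := by
      intro a ha b hb hab
      by_contra hne
      have hbH : b ∈ H := mem_of_mem_erase hb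
      have hb1 : b ∈ insert y0 (H.erase a) :=
        mem_insert_of_mem (mem_erase.mpr ⟨fun h => hne h.symm, hbH⟩)
      dsimp only at hab
      rw [hab] at hb1
      rcases mem_insert.mp hb1 with h' | h'
      · exact hy0H (h' ▸ hbH)
      · exact (mem_erase.mp h').1 rfl
    have hD'card : D'.card = k := by
      rw [hD', card_insert_of_notMem hSnot, card_image_of_injOn hinj',
        card_erase_of_mem ha0H, hkH]
      omega
    have hD'F : D' ⊆ F := by
      intro T hT
      rcases mem_insert.mp hT with h | h
      · exact h ▸ hSF
      · obtain ⟨a, ha, rfl⟩ := mem_image.mp h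
        exact (hy0X a (mem_of_mem_erase ha)) ▸ hSaF a (mem_of_mem_erase ha)
    have hD'sup : (D'.sup id).card ≤ 2 * k := by
      have hsub : D'.sup id ≤ insert x' (insert y0 H) := by
        refine Finset.sup_le ?_
        intro T hT
        show T ⊆ insert x' (insert y0 H)
        rcases mem_insert.mp hT with h | h
        · subst h
          rw [hSeq]
          exact insert_subset_insert _
            ((erase_subset _ _).trans (subset_insert _ _))
        · obtain ⟨a, ha, rfl⟩ := mem_image.mp h
          exact (insert_subset_insert _ (erase_subset _ _)).trans (subset_insert _ _)
      have h1 : (insert x' (insert y0 H)).card ≤ k + 2 := by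
        refine le_trans (card_insert_le _ _) ?_
        have := card_insert_le y0 H
        omega
      have := card_le_card hsub
      omega
    have hD'inf : D'.inf id = ∅ := by
      rw [eq_empty_iff_forall_notMem]
      intro z hz
      have hzS : z ∈ S := (Finset.inf_le (mem_insert_self _ _) : D'.inf id ≤ id S) hz
      have hzall : ∀ a ∈ H.erase a0, z ∈ insert y0 (H.erase a) := by
        intro a ha
        exact (Finset.inf_le (mem_insert_of_mem (mem_image_of_mem _ ha)) :
          D'.inf id ≤ id (insert y0 (H.erase a))) hz
      have hne : (H.erase a0).Nonempty := by
        rw [← card_pos, card_erase_of_mem ha0H, hkH]; omega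
      obtain ⟨a1, ha1⟩ := hne
      rcases mem_insert.mp (hSeq ▸ hzS) with h | h
      · rcases mem_insert.mp (hzall a1 ha1) with h' | h'
        · exact hxy (h ▸ h')
        · exact hx'H (h ▸ mem_of_mem_erase h')
      · rcases mem_insert.mp (hzall z h) with h' | h'
        · exact hy0H (h' ▸ mem_of_mem_erase h)
        · exact (mem_erase.mp h').1 rfl
    exact hci ⟨D', hD'F, hD'card, hD'sup, hD'inf⟩

open Finset

theorem stmt1 (n k : ℕ) (hk : 3 ≤ k)
    (F : Finset (Finset (Fin n))) (hunif : ∀ S ∈ F, S.card = k)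
    (hci : CondIntersecting k (2 * k) F) :
    ∃ (𝓗 𝓑 : Finset (Finset (Fin n))) (Y Z : Finset (Fin n))
      (t : ℕ) (V : Fin t → Finset (Fin n)),
      Disjoint 𝓗 𝓑 ∧ 𝓗 ∪ 𝓑 = F ∧
      Disjoint Y Z ∧ Y ∪ Z = Finset.univ ∧
      (∀ i j : Fin t, i ≠ j → Disjoint (V i) (V j)) ∧
      Finset.univ.sup V = Z ∧
      (∀ i : Fin t, (V i).card = k + 1) ∧
      (∀ H ∈ 𝓗, H ⊆ Y ∧ ∃ G ⊆ H, G.card = k - 1 ∧ ∀ S ∈ F, G ⊆ S → S = H) ∧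
      𝓑 = Finset.univ.biUnion (fun i : Fin t => (V i).powersetCard k) := by
  classical
  rcases Nat.eq_zero_or_pos n with hn | hn
  · subst hn
    have hF : F = ∅ := by
      rw [Finset.eq_empty_iff_forall_notMem]
      intro S hS
      have h1 := hunif S hS
      have h2 : S = ∅ := Finset.eq_empty_of_forall_notMem fun x _ => x.elim0
      rw [h2, card_empty] at h1
      omega
    refine ⟨∅, ∅, Finset.univ, ∅, 0, Fin.elim0, by simp, by simp [hF], by simp,
      by simp, fun i => i.elim0, by simp, fun i => i.elim0, by simp, by simp⟩
  have hNE : Nonempty (Fin n) := ⟨⟨0, hn⟩⟩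
  set 𝓑 : Finset (Finset (Fin n)) := F.filter (fun H => ¬ Priv k F H) with hB
  set 𝓗 : Finset (Finset (Fin n)) := F.filter (fun H => Priv k F H) with hH
  have hBF : ∀ H ∈ 𝓑, H ∈ F := fun H hHm => (mem_filter.mp hHm).1
  have hBnp : ∀ H ∈ 𝓑, ¬ Priv k F H := fun H hHm => (mem_filter.mp hHm).2
  have hA : ∀ H, H ∈ 𝓑 → ∃ y, y ∉ H ∧ (∀ a ∈ H, insert y (H.erase a) ∈ F) ∧
      (∀ S ∈ F, S ≠ H → (S ∩ H).card = k - 1 → S ⊆ insert y H) := by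
    intro H hHm
    exact lemA hk hunif hci (hBF H hHm) (hBnp H hHm)
  choose! y hy1 hy2 hy3 using hA
  set V' : Finset (Fin n) → Finset (Fin n) := fun H => insert (y H) H with hV'
  have hVcard : ∀ H ∈ 𝓑, (V' H).card = k + 1 := by
    intro H hHm
    rw [hV']
    rw [card_insert_of_notMem (hy1 H hHm), hunif H (hBF H hHm)]
  have hsubV : ∀ H ∈ 𝓑, H ⊆ V' H := fun H _ => subset_insert _ _
  -- every k-subset of V' H is in F
  have hallF : ∀ H ∈ 𝓑, ∀ T ⊆ V' H, T.card = k → T ∈ F := by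
    intro H hHm T hTsub hTcard
    have hd : (V' H \ T).card = 1 := by
      rw [card_sdiff_of_subset hTsub, hVcard H hHm, hTcard]; omega
    obtain ⟨w, hw⟩ := card_eq_one.mp hd
    have hwm : w ∈ V' H \ T := hw ▸ mem_singleton_self w
    have hwV : w ∈ V' H := (mem_sdiff.mp hwm).1
    have hwT : w ∉ T := (mem_sdiff.mp hwm).2
    have hTeq : T = (V' H).erase w := by
      refine eq_of_subset_of_card_le (fun z hz =>
        mem_erase.mpr ⟨fun h => hwT (h ▸ hz), hTsub hz⟩) ?_
      rw [card_erase_of_mem hwV, hVcard H hHm, hTcard]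
      omega
    rcases mem_insert.mp hwV with h | h
    · have : T = H := by
        rw [hTeq, h]
        show (insert (y H) H).erase (y H) = H
        exact erase_insert (hy1 H hHm)
      exact this ▸ hBF H hHm
    · have : T = insert (y H) (H.erase w) := by
        rw [hTeq]
        show (insert (y H) H).erase w = _
        exact erase_insert_of_ne (fun hc => hy1 H hHm (hc.symm ▸ h))
      exact this ▸ hy2 H hHm w h
  -- every k-subset of V' H is in 𝓑
  have hallB : ∀ H ∈ 𝓑, ∀ T ⊆ V' H, T.card = k → T ∈ 𝓑 := by
    intro H hHm T hTsub hTcard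
    refine mem_filter.mpr ⟨hallF H hHm T hTsub hTcard, ?_⟩
    rintro ⟨G, hGT, hGc, hGuniq⟩
    have hd : (V' H \ T).card = 1 := by
      rw [card_sdiff_of_subset hTsub, hVcard H hHm, hTcard]; omega
    obtain ⟨w, hw⟩ := card_eq_one.mp hd
    have hwm : w ∈ V' H \ T := hw ▸ mem_singleton_self w
    have hwV : w ∈ V' H := (mem_sdiff.mp hwm).1
    have hwT : w ∉ T := (mem_sdiff.mp hwm).2
    have hwG : w ∉ G := fun h => hwT (hGT h)
    have hT' : insert w G ∈ F := by
      refine hallF H hHm _ (insert_subset hwV ((hGT.trans hTsub))) ?_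
      rw [card_insert_of_notMem hwG, hGc]; omega
    have := hGuniq _ hT' (subset_insert _ _)
    exact hwT (this ▸ mem_insert_self w G)
  -- V' is constant on k-subsets of V' H
  have hVeq : ∀ H ∈ 𝓑, ∀ T ⊆ V' H, T.card = k → V' T = V' H := by
    intro H hHm T hTsub hTcard
    by_cases hTH : T = H
    · rw [hTH]
    · have hTm : T ∈ 𝓑 := hallB H hHm T hTsub hTcard
      have hHcard : H.card = k := hunif H (hBF H hHm)
      have hUnion : H ∪ T = V' H := by
        refine eq_of_subset_of_card_le (union_subset (hsubV H hHm) hTsub) ?_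
        rw [hVcard H hHm]
        have hne : H ∪ T ≠ H := by
          intro hc
          have hTsubH : T ⊆ H := hc ▸ (subset_union_right : T ⊆ H ∪ T)
          exact hTH (eq_of_subset_of_card_le hTsubH (by rw [hHcard, hTcard]))
        have hlt : H.card < (H ∪ T).card :=
          card_lt_card (Finset.ssubset_iff_subset_ne.mpr
            ⟨subset_union_left, fun h => hne h.symm⟩)
        omega
      have hInter : (H ∩ T).card = k - 1 := by
        have h1 := card_union_add_card_inter H T
        rw [hUnion, hVcard H hHm, hHcard, hTcard] at h1
        omega
      have hHsub : H ⊆ V' T :=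
        hy3 T hTm H (hBF H hHm) (fun h => hTH h.symm) hInter
      have hsub2 : V' H ⊆ V' T := by
        rw [← hUnion]
        exact union_subset hHsub (hsubV T hTm)
      exact (eq_of_subset_of_card_le hsub2
        (by rw [hVcard H hHm, hVcard T hTm])).symm
  -- no member of F crosses V' H partially
  have hnoCross : ∀ H ∈ 𝓑, ∀ S ∈ F, 1 ≤ (S ∩ V' H).card →
      (S ∩ V' H).card ≤ k - 1 → False := by
    intro H hHm S hSF h1 h2
    have hkS : S.card = k := hunif S hSF
    have hVc : (V' H).card = k + 1 := hVcard H hHm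
    have hSnsub : ¬ S ⊆ V' H := by
      intro hc
      have : S ∩ V' H = S := inter_eq_left.mpr hc
      rw [this, hkS] at h2
      omega
    have hVSd : 2 ≤ (V' H \ S).card := by
      have h3 : (V' H ∩ S).card ≤ k - 1 := by rwa [inter_comm]
      have := card_inter_add_card_sdiff (V' H) S
      omega
    obtain ⟨p, hp, q, hq, hpq⟩ := one_lt_card.mp hVSd
    have hpV : p ∈ V' H := (mem_sdiff.mp hp).1
    have hpS : p ∉ S := (mem_sdiff.mp hp).2
    have hqV : q ∈ V' H := (mem_sdiff.mp hq).1
    have hqS : q ∉ S := (mem_sdiff.mp hq).2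
    set W : Finset (Fin n) := ((V' H).erase p).erase q with hW
    have hWcard : W.card = k - 1 := by
      rw [hW, card_erase_of_mem (mem_erase.mpr ⟨hpq.symm, hqV⟩),
        card_erase_of_mem hpV, hVc]
      omega
    have hWV : W ⊆ V' H := (erase_subset _ _).trans (erase_subset _ _)
    set D : Finset (Finset (Fin n)) :=
      insert S (W.image (fun w => (V' H).erase w)) with hD
    have hSnot : S ∉ W.image (fun w => (V' H).erase w) := by
      intro h
      obtain ⟨w, hwm, heq⟩ := mem_image.mp h
      exact hSnsub (heq ▸ erase_subset w (V' H))
    have hinjW : Set.InjOn (fun w => (V' H).erase w) W := by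
      intro a ha b hb hab
      by_contra hne
      have hbW : b ∈ W := hb
      have hb1 : b ∈ (V' H).erase a :=
        mem_erase.mpr ⟨fun h => hne h.symm, hWV hbW⟩
      dsimp only at hab
      rw [hab] at hb1
      exact (mem_erase.mp hb1).1 rfl
    have hDcard : D.card = k := by
      rw [hD, card_insert_of_notMem hSnot, card_image_of_injOn hinjW, hWcard]
      omega
    have hDF : D ⊆ F := by
      intro T hT
      rcases mem_insert.mp hT with h | h
      · exact h ▸ hSF
      · obtain ⟨w, hwm, rfl⟩ := mem_image.mp h
        refine hallF H hHm _ (erase_subset _ _) ?_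
        rw [card_erase_of_mem (hWV hwm), hVc]
        omega
    have hDsup : (D.sup id).card ≤ 2 * k := by
      have hsub : D.sup id ≤ V' H ∪ S := by
        refine Finset.sup_le ?_
        intro T hT
        rcases mem_insert.mp hT with h | h
        · exact h ▸ (subset_union_right : S ⊆ V' H ∪ S)
        · obtain ⟨w, hwm, rfl⟩ := mem_image.mp h
          exact ((erase_subset _ _).trans subset_union_left :
            (V' H).erase w ⊆ V' H ∪ S)
      have hle := card_le_card hsub
      have h4 := card_union_add_card_inter (V' H) S
      rw [inter_comm] at h1
      omega
    have hDinf : D.inf id = ∅ := by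
      rw [eq_empty_iff_forall_notMem]
      intro z hz
      have hzS : z ∈ S := (Finset.inf_le (mem_insert_self _ _) : D.inf id ≤ id S) hz
      have hzall : ∀ w ∈ W, z ∈ (V' H).erase w := by
        intro w hwm
        exact (Finset.inf_le (mem_insert_of_mem (mem_image_of_mem _ hwm)) :
          D.inf id ≤ id ((V' H).erase w)) hz
      have hWne : W.Nonempty := by
        rw [← card_pos, hWcard]; omega
      obtain ⟨w0, hw0⟩ := hWne
      have hzV : z ∈ V' H := mem_of_mem_erase (hzall w0 hw0)
      have hzp : z ≠ p := fun h => hpS (h ▸ hzS)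
      have hzq : z ≠ q := fun h => hqS (h ▸ hzS)
      have hzW : z ∈ W := mem_erase.mpr ⟨hzq, mem_erase.mpr ⟨hzp, hzV⟩⟩
      exact (mem_erase.mp (hzall z hzW)).1 rfl
    exact hci ⟨D, hDF, hDcard, hDsup, hDinf⟩
  -- distinct V's are disjoint
  have hVdisj : ∀ H1 ∈ 𝓑, ∀ H2 ∈ 𝓑, V' H1 ≠ V' H2 →
      Disjoint (V' H1) (V' H2) := by
    intro H1 h1m H2 h2m hne
    rw [disjoint_left]
    intro v hv1 hv2
    by_contra _
    have hVne : ¬ V' H2 ⊆ V' H1 := by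
      intro hc
      exact hne (eq_of_subset_of_card_le hc
        (by rw [hVcard H1 h1m, hVcard H2 h2m])).symm
    have hm1 : 1 ≤ (V' H2 ∩ V' H1).card :=
      card_pos.mpr ⟨v, mem_inter.mpr ⟨hv2, hv1⟩⟩
    have hmk : (V' H2 ∩ V' H1).card ≤ k := by
      by_contra hc
      push_neg at hc
      have hsub : V' H2 ⊆ V' H1 := by
        have : V' H2 ∩ V' H1 = V' H2 :=
          eq_of_subset_of_card_le inter_subset_left
            (by rw [hVcard H2 h2m]; omega)
        exact this ▸ inter_subset_right
      exact hVne hsub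
    by_cases hm2 : 2 ≤ (V' H2 ∩ V' H1).card
    · -- erase a common point
      set S : Finset (Fin n) := (V' H2).erase v with hS
      have hSF : S ∈ F := by
        refine hallF H2 h2m _ (erase_subset _ _) ?_
        rw [card_erase_of_mem hv2, hVcard H2 h2m]
        omega
      have hScap : (S ∩ V' H1).card = (V' H2 ∩ V' H1).card - 1 := by
        rw [hS, erase_inter, card_erase_of_mem (mem_inter.mpr ⟨hv2, hv1⟩)]
      exact hnoCross H1 h1m S hSF (by omega) (by omega)
    · -- intersection is a single point; erase a point outside V' H1
      have hex : ∃ u, u ∈ V' H2 \ V' H1 := by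
        by_contra hc
        push_neg at hc
        refine hVne (fun z hz => ?_)
        by_contra hz1
        exact hc z (mem_sdiff.mpr ⟨hz, hz1⟩)
      obtain ⟨u, hu⟩ := hex
      have huV2 : u ∈ V' H2 := (mem_sdiff.mp hu).1
      have huV1 : u ∉ V' H1 := (mem_sdiff.mp hu).2
      set S : Finset (Fin n) := (V' H2).erase u with hS
      have hSF : S ∈ F := by
        refine hallF H2 h2m _ (erase_subset _ _) ?_
        rw [card_erase_of_mem huV2, hVcard H2 h2m]
        omega
      have hScap : S ∩ V' H1 = V' H2 ∩ V' H1 := by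
        rw [hS, erase_inter, erase_eq_of_notMem
          (fun h => huV1 (mem_inter.mp h).2)]
      exact hnoCross H1 h1m S hSF (by rw [hScap]; omega) (by rw [hScap]; omega)
  -- members of 𝓗 are disjoint from every V'
  have hHdisj : ∀ H ∈ 𝓗, ∀ B ∈ 𝓑, Disjoint H (V' B) := by
    intro H hHm B hBm
    rw [disjoint_left]
    intro z hzH hzV
    have hHF' : H ∈ F := (mem_filter.mp hHm).1
    have hHp : Priv k F H := (mem_filter.mp hHm).2
    have hkH : H.card = k := hunif H hHF'
    have h1 : 1 ≤ (H ∩ V' B).card := card_pos.mpr ⟨z, mem_inter.mpr ⟨hzH, hzV⟩⟩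
    have h2 : (H ∩ V' B).card ≤ k - 1 := by
      by_contra hc
      push_neg at hc
      have hle : (H ∩ V' B).card ≤ k := by
        have := card_le_card (inter_subset_left : H ∩ V' B ⊆ H)
        omega
      have heq : H ∩ V' B = H := eq_of_subset_of_card_le inter_subset_left
        (by omega)
      have hsub : H ⊆ V' B := heq ▸ inter_subset_right
      have : H ∈ 𝓑 := hallB B hBm H hsub hkH
      exact (mem_filter.mp this).2 hHp
    exact hnoCross B hBm H hHF' h1 h2
  -- assemble
  set 𝒱 : Finset (Finset (Fin n)) := 𝓑.image V' with h𝒱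
  set Z : Finset (Fin n) := 𝒱.sup id with hZ
  set e := 𝒱.equivFin with he
  refine ⟨𝓗, 𝓑, Zᶜ, Z, 𝒱.card, fun i => (e.symm i : Finset (Fin n)),
    ?_, ?_, ?_, ?_, ?_, ?_, ?_, ?_, ?_⟩
  · rw [disjoint_left]
    intro A hA1 hA2
    exact (mem_filter.mp hA2).2 (mem_filter.mp hA1).2
  · rw [hH, hB, filter_union_filter_not_eq]
  · exact disjoint_compl_left
  · exact compl_sup_eq_top
  · intro i j hij
    dsimp only
    have hne : (e.symm i : Finset (Fin n)) ≠ (e.symm j : Finset (Fin n)) := by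
      intro hc
      exact hij (e.symm.injective (Subtype.ext hc))
    obtain ⟨H1, h1m, h1e⟩ := mem_image.mp (e.symm i).2
    obtain ⟨H2, h2m, h2e⟩ := mem_image.mp (e.symm j).2
    rw [← h1e, ← h2e]
    exact hVdisj H1 h1m H2 h2m (by rw [h1e, h2e]; exact hne)
  · refine le_antisymm ?_ ?_
    · refine Finset.sup_le ?_
      intro i _
      exact Finset.le_sup (f := id) (e.symm i).2
    · refine Finset.sup_le ?_
      intro W hW
      have h := Finset.le_sup
        (f := fun i : Fin 𝒱.card => ((e.symm i : Finset (Fin n))))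
        (mem_univ (e ⟨W, hW⟩))
      simpa using h
  · intro i
    dsimp only
    obtain ⟨H1, h1m, h1e⟩ := mem_image.mp (e.symm i).2
    rw [← h1e]
    exact hVcard H1 h1m
  · intro H hHm
    refine ⟨?_, (mem_filter.mp hHm).2⟩
    intro z hzH
    rw [mem_compl]
    intro hzZ
    obtain ⟨W, hWm, hzW⟩ := mem_sup.mp hzZ
    obtain ⟨B, hBm, hBe⟩ := mem_image.mp hWm
    exact (disjoint_left.mp (hHdisj H hHm B hBm)) hzH (hBe ▸ hzW)
  · ext T
    simp only [mem_biUnion, mem_univ, true_and, mem_powersetCard]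
    constructor
    · intro hTm
      refine ⟨e ⟨V' T, mem_image_of_mem V' hTm⟩, ?_⟩
      rw [Equiv.symm_apply_apply]
      exact ⟨hsubV T hTm, hunif T (hBF T hTm)⟩
    · rintro ⟨i, hTsub, hTcard⟩
      obtain ⟨B, hBm, hBe⟩ := mem_image.mp (e.symm i).2
      exact hallB B hBm T (hBe ▸ hTsub) hTcard
end

section
/- Let k ≥ d ≥ 3 be integers and let F be a (d, 2k+d−3)-conditionally intersecting family of k-element subsets of [n]. Suppose B = {b_1, …, b_k} ∈ F and C_1, …, C_k are k distinct members of F, each different from B, such that B ∩ C_i = B − {b_i} for every i ∈ {1,…,k}. Let V = B ∪ C_1 ∪ ⋯ ∪ C_k. Then every member F of F satisfies: F ∩ V is either empty or has size at least d. -/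
lemma my_mem_inf {n : ℕ} {ι : Type*} {s : Finset ι} {f : ι → Finset (Fin n)} {x : Fin n} :
    x ∈ s.inf f ↔ ∀ i ∈ s, x ∈ f i := by
  induction s using Finset.cons_induction <;> simp [*]

theorem stmt5 (n k d : ℕ) (hd : 3 ≤ d) (hdk : d ≤ k)
    (F : Finset (Finset (Fin n))) (hunif : ∀ S ∈ F, S.card = k)
    (hci : CondIntersecting d (2 * k + d - 3) F)
    (B : Finset (Fin n)) (hB : B ∈ F)
    (b : Fin k → Fin n) (hbinj : Function.Injective b)
    (hBb : B = Finset.image b Finset.univ)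
    (C : Fin k → Finset (Fin n)) (hCinj : Function.Injective C)
    (hCF : ∀ i, C i ∈ F) (hCB : ∀ i, C i ≠ B)
    (hBC : ∀ i, B ∩ C i = B.erase (b i)) :
    ∀ S ∈ F, S ∩ (B ∪ Finset.univ.sup C) = ∅ ∨ d ≤ (S ∩ (B ∪ Finset.univ.sup C)).card := by
  classical
  have hBcard : B.card = k := hunif B hB
  have hbmem : ∀ i, b i ∈ B := by
    intro i; rw [hBb]; exact Finset.mem_image_of_mem b (Finset.mem_univ i)
  have hc : ∀ i, ∃ x, x ∉ B ∧ C i = insert x (B.erase (b i)) := by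
    intro i
    have hCcard : (C i).card = k := hunif _ (hCF i)
    have hint : C i ∩ B = B.erase (b i) := by rw [Finset.inter_comm]; exact hBC i
    have he : (B.erase (b i)).card = k - 1 := by
      rw [Finset.card_erase_of_mem (hbmem i), hBcard]
    have hk1 : 1 ≤ k := by omega
    have h1 : (C i \ B).card = 1 := by
      have := Finset.card_sdiff_add_card_inter (C i) B
      rw [hint, he, hCcard] at this
      omega
    obtain ⟨x, hx⟩ := Finset.card_eq_one.mp h1
    refine ⟨x, ?_, ?_⟩
    · have hxm : x ∈ C i \ B := hx ▸ Finset.mem_singleton_self x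
      exact (Finset.mem_sdiff.mp hxm).2
    · have h2 := Finset.sdiff_union_inter (C i) B
      rw [hx, hint] at h2
      rw [← h2]; exact (Finset.insert_eq x _).symm
  choose c hcB hCc using hc
  set V := B ∪ Finset.univ.sup C with hVdef
  have hBV : B ⊆ V := Finset.subset_union_left
  have hCV : ∀ i, C i ⊆ V := fun i x hx =>
    Finset.mem_union_right _ (Finset.mem_sup.mpr ⟨i, Finset.mem_univ i, hx⟩)
  intro S hS
  by_contra hcon
  push_neg at hcon
  obtain ⟨hne, hlt⟩ := hcon
  have hScard : S.card = k := hunif S hS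
  have hSVcard : ¬ (S ⊆ V) := by
    intro h
    rw [Finset.inter_eq_left.mpr h] at hlt
    omega
  have hSneB : S ≠ B := fun h => hSVcard (by rw [h]; exact hBV)
  have hSneC : ∀ i, S ≠ C i := fun i h => hSVcard (by rw [h]; exact hCV i)
  set Jb := Finset.univ.filter (fun i => b i ∈ S) with hJbdef
  have hJbimg : Jb.image b = S ∩ B := by
    ext x
    simp only [Finset.mem_image, Finset.mem_inter, hJbdef, Finset.mem_filter,
      Finset.mem_univ, true_and]
    constructor
    · rintro ⟨i, hi, rfl⟩; exact ⟨hi, hbmem i⟩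
    · rintro ⟨hxS, hxB⟩
      rw [hBb] at hxB
      obtain ⟨i, -, rfl⟩ := Finset.mem_image.mp hxB
      exact ⟨i, hxS, rfl⟩
  have hJbcard : Jb.card = (S ∩ B).card := by
    rw [← hJbimg, Finset.card_image_of_injective _ hbinj]
  have hSBV : (S ∩ B).card ≤ (S ∩ V).card :=
    Finset.card_le_card (Finset.inter_subset_inter (Finset.Subset.refl S) hBV)
  have key : ∀ (J : Finset (Fin k)), Jb ⊆ J → ∀ x, x ∈ S → x ∈ B →
      (∀ j ∈ J, x ∈ C j) → False := by
    intro J hJ x hxS hxB hxC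
    rw [hBb] at hxB
    obtain ⟨m, -, rfl⟩ := Finset.mem_image.mp hxB
    have hm : m ∈ J := hJ (by simp [hJbdef, hxS])
    have hmem := hxC m hm
    rw [hCc m] at hmem
    rcases Finset.mem_insert.mp hmem with h | h
    · exact hcB m (h ▸ hbmem m)
    · exact Finset.notMem_erase _ _ h
  rcases Nat.lt_or_ge ((S ∩ B).card + 1) d with hcase | hcase
  · -- Case B : (S∩B).card ≤ d - 2
    obtain ⟨x0, hx0⟩ := hne
    have hx0S : x0 ∈ S := (Finset.mem_inter.mp hx0).1
    have hx0V : x0 ∈ V := (Finset.mem_inter.mp hx0).2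
    have hJ0 : ∃ J0 : Finset (Fin k), Jb ⊆ J0 ∧ J0.card ≤ d - 2 ∧
        ∃ x, x ∈ S ∧ (x ∈ B ∨ ∃ i ∈ J0, x = c i) := by
      rw [hVdef] at hx0V
      rcases Finset.mem_union.mp hx0V with hxB | hxC
      · exact ⟨Jb, Finset.Subset.refl _, by omega, x0, hx0S, Or.inl hxB⟩
      · obtain ⟨i0, -, hi0⟩ := Finset.mem_sup.mp hxC
        rw [hCc i0] at hi0
        rcases Finset.mem_insert.mp hi0 with h | h
        · by_cases hSB : (S ∩ B).Nonempty
          · obtain ⟨y, hy⟩ := hSB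
            exact ⟨Jb, Finset.Subset.refl _, by omega, y,
              (Finset.mem_inter.mp hy).1, Or.inl (Finset.mem_inter.mp hy).2⟩
          · have hJbe : Jb = ∅ := by
              rw [← Finset.card_eq_zero, hJbcard, Finset.card_eq_zero,
                ← Finset.not_nonempty_iff_eq_empty]
              exact hSB
            refine ⟨{i0}, ?_, ?_, x0, hx0S, Or.inr ⟨i0, Finset.mem_singleton_self i0, h⟩⟩
            · rw [hJbe]; exact Finset.empty_subset _
            · simp only [Finset.card_singleton]; omega
        · exact ⟨Jb, Finset.Subset.refl _, by omega, x0, hx0S,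
            Or.inl (Finset.mem_of_mem_erase h)⟩
    obtain ⟨J0, hJ0b, hJ0card, x, hxS, hxU⟩ := hJ0
    obtain ⟨J, hJ0J, hJcard⟩ := Finset.exists_superset_card_eq hJ0card
      (by rw [Fintype.card_fin]; omega)
    have hJbJ : Jb ⊆ J := hJ0b.trans hJ0J
    have hSnotim : S ∉ J.image C := by
      intro h; obtain ⟨i, -, hi⟩ := Finset.mem_image.mp h; exact hSneC i hi.symm
    have hBnotim : B ∉ J.image C := by
      intro h; obtain ⟨i, -, hi⟩ := Finset.mem_image.mp h; exact hCB i hi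
    refine hci ⟨insert S (insert B (J.image C)), ?_, ?_, ?_, ?_⟩
    · intro t ht
      rcases Finset.mem_insert.mp ht with rfl | ht
      · exact hS
      rcases Finset.mem_insert.mp ht with rfl | ht
      · exact hB
      obtain ⟨i, -, rfl⟩ := Finset.mem_image.mp ht
      exact hCF i
    · rw [Finset.card_insert_of_notMem (by
        simp only [Finset.mem_insert]
        push_neg
        exact ⟨hSneB, hSnotim⟩),
        Finset.card_insert_of_notMem hBnotim,
        Finset.card_image_of_injective _ hCinj, hJcard]
      omega
    · -- sup bound
      have hsub : (insert S (insert B (J.image C))).sup id ⊆ S ∪ (B ∪ J.image c) := by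
        intro y hy
        obtain ⟨t, ht, hyt⟩ := Finset.mem_sup.mp hy
        rcases Finset.mem_insert.mp ht with rfl | ht
        · exact Finset.mem_union_left _ hyt
        rcases Finset.mem_insert.mp ht with rfl | ht
        · exact Finset.mem_union_right _ (Finset.mem_union_left _ hyt)
        obtain ⟨i, hiJ, rfl⟩ := Finset.mem_image.mp ht
        rw [hCc i] at hyt
        rcases Finset.mem_insert.mp hyt with rfl | h
        · exact Finset.mem_union_right _
            (Finset.mem_union_right _ (Finset.mem_image_of_mem c hiJ))
        · exact Finset.mem_union_right _
            (Finset.mem_union_left _ (Finset.mem_of_mem_erase h))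
      have hxU' : x ∈ B ∪ J.image c := by
        rcases hxU with h | ⟨i, hi, rfl⟩
        · exact Finset.mem_union_left _ h
        · exact Finset.mem_union_right _ (Finset.mem_image_of_mem c (hJ0J hi))
      have hint : 1 ≤ (S ∩ (B ∪ J.image c)).card :=
        Finset.card_pos.mpr ⟨x, Finset.mem_inter.mpr ⟨hxS, hxU'⟩⟩
      have hU : (B ∪ J.image c).card ≤ k + (d - 2) := by
        have h1 := Finset.card_union_le B (J.image c)
        have h2 := Finset.card_image_le (s := J) (f := c)
        omega
      have hcui := Finset.card_union_add_card_inter S (B ∪ J.image c)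
      have hle := Finset.card_le_card hsub
      omega
    · -- inf empty
      rw [Finset.eq_empty_iff_forall_notMem]
      intro y hy
      rw [my_mem_inf] at hy
      have hyS : y ∈ S := hy S (Finset.mem_insert_self _ _)
      have hyB : y ∈ B :=
        hy B (Finset.mem_insert_of_mem (Finset.mem_insert_self _ _))
      refine key J hJbJ y hyS hyB ?_
      intro j hj
      exact hy (C j) (Finset.mem_insert_of_mem
        (Finset.mem_insert_of_mem (Finset.mem_image_of_mem C hj)))
  · -- Case A : (S∩B).card = d - 1
    have hsub' : S ∩ B ⊆ S ∩ V :=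
      Finset.inter_subset_inter (Finset.Subset.refl S) hBV
    have hTeq : S ∩ V = S ∩ B :=
      (Finset.eq_of_subset_of_card_le hsub' (by omega)).symm
    have hSnotim : S ∉ Jb.image C := by
      intro h; obtain ⟨i, -, hi⟩ := Finset.mem_image.mp h; exact hSneC i hi.symm
    have hJbne : Jb.Nonempty := Finset.card_pos.mp (by omega)
    refine hci ⟨insert S (Jb.image C), ?_, ?_, ?_, ?_⟩
    · intro t ht
      rcases Finset.mem_insert.mp ht with rfl | ht
      · exact hS
      obtain ⟨i, -, rfl⟩ := Finset.mem_image.mp ht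
      exact hCF i
    · rw [Finset.card_insert_of_notMem hSnotim,
        Finset.card_image_of_injective _ hCinj]
      omega
    · have hsub : (insert S (Jb.image C)).sup id ⊆ (S ∪ B) ∪ Jb.image c := by
        intro y hy
        obtain ⟨t, ht, hyt⟩ := Finset.mem_sup.mp hy
        rcases Finset.mem_insert.mp ht with rfl | ht
        · exact Finset.mem_union_left _ (Finset.mem_union_left _ hyt)
        obtain ⟨i, hiJ, rfl⟩ := Finset.mem_image.mp ht
        rw [hCc i] at hyt
        rcases Finset.mem_insert.mp hyt with rfl | h
        · exact Finset.mem_union_right _ (Finset.mem_image_of_mem c hiJ)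
        · exact Finset.mem_union_left _
            (Finset.mem_union_right _ (Finset.mem_of_mem_erase h))
      have h1 := Finset.card_union_le (S ∪ B) (Jb.image c)
      have h2 := Finset.card_union_add_card_inter S B
      have h3 := Finset.card_image_le (s := Jb) (f := c)
      have h4 := Finset.card_le_card hsub
      omega
    · rw [Finset.eq_empty_iff_forall_notMem]
      intro y hy
      rw [my_mem_inf] at hy
      have hyS : y ∈ S := hy S (Finset.mem_insert_self _ _)
      obtain ⟨j0, hj0⟩ := hJbne
      have hyC : y ∈ C j0 :=
        hy (C j0) (Finset.mem_insert_of_mem (Finset.mem_image_of_mem C hj0))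
      have hyB : y ∈ B := by
        have hmem : y ∈ S ∩ B := hTeq ▸ Finset.mem_inter.mpr ⟨hyS, hCV j0 hyC⟩
        exact (Finset.mem_inter.mp hmem).2
      refine key Jb (Finset.Subset.refl _) y hyS hyB ?_
      intro j hj
      exact hy (C j) (Finset.mem_insert_of_mem (Finset.mem_image_of_mem C hj))
end

section
/- Let H be a family of k-element subsets of [n] such that every member H of H contains a (k−1)-element subset G(H) that is contained in no other member of H. Then n·|H| ≤ (n−k+1)·|∂H|, where ∂H denotes the shadow of H. -/
/-- The shadow of a family `𝓗` of `k`-element subsets of `Fin n`: all `(k-1)`-element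
subsets of `Fin n` that are contained in at least one member of `𝓗`. -/
def shadowFam {n : ℕ} (k : ℕ) (𝓗 : Finset (Finset (Fin n))) : Finset (Finset (Fin n)) :=
  ((Finset.univ : Finset (Fin n)).powersetCard (k - 1)).filter (fun G => ∃ H ∈ 𝓗, G ⊆ H)

theorem stmt6 (n k : ℕ)
    (𝓗 : Finset (Finset (Fin n))) (hunif : ∀ H ∈ 𝓗, H.card = k)
    (huniq : ∀ H ∈ 𝓗, ∃ G ⊆ H, G.card = k - 1 ∧ ∀ T ∈ 𝓗, G ⊆ T → T = H) :
    n * 𝓗.card ≤ (n - k + 1) * (shadowFam k 𝓗).card := by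
  classical
  set S := shadowFam k 𝓗 with hS
  by_cases hHe : 𝓗 = ∅
  · simp [hHe]
  obtain ⟨H0, hH0⟩ := Finset.nonempty_iff_ne_empty.mpr hHe
  by_cases hk0 : k = 0
  · subst hk0
    -- every member is ∅, so 𝓗 = {∅} and S is nonempty
    have h1 : 𝓗 = {∅} := by
      apply Finset.eq_singleton_iff_nonempty_unique_mem.mpr
      refine ⟨⟨H0, hH0⟩, fun H hH => Finset.card_eq_zero.mp (hunif H hH)⟩
    have hSne : (∅ : Finset (Fin n)) ∈ S := by
      simp [hS, shadowFam]
      exact ⟨H0, hH0⟩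
    have : 1 ≤ S.card := Finset.card_pos.mpr ⟨∅, hSne⟩
    have : n * 𝓗.card = n := by simp [h1]
    calc n * 𝓗.card = n := this
      _ ≤ (n + 1) * 1 := by omega
      _ ≤ (n - 0 + 1) * S.card := by
          apply Nat.mul_le_mul <;> omega
  have hk1 : 1 ≤ k := Nat.one_le_iff_ne_zero.mpr hk0
  have hkn : k ≤ n := by
    have h1 := hunif H0 hH0
    have h2 := Finset.card_le_card (Finset.subset_univ H0)
    rw [Finset.card_univ, Fintype.card_fin] at h2
    omega
  -- degree function
  set d : Finset (Fin n) → ℕ := fun G => (𝓗.filter (fun H => G ⊆ H)).card with hd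
  -- each member of 𝓗 contributes exactly k shadow elements
  have key : ∀ H ∈ 𝓗, (S.filter (fun G => G ⊆ H)).card = k := by
    intro H hH
    have hfe : S.filter (fun G => G ⊆ H) = H.powersetCard (k - 1) := by
      ext G
      simp only [hS, shadowFam, Finset.mem_filter, Finset.mem_powersetCard]
      constructor
      · rintro ⟨⟨⟨-, hcard⟩, -⟩, hGH⟩
        exact ⟨hGH, hcard⟩
      · rintro ⟨hGH, hcard⟩
        exact ⟨⟨⟨Finset.subset_univ G, hcard⟩, ⟨H, hH, hGH⟩⟩, hGH⟩
    rw [hfe, Finset.card_powersetCard, hunif H hH]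
    cases k with
    | zero => omega
    | succ m => simp [Nat.succ_sub_one, Nat.choose_succ_self_right]
  -- double counting
  have swap : ∑ G ∈ S, d G = k * 𝓗.card := by
    have : ∑ G ∈ S, d G = ∑ H ∈ 𝓗, (S.filter (fun G => G ⊆ H)).card := by
      simp_rw [hd, Finset.card_filter]
      exact Finset.sum_comm
    rw [this, Finset.sum_congr rfl key, Finset.sum_const, smul_eq_mul, mul_comm]
  -- degree bound on the shadow
  have hdeg : ∀ G ∈ S, d G ≤ n - k + 1 := by
    intro G hG
    have hGcard : G.card = k - 1 := by
      simp only [hS, shadowFam, Finset.mem_filter, Finset.mem_powersetCard] at hG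
      exact hG.1.2
    have : (𝓗.filter (fun H => G ⊆ H)).card
        ≤ ((Finset.univ \ G).powersetCard 1).card := by
      apply Finset.card_le_card_of_injOn (fun H => H \ G)
      · intro H hH
        simp only [Finset.mem_coe, Finset.mem_filter] at hH ⊢
        obtain ⟨hH𝓗, hGH⟩ := hH
        rw [Finset.mem_powersetCard]
        constructor
        · exact Finset.sdiff_subset_sdiff (Finset.subset_univ H) (le_refl G)
        · rw [Finset.card_sdiff_of_subset hGH, hunif H hH𝓗, hGcard]
          omega
      · intro H1 h1 H2 h2 heq
        simp only [Finset.mem_filter, Finset.mem_coe] at h1 h2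
        have e1 : G ∪ (H1 \ G) = H1 := Finset.union_sdiff_of_subset h1.2
        have e2 : G ∪ (H2 \ G) = H2 := Finset.union_sdiff_of_subset h2.2
        rw [← e1, ← e2]
        exact congrArg (G ∪ ·) heq
    rw [Finset.card_powersetCard, Finset.card_sdiff_of_subset (Finset.subset_univ G),
      Finset.card_univ, Fintype.card_fin, hGcard, Nat.choose_one_right] at this
    calc d G ≤ n - (k - 1) := this
      _ ≤ n - k + 1 := by omega
  -- the injection from 𝓗 into S via unique subsets
  set g : Finset (Fin n) → Finset (Fin n) :=
    fun H => if h : H ∈ 𝓗 then (huniq H h).choose else ∅ with hg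
  have hgspec : ∀ H (h : H ∈ 𝓗), g H ⊆ H ∧ (g H).card = k - 1 ∧
      ∀ T ∈ 𝓗, g H ⊆ T → T = H := by
    intro H h
    have := (huniq H h).choose_spec
    simp only [hg, dif_pos h]
    exact ⟨this.1, this.2.1, this.2.2⟩
  set U := 𝓗.image g with hU
  have hUcard : U.card = 𝓗.card := by
    apply Finset.card_image_of_injOn
    intro H1 h1 H2 h2 heq
    have s1 := hgspec H1 h1
    have s2 := hgspec H2 h2
    exact (s1.2.2 H2 h2 (heq ▸ s2.1)).symm
  have hUS : U ⊆ S := by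
    intro G hGU
    obtain ⟨H, hH, rfl⟩ := Finset.mem_image.mp hGU
    obtain ⟨hsub, hcard, -⟩ := hgspec H hH
    simp only [hS, shadowFam, Finset.mem_filter, Finset.mem_powersetCard]
    exact ⟨⟨Finset.subset_univ _, hcard⟩, ⟨H, hH, hsub⟩⟩
  have hdU : ∀ G ∈ U, d G = 1 := by
    intro G hGU
    obtain ⟨H, hH, rfl⟩ := Finset.mem_image.mp hGU
    obtain ⟨hsub, -, huni⟩ := hgspec H hH
    have : 𝓗.filter (fun T => g H ⊆ T) = {H} := by
      ext T
      simp only [Finset.mem_filter, Finset.mem_singleton]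
      constructor
      · rintro ⟨hT, hGT⟩; exact huni T hT hGT
      · rintro rfl; exact ⟨hH, hsub⟩
    simp [hd, this]
  -- splitting the sum
  have hsplit : ∑ G ∈ S \ U, d G + ∑ G ∈ U, d G = ∑ G ∈ S, d G :=
    Finset.sum_sdiff hUS
  have hsumU : ∑ G ∈ U, d G = 𝓗.card := by
    rw [Finset.sum_congr rfl hdU, Finset.sum_const, smul_eq_mul, mul_one, hUcard]
  have hsumSD : ∑ G ∈ S \ U, d G ≤ (S \ U).card * (n - k + 1) := by
    apply Finset.sum_le_card_nsmul
    intro G hG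
    exact hdeg G (Finset.mem_sdiff.mp hG).1
  have hle : U.card ≤ S.card := Finset.card_le_card hUS
  have hcardSD : (S \ U).card + U.card = S.card := by
    rw [Finset.card_sdiff_of_subset hUS]; omega
  -- final arithmetic
  set a := 𝓗.card
  set s := S.card
  set t := (S \ U).card
  set m := n - k + 1 with hm
  have hts : t + a = s := by omega
  have hmain : k * a ≤ t * m + a := by
    calc k * a = ∑ G ∈ S, d G := swap.symm
      _ = ∑ G ∈ S \ U, d G + ∑ G ∈ U, d G := hsplit.symm
      _ ≤ t * m + a := by
          rw [hsumU]
          exact Nat.add_le_add_right hsumSD a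
  have hn1 : n + 1 = k + m := by omega
  have : n * a + a ≤ m * s + a := by
    calc n * a + a = (n + 1) * a := by ring
      _ = (k + m) * a := by rw [hn1]
      _ = k * a + m * a := by ring
      _ ≤ (t * m + a) + m * a := Nat.add_le_add_right hmain _
      _ = m * (t + a) + a := by ring
      _ = m * s + a := by rw [hts]
  omega
end

section
/- Let k ≥ 3 be an integer and let F be a (k, 2k)-conditionally intersecting family of k-element subsets of [n]. Suppose B = {b_1, …, b_k} ∈ F and C_1, …, C_k are k distinct members of F, each different from B, such that B ∩ C_i = B − {b_i} for every i ∈ {1,…,k}. Let V = B ∪ C_1 ∪ ⋯ ∪ C_k. Then |V| = k+1, the family {B, C_1, …, C_k} equals the family of all k-element subsets of V, and every member of F other than B, C_1, …, C_k is disjoint from V. -/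
theorem stmt7 (n k : ℕ) (hk : 3 ≤ k)
    (F : Finset (Finset (Fin n))) (hunif : ∀ S ∈ F, S.card = k)
    (hci : CondIntersecting k (2 * k) F)
    (B : Finset (Fin n)) (hB : B ∈ F)
    (b : Fin k → Fin n) (hbinj : Function.Injective b)
    (hBb : B = Finset.image b Finset.univ)
    (C : Fin k → Finset (Fin n)) (hCinj : Function.Injective C)
    (hCF : ∀ i, C i ∈ F) (hCB : ∀ i, C i ≠ B)
    (hBC : ∀ i, B ∩ C i = B.erase (b i)) :
    (B ∪ Finset.univ.sup C).card = k + 1 ∧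
    insert B (Finset.image C Finset.univ) = (B ∪ Finset.univ.sup C).powersetCard k ∧
    ∀ S ∈ F, S ≠ B → (∀ i, S ≠ C i) → Disjoint S (B ∪ Finset.univ.sup C) := by
  classical
  have hBcard : B.card = k := hunif B hB
  have hbB : ∀ i, b i ∈ B := by
    intro i; rw [hBb]; exact Finset.mem_image_of_mem b (Finset.mem_univ i)
  have hBmem : ∀ x ∈ B, ∃ i, x = b i := by
    intro x hx
    rw [hBb] at hx
    obtain ⟨i, -, rfl⟩ := Finset.mem_image.mp hx
    exact ⟨i, rfl⟩
  have hCcard : ∀ i, (C i).card = k := fun i => hunif (C i) (hCF i)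
  have herase : ∀ i, (B.erase (b i)).card = k - 1 := fun i => by
    rw [Finset.card_erase_of_mem (hbB i), hBcard]
  have hdiff : ∀ i, (C i \ B).card = 1 := by
    intro i
    have h1 : (C i \ B).card + (C i ∩ B).card = (C i).card :=
      Finset.card_sdiff_add_card_inter _ _
    rw [Finset.inter_comm, hBC i, herase i, hCcard i] at h1
    omega
  choose c hc using fun i => Finset.card_eq_one.mp (hdiff i)
  have hcB : ∀ i, c i ∉ B := by
    intro i
    have : c i ∈ C i \ B := by rw [hc i]; exact Finset.mem_singleton_self _
    exact (Finset.mem_sdiff.mp this).2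
  have hcC : ∀ i, C i = insert (c i) (B.erase (b i)) := by
    intro i
    ext x
    constructor
    · intro hx
      by_cases hxB : x ∈ B
      · have : x ∈ B ∩ C i := Finset.mem_inter.mpr ⟨hxB, hx⟩
        rw [hBC i] at this
        exact Finset.mem_insert_of_mem this
      · have : x ∈ C i \ B := Finset.mem_sdiff.mpr ⟨hx, hxB⟩
        rw [hc i, Finset.mem_singleton] at this
        rw [this]; exact Finset.mem_insert_self _ _
    · intro hx
      rcases Finset.mem_insert.mp hx with rfl | hx
      · have : c i ∈ C i \ B := by rw [hc i]; exact Finset.mem_singleton_self _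
        exact (Finset.mem_sdiff.mp this).1
      · rw [← hBC i] at hx
        exact (Finset.mem_inter.mp hx).2
  -- all c i equal
  have hceq : ∀ i j, c i = c j := by
    intro i j
    by_contra hne
    apply hci
    refine ⟨Finset.image C Finset.univ, ?_, ?_, ?_, ?_⟩
    · intro A hA
      obtain ⟨l, -, rfl⟩ := Finset.mem_image.mp hA
      exact hCF l
    · rw [Finset.card_image_of_injective _ hCinj, Finset.card_univ, Fintype.card_fin]
    · have hsub : (Finset.image C Finset.univ).sup id ≤ B ∪ Finset.image c Finset.univ := by
        apply Finset.sup_le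
        intro A hA
        simp only [id_eq]
        rw [Finset.le_iff_subset]
        obtain ⟨l, -, rfl⟩ := Finset.mem_image.mp hA
        intro x hx
        rw [hcC l] at hx
        rcases Finset.mem_insert.mp hx with rfl | hx
        · exact Finset.mem_union_right _ (Finset.mem_image_of_mem c (Finset.mem_univ l))
        · exact Finset.mem_union_left _ (Finset.mem_of_mem_erase hx)
      calc ((Finset.image C Finset.univ).sup id).card
          ≤ (B ∪ Finset.image c Finset.univ).card :=
            Finset.card_le_card (Finset.le_iff_subset.mp hsub)
        _ ≤ B.card + (Finset.image c Finset.univ).card := Finset.card_union_le _ _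
        _ ≤ k + k := by
            refine Nat.add_le_add (le_of_eq hBcard) ?_
            calc (Finset.image c Finset.univ).card ≤ (Finset.univ : Finset (Fin k)).card :=
                  Finset.card_image_le
              _ = k := by simp
        _ = 2 * k := by ring
    · rw [Finset.eq_empty_iff_forall_notMem]
      intro x hx
      have hxC : ∀ l, x ∈ C l := fun l =>
        Finset.le_iff_subset.mp
          (Finset.inf_le (Finset.mem_image_of_mem C (Finset.mem_univ l))) hx
      by_cases hxB : x ∈ B
      · obtain ⟨m, rfl⟩ := hBmem x hxB
        have := hxC m
        rw [hcC m] at this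
        rcases Finset.mem_insert.mp this with h | h
        · exact hcB m (h ▸ hxB)
        · exact (Finset.mem_erase.mp h).1 rfl
      · have h1 : x ∈ C i \ B := Finset.mem_sdiff.mpr ⟨hxC i, hxB⟩
        have h2 : x ∈ C j \ B := Finset.mem_sdiff.mpr ⟨hxC j, hxB⟩
        rw [hc i, Finset.mem_singleton] at h1
        rw [hc j, Finset.mem_singleton] at h2
        exact hne (h1 ▸ h2 ▸ rfl)
  have hk0 : 0 < k := by omega
  set i0 : Fin k := ⟨0, hk0⟩ with hi0
  set c0 : Fin n := c i0 with hc0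
  have hC' : ∀ i, C i = insert c0 (B.erase (b i)) := by
    intro i; rw [hcC i, hceq i i0]
  have hc0B : c0 ∉ B := hcB i0
  -- the union
  have hsupC : Finset.univ.sup C = insert c0 B := by
    apply le_antisymm
    · apply Finset.sup_le
      intro i _
      rw [Finset.le_iff_subset, hC' i]
      exact Finset.insert_subset_insert _ (Finset.erase_subset _ _)
    · rw [Finset.le_iff_subset]
      intro x hx
      rcases Finset.mem_insert.mp hx with rfl | hxB
      · exact Finset.le_iff_subset.mp (Finset.le_sup (Finset.mem_univ i0))
          (by rw [hC' i0]; exact Finset.mem_insert_self _ _)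
      · obtain ⟨m, rfl⟩ := hBmem x hxB
        have hex : ∃ j : Fin k, j ≠ m := by
          by_cases hm0 : m = i0
          · exact ⟨⟨1, by omega⟩, by simp [hm0, hi0, Fin.ext_iff]⟩
          · exact ⟨i0, Ne.symm hm0⟩
        obtain ⟨j, hj⟩ := hex
        have : b m ∈ C j := by
          rw [hC' j]
          exact Finset.mem_insert_of_mem
            (Finset.mem_erase.mpr ⟨fun h => hj (hbinj h).symm, hxB⟩)
        exact Finset.le_iff_subset.mp (Finset.le_sup (Finset.mem_univ j)) this
  have hV : B ∪ Finset.univ.sup C = insert c0 B := by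
    rw [hsupC]
    exact Finset.union_eq_right.mpr (Finset.subset_insert _ _)
  have hVcard : (insert c0 B).card = k + 1 := by
    rw [Finset.card_insert_of_notMem hc0B, hBcard]
  -- second claim
  have hpow : insert B (Finset.image C Finset.univ) = (insert c0 B).powersetCard k := by
    apply Finset.eq_of_subset_of_card_le
    · intro A hA
      rcases Finset.mem_insert.mp hA with rfl | hA
      · exact Finset.mem_powersetCard.mpr ⟨Finset.subset_insert _ _, hBcard⟩
      · obtain ⟨i, -, rfl⟩ := Finset.mem_image.mp hA
        refine Finset.mem_powersetCard.mpr ⟨?_, hCcard i⟩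
        rw [hC' i]
        exact Finset.insert_subset_insert _ (Finset.erase_subset _ _)
    · rw [Finset.card_powersetCard, hVcard, Nat.choose_succ_self_right]
      rw [Finset.card_insert_of_notMem, Finset.card_image_of_injective _ hCinj]
      · simp
      · intro h
        obtain ⟨i, -, hi⟩ := Finset.mem_image.mp h
        exact hCB i hi
  refine ⟨by rw [hV]; exact hVcard, by rw [hV]; exact hpow, ?_⟩
  -- third claim
  intro S hS hSB hSC
  rw [hV]
  by_contra hdis
  obtain ⟨x, hx⟩ := Finset.not_disjoint_iff_nonempty_inter.mp hdis
  set V : Finset (Fin n) := insert c0 B with hVdef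
  have hScard : S.card = k := hunif S hS
  have hSV : ¬ S ⊆ V := by
    intro hsub
    have : S ∈ V.powersetCard k := Finset.mem_powersetCard.mpr ⟨hsub, hScard⟩
    rw [← hpow] at this
    rcases Finset.mem_insert.mp this with h | h
    · exact hSB h
    · obtain ⟨i, -, hi⟩ := Finset.mem_image.mp h
      exact hSC i hi.symm
  have hinterlt : (V ∩ S).card < k := by
    rw [← hScard]
    apply Finset.card_lt_card
    constructor
    · exact Finset.inter_subset_right
    · intro h
      exact hSV fun y hy => (Finset.mem_inter.mp (h hy)).1
  have hVS2 : 2 ≤ (V \ S).card := by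
    have := Finset.card_sdiff_add_card_inter V S
    rw [hVcard] at this
    omega
  obtain ⟨u, hu, v, hv, huv⟩ := Finset.one_lt_card.mp (by omega : 1 < (V \ S).card)
  set W : Finset (Finset (Fin n)) := Finset.image V.erase (V \ {u, v}) with hW
  have hWmem : ∀ A ∈ W, ∃ w ∈ V \ ({u, v} : Finset (Fin n)), A = V.erase w := by
    intro A hA
    obtain ⟨w, hw, rfl⟩ := Finset.mem_image.mp hA
    exact ⟨w, hw, rfl⟩
  have hWpow : ∀ A ∈ W, A ∈ V.powersetCard k := by
    intro A hA
    obtain ⟨w, hw, rfl⟩ := hWmem A hA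
    refine Finset.mem_powersetCard.mpr ⟨Finset.erase_subset _ _, ?_⟩
    rw [Finset.card_erase_of_mem (Finset.mem_sdiff.mp hw).1, hVcard]
    omega
  have hWF : ∀ A ∈ W, A ∈ F := by
    intro A hA
    have := hWpow A hA
    rw [← hpow] at this
    rcases Finset.mem_insert.mp this with rfl | h
    · exact hB
    · obtain ⟨i, -, rfl⟩ := Finset.mem_image.mp h
      exact hCF i
  have hSnW : S ∉ W := by
    intro h
    obtain ⟨w, -, hw⟩ := hWmem S h
    exact hSV (hw ▸ Finset.erase_subset _ _)
  have huvV : ({u, v} : Finset (Fin n)) ⊆ V := by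
    intro y hy
    rcases Finset.mem_insert.mp hy with rfl | hy
    · exact (Finset.mem_sdiff.mp hu).1
    · rw [Finset.mem_singleton] at hy
      exact hy ▸ (Finset.mem_sdiff.mp hv).1
  have hcardVuv : (V \ ({u, v} : Finset (Fin n))).card = k - 1 := by
    rw [Finset.card_sdiff_of_subset huvV, hVcard, Finset.card_insert_of_notMem (by simp [huv]),
      Finset.card_singleton]
    omega
  have hWcard : W.card = k - 1 := by
    rw [hW, Finset.card_image_of_injOn, hcardVuv]
    intro w hw w' hw' hww'
    by_contra hne
    have hwV : w ∈ V := (Finset.mem_sdiff.mp hw).1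
    have : w ∈ V.erase w' := Finset.mem_erase.mpr ⟨hne, hwV⟩
    rw [← hww'] at this
    exact (Finset.mem_erase.mp this).1 rfl
  apply hci
  refine ⟨insert S W, ?_, ?_, ?_, ?_⟩
  · intro A hA
    rcases Finset.mem_insert.mp hA with rfl | hA
    · exact hS
    · exact hWF A hA
  · rw [Finset.card_insert_of_notMem hSnW, hWcard]
    omega
  · have hsub : (insert S W).sup id ≤ S ∪ V := by
      apply Finset.sup_le
      intro A hA
      simp only [id_eq]
      rw [Finset.le_iff_subset]
      rcases Finset.mem_insert.mp hA with rfl | hA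
      · exact Finset.subset_union_left
      · obtain ⟨w, -, rfl⟩ := hWmem A hA
        exact (Finset.erase_subset _ _).trans Finset.subset_union_right
    have h1 : (S ∪ V).card + (S ∩ V).card = S.card + V.card :=
      Finset.card_union_add_card_inter _ _
    have h2 : 1 ≤ (S ∩ V).card := Finset.card_pos.mpr ⟨x, hx⟩
    have := Finset.card_le_card (Finset.le_iff_subset.mp hsub)
    rw [hScard, hVcard] at h1
    omega
  · rw [Finset.eq_empty_iff_forall_notMem]
    intro y hy
    have hyS : y ∈ S := Finset.le_iff_subset.mp
      (Finset.inf_le (Finset.mem_insert_self _ _)) hy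
    have hyE : ∀ w ∈ V \ ({u, v} : Finset (Fin n)), y ∈ V.erase w := by
      intro w hw
      exact Finset.le_iff_subset.mp (Finset.inf_le (Finset.mem_insert_of_mem
        (Finset.mem_image_of_mem _ hw))) hy
    have hne : (V \ ({u, v} : Finset (Fin n))).Nonempty :=
      Finset.card_pos.mp (by omega)
    obtain ⟨w0, hw0⟩ := hne
    have hyV : y ∈ V := Finset.mem_of_mem_erase (hyE w0 hw0)
    have hyuv : y ∉ ({u, v} : Finset (Fin n)) := by
      intro h
      rcases Finset.mem_insert.mp h with rfl | h
      · exact (Finset.mem_sdiff.mp hu).2 hyS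
      · rw [Finset.mem_singleton] at h
        exact (Finset.mem_sdiff.mp hv).2 (h ▸ hyS)
    have : y ∈ V.erase y := hyE y (Finset.mem_sdiff.mpr ⟨hyV, hyuv⟩)
    exact (Finset.mem_erase.mp this).1 rfl
end

section
/- Let k ≥ 3 be an integer, let F be a (3, 2k)-conditionally intersecting family of k-element subsets of [n], and let A, B ∈ F be disjoint. If F ∈ F satisfies |F ∩ (A ∪ B)| = 1, then the (k−1)-element set F − (A ∪ B) is contained in no member of F other than F. -/
lemma key_aux (n k : ℕ) (hk : 3 ≤ k) (F : Finset (Finset (Fin n)))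
    (hunif : ∀ S ∈ F, S.card = k) (hci : CondIntersecting 3 (2 * k) F)
    (C S G : Finset (Fin n)) (hC : C ∈ F) (hS : S ∈ F) (hG : G ∈ F)
    (x : Fin n) (hSC : S ∩ C = {x}) (hxG : x ∉ G) (hsub : S \ {x} ⊆ G)
    (hne : G ≠ S) : False := by
  have hxC : x ∈ C := (Finset.mem_inter.mp (hSC ▸ Finset.mem_singleton_self x)).2
  have hCS : C ≠ S := by
    intro h
    have : S ∩ C = C := by rw [h, Finset.inter_self]
    rw [this] at hSC
    have := hunif C hC
    rw [hSC, Finset.card_singleton] at this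
    omega
  have hCG : C ≠ G := fun h => hxG (h ▸ hxC)
  apply hci
  refine ⟨{C, S, G}, ?_, ?_, ?_, ?_⟩
  · intro D hD
    simp only [Finset.mem_insert, Finset.mem_singleton] at hD
    rcases hD with rfl | rfl | rfl <;> assumption
  · rw [Finset.card_insert_of_notMem (by simp [hCS, hCG]),
      Finset.card_insert_of_notMem (by simpa using fun h => hne h.symm),
      Finset.card_singleton]
  · have hsup : ({C, S, G} : Finset (Finset (Fin n))).sup id = C ∪ (S ∪ G) := by
      simp [Finset.sup_insert]
    rw [hsup]
    have hSsub : S ⊆ insert x G := by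
      intro y hy
      by_cases hyx : y = x
      · simp [hyx]
      · exact Finset.mem_insert_of_mem (hsub (Finset.mem_sdiff.mpr ⟨hy, by simp [hyx]⟩))
    have : C ∪ (S ∪ G) ⊆ C ∪ G := by
      intro y hy
      rcases Finset.mem_union.mp hy with h | h
      · exact Finset.mem_union_left _ h
      · rcases Finset.mem_union.mp h with h | h
        · rcases Finset.mem_insert.mp (hSsub h) with rfl | h
          · exact Finset.mem_union_left _ hxC
          · exact Finset.mem_union_right _ h
        · exact Finset.mem_union_right _ h
    calc (C ∪ (S ∪ G)).card ≤ (C ∪ G).card := Finset.card_le_card this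
      _ ≤ C.card + G.card := Finset.card_union_le _ _
      _ = 2 * k := by rw [hunif C hC, hunif G hG]; ring
  · have hinf : ({C, S, G} : Finset (Finset (Fin n))).inf id = C ∩ (S ∩ G) := by
      simp [Finset.inf_insert]
    rw [hinf]
    ext y
    simp only [Finset.mem_inter, Finset.notMem_empty, iff_false]
    rintro ⟨hyC, hyS, hyG⟩
    have : y ∈ S ∩ C := Finset.mem_inter.mpr ⟨hyS, hyC⟩
    rw [hSC, Finset.mem_singleton] at this
    exact hxG (this ▸ hyG)

theorem stmt8 (n k : ℕ) (hk : 3 ≤ k)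
    (F : Finset (Finset (Fin n))) (hunif : ∀ S ∈ F, S.card = k)
    (hci : CondIntersecting 3 (2 * k) F)
    (A B : Finset (Fin n)) (hA : A ∈ F) (hB : B ∈ F) (hAB : Disjoint A B)
    (S : Finset (Fin n)) (hS : S ∈ F) (hS1 : (S ∩ (A ∪ B)).card = 1) :
    ∀ G ∈ F, S \ (A ∪ B) ⊆ G → G = S := by
  intro G hG hsub
  by_contra hne
  obtain ⟨x, hx⟩ := Finset.card_eq_one.mp hS1
  have hxmem : x ∈ S ∩ (A ∪ B) := hx ▸ Finset.mem_singleton_self x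
  have hxS : x ∈ S := (Finset.mem_inter.mp hxmem).1
  have hxAB : x ∈ A ∪ B := (Finset.mem_inter.mp hxmem).2
  have hsd : S \ (A ∪ B) = S \ {x} := by
    rw [← hx, Finset.sdiff_inter_self_left]
  rw [hsd] at hsub
  have hxG : x ∉ G := by
    intro hxG
    apply hne
    refine (Finset.eq_of_subset_of_card_le ?_ ?_).symm
    · intro y hy
      by_cases hyx : y = x
      · exact hyx ▸ hxG
      · exact hsub (Finset.mem_sdiff.mpr ⟨hy, by simp [hyx]⟩)
    · rw [hunif G hG, hunif S hS]
  rcases Finset.mem_union.mp hxAB with hxA | hxB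
  · refine key_aux n k hk F hunif hci A S G hA hS hG x ?_ hxG hsub hne
    apply Finset.Subset.antisymm
    · intro y hy
      have : y ∈ S ∩ (A ∪ B) := by
        rcases Finset.mem_inter.mp hy with ⟨h1, h2⟩
        exact Finset.mem_inter.mpr ⟨h1, Finset.mem_union_left _ h2⟩
      rwa [hx] at this
    · intro y hy
      rw [Finset.mem_singleton] at hy
      exact hy ▸ Finset.mem_inter.mpr ⟨hxS, hxA⟩
  · refine key_aux n k hk F hunif hci B S G hB hS hG x ?_ hxG hsub hne
    apply Finset.Subset.antisymm
    · intro y hy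
      have : y ∈ S ∩ (A ∪ B) := by
        rcases Finset.mem_inter.mp hy with ⟨h1, h2⟩
        exact Finset.mem_inter.mpr ⟨h1, Finset.mem_union_right _ h2⟩
      rwa [hx] at this
    · intro y hy
      rw [Finset.mem_singleton] at hy
      exact hy ▸ Finset.mem_inter.mpr ⟨hxS, hxB⟩
end

section
/- Let k ≥ 3, n ≥ 3k, let F be a family of k-element subsets of [n], let A, B ∈ F be disjoint, and set U = [n] − (A ∪ B). Then for every i ∈ {1, …, k−2} one has k·n_i ≥ (n−3k)·b_{i+1}, where n_i is the number of non-perfect (k−i)-element subsets of U and b_{i+1} is the number of (k−i−1)-element subsets of U that are non-perfect and are contained in no perfect (k−i)-element subset of U. -/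
/-- `F(C) = {S - C : S ∈ F, S ∩ U = C}`. -/
def FamC {n : ℕ} (F : Finset (Finset (Fin n))) (U C : Finset (Fin n)) :
    Finset (Finset (Fin n)) :=
  (F.filter (fun S => S ∩ U = C)).image (fun S => S \ C)

/-- The family of all `m`-element subsets of `A` that contain `v`. -/
def starFam {n : ℕ} (m : ℕ) (A : Finset (Fin n)) (v : Fin n) :
    Finset (Finset (Fin n)) :=
  (A.powersetCard m).filter (fun E => v ∈ E)

/-- A set `C ⊆ U` of size `k - 1` is perfect if it is contained in some member of `F`;
a set `C ⊆ U` of size at most `k - 2` is perfect if `F(C)` is the full star on `A` with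
some core `v ∈ A`, or the full star on `B` with some core `v ∈ B`. -/
def PerfectSet {n : ℕ} (k : ℕ) (F : Finset (Finset (Fin n))) (A B U : Finset (Fin n))
    (C : Finset (Fin n)) : Prop :=
  if C.card = k - 1 then ∃ S ∈ F, C ⊆ S
  else (∃ v ∈ A, FamC F U C = starFam (k - C.card) A v) ∨
       (∃ v ∈ B, FamC F U C = starFam (k - C.card) B v)

open Classical in
/-- `n_i`: the number of non-perfect `(k-i)`-element subsets of `U`. -/
noncomputable def nonPerfectCount {n : ℕ} (k i : ℕ) (F : Finset (Finset (Fin n)))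
    (A B U : Finset (Fin n)) : ℕ :=
  ((U.powersetCard (k - i)).filter (fun C => ¬ PerfectSet k F A B U C)).card

open Classical in
/-- `b_i`: the number of `(k-i)`-element subsets of `U` that are non-perfect and are
contained in no perfect `(k-i+1)`-element subset of `U`. -/
noncomputable def badCount {n : ℕ} (k i : ℕ) (F : Finset (Finset (Fin n)))
    (A B U : Finset (Fin n)) : ℕ :=
  ((U.powersetCard (k - i)).filter (fun C => ¬ PerfectSet k F A B U C ∧
    ∀ D ∈ U.powersetCard (k - i + 1), C ⊆ D → ¬ PerfectSet k F A B U D)).card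

theorem stmt10 (n k : ℕ) (hk : 3 ≤ k) (hn : 3 * k ≤ n)
    (F : Finset (Finset (Fin n))) (hunif : ∀ S ∈ F, S.card = k)
    (A B : Finset (Fin n)) (hA : A ∈ F) (hB : B ∈ F) (hAB : Disjoint A B)
    (i : ℕ) (hi1 : 1 ≤ i) (hi2 : i ≤ k - 2) :
    (n - 3 * k) * badCount k (i + 1) F A B (Finset.univ \ (A ∪ B))
      ≤ k * nonPerfectCount k i F A B (Finset.univ \ (A ∪ B)) := by

  classical
  set U := (Finset.univ : Finset (Fin n)) \ (A ∪ B) with hU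
  set np := (U.powersetCard (k - i)).filter (fun C => ¬ PerfectSet k F A B U C) with hnp
  set bad := (U.powersetCard (k - (i+1))).filter (fun C => ¬ PerfectSet k F A B U C ∧
    ∀ D ∈ U.powersetCard (k - (i+1) + 1), C ⊆ D → ¬ PerfectSet k F A B U D) with hbad
  have hnpc : nonPerfectCount k i F A B U = np.card := by
    rw [hnp, nonPerfectCount]
  have hbadc : badCount k (i+1) F A B U = bad.card := by
    rw [hbad, badCount]
  have hUcard : U.card = n - 2 * k := by
    have h1 : (A ∪ B).card = 2 * k := by
      rw [Finset.card_union_of_disjoint hAB, hunif A hA, hunif B hB]; ring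
    rw [hU, Finset.card_sdiff_of_subset (Finset.subset_univ _), Finset.card_univ, Fintype.card_fin, h1]
  have harith : k - (i+1) + 1 = k - i := by omega
  have key : ∀ D ∈ bad, (n - 3*k) ≤ (np.filter (fun C => D ⊆ C)).card := by
    intro D hD
    rw [hbad, Finset.mem_filter, Finset.mem_powersetCard] at hD
    obtain ⟨⟨hDU, hDc⟩, hnpf, hclause⟩ := hD
    have hinj : (U \ D).card ≤ (np.filter (fun C => D ⊆ C)).card := by
      apply Finset.card_le_card_of_injOn (fun x => insert x D)
      · intro x hx
        rw [Finset.mem_coe, Finset.mem_sdiff] at hx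
        obtain ⟨hxU, hxD⟩ := hx
        have hmem : insert x D ∈ U.powersetCard (k - (i+1) + 1) := by
          rw [Finset.mem_powersetCard]
          constructor
          · exact Finset.insert_subset hxU hDU
          · rw [Finset.card_insert_of_notMem hxD, hDc]
        rw [Finset.mem_coe, Finset.mem_filter, hnp, Finset.mem_filter]
        refine ⟨⟨?_, hclause _ hmem (Finset.subset_insert x D)⟩, Finset.subset_insert x D⟩
        rw [← harith]; exact hmem
      · intro x hx y hy hxy
        rw [Finset.mem_coe, Finset.mem_sdiff] at hx hy
        have hxy' : insert x D = insert y D := hxy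
        have : x ∈ insert y D := by rw [← hxy']; exact Finset.mem_insert_self x D
        rcases Finset.mem_insert.mp this with h | h
        · exact h
        · exact absurd h hx.2
    have hcd : (U \ D).card = U.card - D.card := Finset.card_sdiff_of_subset hDU
    have hDle : D.card ≤ U.card := Finset.card_le_card hDU
    omega
  have key2 : ∀ C ∈ np, (bad.filter (fun D => D ⊆ C)).card ≤ k := by
    intro C hC
    rw [hnp, Finset.mem_filter, Finset.mem_powersetCard] at hC
    obtain ⟨⟨hCU, hCc⟩, _⟩ := hC
    have hsub : (bad.filter (fun D => D ⊆ C)) ⊆ C.powersetCard (k - (i+1)) := by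
      intro D hD
      rw [Finset.mem_filter] at hD
      obtain ⟨hDb, hDC⟩ := hD
      rw [hbad, Finset.mem_filter, Finset.mem_powersetCard] at hDb
      rw [Finset.mem_powersetCard]
      exact ⟨hDC, hDb.1.2⟩
    have := Finset.card_le_card hsub
    rw [Finset.card_powersetCard, hCc] at this
    have h1 : k - (i+1) = (k - i) - 1 := by omega
    have h2 : (k - i).choose (k - (i+1)) = k - i := by
      rw [h1, Nat.choose_symm (by omega : 1 ≤ k - i), Nat.choose_one_right]
    omega
  have mid : ∑ D ∈ bad, (np.filter (fun C => D ⊆ C)).card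
      = ∑ C ∈ np, (bad.filter (fun D => D ⊆ C)).card := by
    simp_rw [Finset.card_filter]
    exact Finset.sum_comm
  rw [hnpc, hbadc]
  calc (n - 3 * k) * bad.card = bad.card * (n - 3 * k) := by ring
    _ ≤ ∑ D ∈ bad, (np.filter (fun C => D ⊆ C)).card := by
        have := Finset.card_nsmul_le_sum bad (fun D => (np.filter (fun C => D ⊆ C)).card)
          (n - 3*k) key
        simpa [smul_eq_mul] using this
    _ = ∑ C ∈ np, (bad.filter (fun D => D ⊆ C)).card := mid
    _ ≤ np.card * k := by
        have := Finset.sum_le_card_nsmul np (fun C => (bad.filter (fun D => D ⊆ C)).card) k key2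
        simpa [smul_eq_mul] using this
    _ = k * np.card := by ring
end

section
/- Let k ≥ 3 be an integer, let F be a (3, 2k)-conditionally intersecting family of k-element subsets of [n], let A, B ∈ F be disjoint, and set U = [n] − (A ∪ B). Let ℓ be an integer with 2ℓ ≥ k+1 and ℓ ≤ k−1, let C ⊆ U with |C| = ℓ, and suppose F(C) is the full star on A with core v for some v ∈ A. Then for every subset C' of C with |C'| = ℓ−1, the family F(C') is a star on A with core v, i.e., every member of F(C') is a subset of A containing v. -/
lemma ci3 {n k : ℕ} (F : Finset (Finset (Fin n))) (hci : CondIntersecting 3 (2 * k) F)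
    {S1 S2 S3 : Finset (Fin n)} (h1 : S1 ∈ F) (h2 : S2 ∈ F) (h3 : S3 ∈ F)
    (h12 : S1 ≠ S2) (h13 : S1 ≠ S3) (h23 : S2 ≠ S3)
    (hu : (S1 ∪ S2 ∪ S3).card ≤ 2 * k) (hi : S1 ∩ S2 ∩ S3 = ∅) : False := by
  apply hci
  refine ⟨{S1, S2, S3}, ?_, ?_, ?_, ?_⟩
  · intro x hx
    simp only [Finset.mem_insert, Finset.mem_singleton] at hx
    rcases hx with rfl | rfl | rfl <;> assumption
  · rw [Finset.card_insert_of_notMem (by simp [h12, h13]),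
      Finset.card_insert_of_notMem (by simp [h23]), Finset.card_singleton]
  · have : ({S1, S2, S3} : Finset (Finset (Fin n))).sup id = S1 ∪ S2 ∪ S3 := by
      simp [Finset.union_assoc]
    rw [this]; exact hu
  · have : ({S1, S2, S3} : Finset (Finset (Fin n))).inf id = S1 ∩ S2 ∩ S3 := by
      simp [Finset.inter_assoc]
    rw [this]; exact hi

theorem stmt11 (n k : ℕ) (hk : 3 ≤ k)
    (F : Finset (Finset (Fin n))) (hunif : ∀ S ∈ F, S.card = k)
    (hci : CondIntersecting 3 (2 * k) F)
    (A B : Finset (Fin n)) (hA : A ∈ F) (hB : B ∈ F) (hAB : Disjoint A B)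
    (ℓ : ℕ) (hℓ1 : k + 1 ≤ 2 * ℓ) (hℓ2 : ℓ ≤ k - 1)
    (C : Finset (Fin n)) (hCU : C ⊆ Finset.univ \ (A ∪ B)) (hCcard : C.card = ℓ)
    (v : Fin n) (hv : v ∈ A)
    (hstar : FamC F (Finset.univ \ (A ∪ B)) C = starFam (k - ℓ) A v) :
    ∀ C' ⊆ C, C'.card = ℓ - 1 →
      ∀ E ∈ FamC F (Finset.univ \ (A ∪ B)) C', E ⊆ A ∧ v ∈ E := by

  intro C' hC'C hC'card E hE
  set U : Finset (Fin n) := Finset.univ \ (A ∪ B) with hUdef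
  have hAcard : A.card = k := hunif A hA
  have hBcard : B.card = k := hunif B hB
  have hℓ2' : 2 ≤ ℓ := by omega
  have hℓk : ℓ + 1 ≤ k := by omega
  have hUmem : ∀ x : Fin n, x ∈ U ↔ x ∉ A ∧ x ∉ B := by
    intro x; simp [hUdef]
  have hAU : A ∩ U = ∅ := by
    ext x; simp only [Finset.mem_inter, hUmem, Finset.notMem_empty, iff_false]
    rintro ⟨hx, hx', _⟩; exact hx' hx
  have hBU : B ∩ U = ∅ := by
    ext x; simp only [Finset.mem_inter, hUmem, Finset.notMem_empty, iff_false]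
    rintro ⟨hx, _, hx'⟩; exact hx' hx
  have hCA : ∀ x ∈ C, x ∉ A := fun x hx => ((hUmem x).1 (hCU hx)).1
  have hCB : ∀ x ∈ C, x ∉ B := fun x hx => ((hUmem x).1 (hCU hx)).2
  -- members of F coming from the full star
  have hstarF : ∀ T : Finset (Fin n), T ⊆ A → v ∈ T → T.card = k - ℓ →
      C ∪ T ∈ F ∧ (C ∪ T) ∩ U = C := by
    intro T hTA hvT hTcard
    have hT : T ∈ starFam (k - ℓ) A v := by
      simp [starFam, Finset.mem_powersetCard, hTA, hTcard, hvT]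
    rw [← hstar] at hT
    simp only [FamC, Finset.mem_image, Finset.mem_filter] at hT
    obtain ⟨S', ⟨hS'F, hS'U⟩, hS'T⟩ := hT
    have hCS' : C ⊆ S' := hS'U ▸ Finset.inter_subset_left
    have hEq : C ∪ T = S' := by rw [← hS'T]; exact Finset.union_sdiff_of_subset hCS'
    rw [hEq]; exact ⟨hS'F, hS'U⟩
  -- unpack E
  simp only [FamC, Finset.mem_image, Finset.mem_filter] at hE
  obtain ⟨S, ⟨hSF, hSU⟩, hSE⟩ := hE
  have hC'S : C' ⊆ S := hSU ▸ Finset.inter_subset_left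
  have hSeq : S = C' ∪ E := by rw [← hSE]; exact (Finset.union_sdiff_of_subset hC'S).symm
  have hScard : S.card = k := hunif S hSF
  have hEcard : E.card = k - ℓ + 1 := by
    rw [← hSE, Finset.card_sdiff_of_subset hC'S, hScard, hC'card]; omega
  have hEAB : ∀ x ∈ E, x ∈ A ∨ x ∈ B := by
    intro x hx
    rw [← hSE, Finset.mem_sdiff] at hx
    by_contra hc
    push_neg at hc
    have hxU : x ∈ U := (hUmem x).2 ⟨hc.1, hc.2⟩
    have : x ∈ C' := hSU ▸ Finset.mem_inter.2 ⟨hx.1, hxU⟩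
    exact hx.2 this
  have hC'U : C' ⊆ U := hC'C.trans hCU
  -- distinctness helpers
  have hC'ne : C'.card ≠ C.card := by rw [hC'card, hCcard]; omega
  have hC'ne0 : C'.card ≠ 0 := by rw [hC'card]; omega
  have hCne0 : C.card ≠ 0 := by rw [hCcard]; omega
  -- Step 1: insert v (E ∩ A) is too big to fit in a (k-ℓ)-set
  have step1 : ¬ (insert v (E ∩ A)).card ≤ k - ℓ := by
    intro hle
    have hsub : insert v (E ∩ A) ⊆ A := by
      intro x hx
      rcases Finset.mem_insert.1 hx with rfl | hx
      · exact hv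
      · exact (Finset.mem_inter.1 hx).2
    obtain ⟨T, hT1, hT2, hT3⟩ := Finset.exists_subsuperset_card_eq hsub hle
      (by rw [hAcard]; omega)
    have hvT : v ∈ T := hT1 (Finset.mem_insert_self _ _)
    obtain ⟨hF1F, hF1U⟩ := hstarF T hT2 hvT hT3
    refine ci3 F hci hSF hF1F hB ?_ ?_ ?_ ?_ ?_
    · intro h; apply hC'ne; rw [← hSU, h, hF1U]
    · intro h; apply hC'ne0; rw [← hSU, h, hBU]; rfl
    · intro h; apply hCne0; rw [← hF1U, h, hBU]; rfl
    · have hsub2 : S ∪ (C ∪ T) ∪ B ⊆ C ∪ T ∪ B := by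
        intro x hx
        simp only [Finset.mem_union] at hx ⊢
        rcases hx with (hx | hx) | hx
        · rw [hSeq] at hx
          rcases Finset.mem_union.1 hx with hx | hx
          · exact Or.inl (Or.inl (hC'C hx))
          · rcases hEAB x hx with hxA | hxB
            · exact Or.inl (Or.inr (hT1 (Finset.mem_insert_of_mem
                (Finset.mem_inter.2 ⟨hx, hxA⟩))))
            · exact Or.inr hxB
        · tauto
        · tauto
      calc (S ∪ (C ∪ T) ∪ B).card ≤ (C ∪ T ∪ B).card := Finset.card_le_card hsub2
        _ ≤ C.card + T.card + B.card := by
            refine le_trans (Finset.card_union_le _ _) ?_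
            exact Nat.add_le_add_right (Finset.card_union_le _ _) _
        _ ≤ 2 * k := by rw [hCcard, hT3, hBcard]; omega
    · ext x
      simp only [Finset.mem_inter, Finset.mem_union, Finset.notMem_empty, iff_false]
      rintro ⟨⟨_, hx2 | hx2⟩, hx3⟩
      · exact hCB x hx2 hx3
      · exact Finset.disjoint_left.1 hAB (hT2 hx2) hx3
  -- Step 2: v ∈ E
  have hvE : v ∈ E := by
    by_contra hvE
    have hvEA : v ∉ E ∩ A := fun h => hvE (Finset.mem_inter.1 h).1
    have hEAcard : k - ℓ ≤ (E ∩ A).card := by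
      have := Finset.card_insert_of_notMem hvEA
      omega
    have hsplitsub : E ⊆ (E ∩ A) ∪ (E ∩ B) := by
      intro x hx
      rcases hEAB x hx with h | h
      · exact Finset.mem_union_left _ (Finset.mem_inter.2 ⟨hx, h⟩)
      · exact Finset.mem_union_right _ (Finset.mem_inter.2 ⟨hx, h⟩)
    have hEBcard : (E ∩ B).card ≤ 1 := by
      have hdisj : Disjoint (E ∩ A) (E ∩ B) :=
        Disjoint.mono Finset.inter_subset_right Finset.inter_subset_right hAB
      have h1 : (E ∩ A).card + (E ∩ B).card ≤ E.card := by
        rw [← Finset.card_union_of_disjoint hdisj]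
        exact Finset.card_le_card
          (Finset.union_subset Finset.inter_subset_left Finset.inter_subset_left)
      omega
    have hvAE : ({v} : Finset (Fin n)) ⊆ A \ E := by
      simp [Finset.singleton_subset_iff, Finset.mem_sdiff, hv, hvE]
    have hAEcard : k - ℓ ≤ (A \ E).card := by
      have h1 : (A \ E).card + (A ∩ E).card = A.card :=
        Finset.card_sdiff_add_card_inter A E
      have h2 : (A ∩ E).card ≤ E.card := Finset.card_le_card Finset.inter_subset_right
      omega
    obtain ⟨T, hT1, hT2, hT3⟩ := Finset.exists_subsuperset_card_eq hvAE
      (by simp; omega) hAEcard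
    have hvT : v ∈ T := hT1 (Finset.mem_singleton_self v)
    have hTA : T ⊆ A := hT2.trans (Finset.sdiff_subset)
    obtain ⟨hF1F, hF1U⟩ := hstarF T hTA hvT hT3
    refine ci3 F hci hSF hF1F hA ?_ ?_ ?_ ?_ ?_
    · intro h; apply hC'ne; rw [← hSU, h, hF1U]
    · intro h; apply hC'ne0; rw [← hSU, h, hAU]; rfl
    · intro h; apply hCne0; rw [← hF1U, h, hAU]; rfl
    · have hsub2 : S ∪ (C ∪ T) ∪ A ⊆ C ∪ (E ∩ B) ∪ A := by
        intro x hx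
        simp only [Finset.mem_union] at hx ⊢
        rcases hx with (hx | hx) | hx
        · rw [hSeq] at hx
          rcases Finset.mem_union.1 hx with hx | hx
          · exact Or.inl (Or.inl (hC'C hx))
          · rcases hEAB x hx with hxA | hxB
            · exact Or.inr hxA
            · exact Or.inl (Or.inr (Finset.mem_inter.2 ⟨hx, hxB⟩))
        · rcases hx with hx | hx
          · tauto
          · exact Or.inr (hTA hx)
        · tauto
      calc (S ∪ (C ∪ T) ∪ A).card ≤ (C ∪ (E ∩ B) ∪ A).card := Finset.card_le_card hsub2
        _ ≤ C.card + (E ∩ B).card + A.card := by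
            refine le_trans (Finset.card_union_le _ _) ?_
            exact Nat.add_le_add_right (Finset.card_union_le _ _) _
        _ ≤ 2 * k := by rw [hCcard, hAcard]; omega
    · ext x
      simp only [Finset.mem_inter, Finset.mem_union, Finset.notMem_empty, iff_false]
      rintro ⟨⟨hx1, hx2 | hx2⟩, hx3⟩
      · exact hCA x hx2 hx3
      · have hxE : x ∉ E := (Finset.mem_sdiff.1 (hT2 hx2)).2
        rw [hSeq] at hx1
        rcases Finset.mem_union.1 hx1 with hx1 | hx1
        · exact ((hUmem x).1 (hC'U hx1)).1 hx3
        · exact hxE hx1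
  -- Step 3: conclude
  have hins : insert v (E ∩ A) = E ∩ A :=
    Finset.insert_eq_self.2 (Finset.mem_inter.2 ⟨hvE, hv⟩)
  rw [hins] at step1
  have hEA : E ∩ A = E := Finset.eq_of_subset_of_card_le
    (Finset.inter_subset_left) (by omega)
  exact ⟨fun x hx => (Finset.mem_inter.1 (show x ∈ E ∩ A by rw [hEA]; exact hx)).2, hvE⟩
end

section
/- Let k ≥ 3 be an integer, let F be a (3, 2k)-conditionally intersecting family of k-element subsets of [n], let A, B ∈ F be disjoint, and set U = [n] − (A ∪ B). Let ℓ be an integer with 2 ≤ ℓ ≤ k−2, let C ⊆ U with |C| = ℓ, and suppose F(C) is the full star on A with core v for some v ∈ A. Suppose further that there exists a (k−1)-element set P ⊆ U with C ⊆ P such that P is contained in some member of F. Then for every subset C' of C with |C'| = ℓ−1, the family F(C') is a star on A with core v, i.e., every member of F(C') is a subset of A containing v. -/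
lemma ci_triple {n k : ℕ} {F : Finset (Finset (Fin n))} (hci : CondIntersecting 3 (2 * k) F)
    {X Y Z : Finset (Fin n)} (hX : X ∈ F) (hY : Y ∈ F) (hZ : Z ∈ F)
    (hXY : X ≠ Y) (hXZ : X ≠ Z) (hYZ : Y ≠ Z)
    (hu : (X ∪ (Y ∪ Z)).card ≤ 2 * k) (hi : X ∩ (Y ∩ Z) = ∅) : False := by
  apply hci
  refine ⟨{X, Y, Z}, ?_, ?_, ?_, ?_⟩
  · intro D hD
    simp only [Finset.mem_insert, Finset.mem_singleton] at hD
    rcases hD with rfl | rfl | rfl <;> assumption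
  · exact Finset.card_eq_three.mpr ⟨X, Y, Z, hXY, hXZ, hYZ, rfl⟩
  · simpa using hu
  · simpa using hi

theorem stmt12 (n k : ℕ) (hk : 3 ≤ k)
    (F : Finset (Finset (Fin n))) (hunif : ∀ S ∈ F, S.card = k)
    (hci : CondIntersecting 3 (2 * k) F)
    (A B : Finset (Fin n)) (hA : A ∈ F) (hB : B ∈ F) (hAB : Disjoint A B)
    (ℓ : ℕ) (hℓ1 : 2 ≤ ℓ) (hℓ2 : ℓ ≤ k - 2)
    (C : Finset (Fin n)) (hCU : C ⊆ Finset.univ \ (A ∪ B)) (hCcard : C.card = ℓ)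
    (v : Fin n) (hv : v ∈ A)
    (hstar : FamC F (Finset.univ \ (A ∪ B)) C = starFam (k - ℓ) A v)
    (P : Finset (Fin n)) (hPU : P ⊆ Finset.univ \ (A ∪ B)) (hPcard : P.card = k - 1)
    (hCP : C ⊆ P) (hPF : ∃ S ∈ F, P ⊆ S) :
    ∀ C' ⊆ C, C'.card = ℓ - 1 →
      ∀ E ∈ FamC F (Finset.univ \ (A ∪ B)) C', E ⊆ A ∧ v ∈ E := by
  classical
  intro C' hC'C hC'card E hE
  set U : Finset (Fin n) := Finset.univ \ (A ∪ B) with hU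
  have hkl : ℓ + 2 ≤ k := by omega
  have hAcard : A.card = k := hunif A hA
  have hBcard : B.card = k := hunif B hB
  have hUmem : ∀ y : Fin n, y ∈ U ↔ y ∉ A ∧ y ∉ B := by
    intro y; simp [hU, not_or]
  -- full star gives members C ∪ T
  have hstar' : ∀ T : Finset (Fin n), T ⊆ A → T.card = k - ℓ → v ∈ T → C ∪ T ∈ F := by
    intro T hTA hTc hvT
    have hT : T ∈ starFam (k - ℓ) A v := by
      simp [starFam, Finset.mem_powersetCard, hTA, hTc, hvT]
    rw [← hstar] at hT
    simp only [FamC, Finset.mem_image, Finset.mem_filter] at hT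
    obtain ⟨S', ⟨hS'F, hS'U⟩, hS'T⟩ := hT
    have hCS' : C ⊆ S' := hS'U ▸ Finset.inter_subset_left
    have : C ∪ T = S' := by rw [← hS'T]; exact Finset.union_sdiff_of_subset hCS'
    rwa [this]
  -- the member S containing P, and its extra element x
  obtain ⟨S, hSF, hPS⟩ := hPF
  have hScard : S.card = k := hunif S hSF
  have hSPcard : (S \ P).card = 1 := by
    rw [Finset.card_sdiff_of_subset hPS, hScard, hPcard]; omega
  obtain ⟨x, hx⟩ := Finset.card_eq_one.mp hSPcard
  have hSeq : S = P ∪ {x} := by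
    rw [← hx, Finset.union_sdiff_of_subset hPS]
  -- handy elements
  have hPne : P.Nonempty := by rw [← Finset.card_pos, hPcard]; omega
  obtain ⟨p, hp⟩ := hPne
  have hpA : p ∉ A := ((hUmem p).mp (hPU hp)).1
  have hCne : C.Nonempty := by rw [← Finset.card_pos, hCcard]; omega
  obtain ⟨c, hc⟩ := hCne
  have hcA : c ∉ A := ((hUmem c).mp (hCU hc)).1
  have hcB : c ∉ B := ((hUmem c).mp (hCU hc)).2
  have hPCne : (P \ C).Nonempty := by
    rw [← Finset.card_pos, Finset.card_sdiff_of_subset hCP, hPcard, hCcard]; omega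
  obtain ⟨w, hw⟩ := hPCne
  have hwP : w ∈ P := (Finset.mem_sdiff.mp hw).1
  have hwC : w ∉ C := (Finset.mem_sdiff.mp hw).2
  have hwA : w ∉ A := ((hUmem w).mp (hPU hwP)).1
  -- Step: x = v
  have hxv : x = v := by
    by_contra hxv
    have hvAx : v ∈ A \ {x} := Finset.mem_sdiff.mpr ⟨hv, by simp [Ne.symm hxv]⟩
    obtain ⟨T, hvT, hTA', hTcard⟩ :=
      Finset.exists_subsuperset_card_eq (n := k - ℓ)
        (Finset.singleton_subset_iff.mpr hvAx)
        (by rw [Finset.card_singleton]; omega)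
        (by
          have h := Finset.le_card_sdiff ({x} : Finset (Fin n)) A
          rw [Finset.card_singleton] at h
          omega)
    have hTA : T ⊆ A := hTA'.trans (Finset.sdiff_subset)
    have hF1 : C ∪ T ∈ F := hstar' T hTA hTcard (hvT (Finset.mem_singleton_self v))
    refine ci_triple hci hA hSF hF1 ?_ ?_ ?_ ?_ ?_
    · intro h; exact hpA (h ▸ hPS hp)
    · intro h; exact hcA (h ▸ Finset.mem_union_left T hc)
    · intro h
      have : w ∈ C ∪ T := h ▸ hPS hwP
      rcases Finset.mem_union.mp this with h' | h'
      · exact hwC h'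
      · exact hwA (hTA h')
    · calc (A ∪ (S ∪ (C ∪ T))).card ≤ ((A ∪ P) ∪ {x}).card := by
            apply Finset.card_le_card
            intro a ha
            rcases Finset.mem_union.mp ha with h' | h'
            · exact Finset.mem_union_left _ (Finset.mem_union_left _ h')
            rcases Finset.mem_union.mp h' with h' | h'
            · rw [hSeq] at h'
              rcases Finset.mem_union.mp h' with h' | h'
              · exact Finset.mem_union_left _ (Finset.mem_union_right _ h')
              · exact Finset.mem_union_right _ h'
            rcases Finset.mem_union.mp h' with h' | h'
            · exact Finset.mem_union_left _ (Finset.mem_union_right _ (hCP h'))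
            · exact Finset.mem_union_left _ (Finset.mem_union_left _ (hTA h'))
      _ ≤ 2 * k := by
            have h1 := Finset.card_union_le (A ∪ P) ({x} : Finset (Fin n))
            have h2 := Finset.card_union_le A P
            simp only [Finset.card_singleton] at h1
            omega
    · ext a
      simp only [Finset.mem_inter, Finset.notMem_empty, iff_false, not_and]
      intro haA haS haF1
      have hax : a = x := by
        rw [hSeq] at haS
        rcases Finset.mem_union.mp haS with h' | h'
        · exact absurd haA ((hUmem a).mp (hPU h')).1
        · exact Finset.mem_singleton.mp h'
      rcases Finset.mem_union.mp haF1 with h' | h'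
      · exact ((hUmem a).mp (hCU h')).1 haA
      · exact (Finset.mem_sdiff.mp (hTA' h')).2 (by rw [hax]; exact Finset.mem_singleton_self x)
  -- now the member S₀ giving E
  simp only [FamC, Finset.mem_image, Finset.mem_filter] at hE
  obtain ⟨S₀, ⟨hS₀F, hS₀U⟩, hES₀⟩ := hE
  have hC'S₀ : C' ⊆ S₀ := hS₀U ▸ Finset.inter_subset_left
  have hS₀card : S₀.card = k := hunif S₀ hS₀F
  have hEcard : E.card = k - ℓ + 1 := by
    rw [← hES₀, Finset.card_sdiff_of_subset hC'S₀, hS₀card, hC'card]; omega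
  have hEAB : ∀ e ∈ E, e ∈ A ∨ e ∈ B := by
    intro e he
    by_contra h
    push_neg at h
    have heU : e ∈ U := (hUmem e).mpr h
    have heS₀ : e ∈ S₀ := by
      rw [← hES₀] at he; exact (Finset.mem_sdiff.mp he).1
    have : e ∈ C' := hS₀U ▸ Finset.mem_inter.mpr ⟨heS₀, heU⟩
    rw [← hES₀] at he
    exact (Finset.mem_sdiff.mp he).2 this
  have hC'ne : C'.Nonempty := by rw [← Finset.card_pos, hC'card]; omega
  obtain ⟨c', hc'⟩ := hC'ne
  have hc'S₀ : c' ∈ S₀ := hC'S₀ hc'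
  have hc'A : c' ∉ A := ((hUmem c').mp (hCU (hC'C hc'))).1
  have hc'B : c' ∉ B := ((hUmem c').mp (hCU (hC'C hc'))).2
  -- element u ∈ C \ C', not in S₀
  have hCC'ne : (C \ C').Nonempty := by
    rw [← Finset.card_pos, Finset.card_sdiff_of_subset hC'C, hCcard, hC'card]; omega
  obtain ⟨u, hu⟩ := hCC'ne
  have huC : u ∈ C := (Finset.mem_sdiff.mp hu).1
  have huC' : u ∉ C' := (Finset.mem_sdiff.mp hu).2
  have huS₀ : u ∉ S₀ := by
    intro h
    exact huC' (hS₀U ▸ Finset.mem_inter.mpr ⟨h, hCU huC⟩)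
  have hS₀sub : S₀ ⊆ C' ∪ E := by
    intro a ha
    by_cases h : a ∈ C'
    · exact Finset.mem_union_left _ h
    · exact Finset.mem_union_right _ (by rw [← hES₀]; exact Finset.mem_sdiff.mpr ⟨ha, h⟩)
  -- Step B : insert v (E ∩ A) is too big to fit in a (k-ℓ)-subset of A
  have hbig : k - ℓ + 1 ≤ (insert v (E ∩ A)).card := by
    by_contra h
    push_neg at h
    have hsubA : insert v (E ∩ A) ⊆ A :=
      Finset.insert_subset hv Finset.inter_subset_right
    obtain ⟨T, hT1, hTA, hTcard⟩ :=
      Finset.exists_subsuperset_card_eq (n := k - ℓ) hsubA (by omega) (by rw [hAcard]; omega)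
    have hvT : v ∈ T := hT1 (Finset.mem_insert_self v _)
    have hF1 : C ∪ T ∈ F := hstar' T hTA hTcard hvT
    refine ci_triple hci hB hF1 hS₀F ?_ ?_ ?_ ?_ ?_
    · intro h'; exact hcB (h' ▸ Finset.mem_union_left T hc)
    · intro h'; exact hc'B (h' ▸ hc'S₀)
    · intro h'
      exact huS₀ (h' ▸ Finset.mem_union_left T huC)
    · calc (B ∪ ((C ∪ T) ∪ S₀)).card ≤ (B ∪ (C ∪ T)).card := by
            apply Finset.card_le_card
            intro a ha
            rcases Finset.mem_union.mp ha with h' | h'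
            · exact Finset.mem_union_left _ h'
            rcases Finset.mem_union.mp h' with h' | h'
            · exact Finset.mem_union_right _ h'
            rcases Finset.mem_union.mp (hS₀sub h') with h'' | h''
            · exact Finset.mem_union_right _ (Finset.mem_union_left _ (hC'C h''))
            rcases hEAB a h'' with h3 | h3
            · exact Finset.mem_union_right _ (Finset.mem_union_right _
                (hT1 (Finset.mem_insert_of_mem (Finset.mem_inter.mpr ⟨h'', h3⟩))))
            · exact Finset.mem_union_left _ h3
      _ ≤ 2 * k := by
            have h1 := Finset.card_union_le B (C ∪ T)
            have h2 := Finset.card_union_le C T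
            omega
    · ext a
      simp only [Finset.mem_inter, Finset.notMem_empty, iff_false, not_and]
      intro haB haF1 _
      rcases Finset.mem_union.mp haF1 with h' | h'
      · exact ((hUmem a).mp (hCU h')).2 haB
      · exact (Finset.disjoint_left.mp hAB (hTA h')) haB
  -- conclude
  by_cases hvE : v ∈ E
  · have h1 : insert v (E ∩ A) = E ∩ A :=
      Finset.insert_eq_self.mpr (Finset.mem_inter.mpr ⟨hvE, hv⟩)
    rw [h1] at hbig
    have h2 : E ∩ A = E :=
      Finset.eq_of_subset_of_card_le Finset.inter_subset_left (by omega)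
    exact ⟨by rw [← h2]; exact Finset.inter_subset_right, hvE⟩
  · exfalso
    have hvEA : v ∉ E ∩ A := fun h => hvE (Finset.mem_inter.mp h).1
    rw [Finset.card_insert_of_notMem hvEA] at hbig
    have hEB : (E \ A).card ≤ 1 := by
      have := Finset.card_inter_add_card_sdiff E A
      omega
    refine ci_triple hci hA hSF hS₀F ?_ ?_ ?_ ?_ ?_
    · intro h; exact hpA (h ▸ hPS hp)
    · intro h; exact hc'A (h ▸ hc'S₀)
    · intro h
      exact huS₀ (h ▸ hPS (hCP huC))
    · calc (A ∪ (S ∪ S₀)).card ≤ ((A ∪ P) ∪ (E \ A)).card := by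
            apply Finset.card_le_card
            intro a ha
            rcases Finset.mem_union.mp ha with h' | h'
            · exact Finset.mem_union_left _ (Finset.mem_union_left _ h')
            rcases Finset.mem_union.mp h' with h' | h'
            · rw [hSeq, hxv] at h'
              rcases Finset.mem_union.mp h' with h' | h'
              · exact Finset.mem_union_left _ (Finset.mem_union_right _ h')
              · exact Finset.mem_union_left _ (Finset.mem_union_left _
                  (Finset.mem_singleton.mp h' ▸ hv))
            rcases Finset.mem_union.mp (hS₀sub h') with h'' | h''
            · exact Finset.mem_union_left _ (Finset.mem_union_right _ (hCP (hC'C h'')))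
            by_cases h3 : a ∈ A
            · exact Finset.mem_union_left _ (Finset.mem_union_left _ h3)
            · exact Finset.mem_union_right _ (Finset.mem_sdiff.mpr ⟨h'', h3⟩)
      _ ≤ 2 * k := by
            have h1 := Finset.card_union_le (A ∪ P) (E \ A)
            have h2 := Finset.card_union_le A P
            omega
    · ext a
      simp only [Finset.mem_inter, Finset.notMem_empty, iff_false, not_and]
      intro haA haS haS₀
      have hav : a = v := by
        rw [hSeq, hxv] at haS
        rcases Finset.mem_union.mp haS with h' | h'
        · exact absurd haA ((hUmem a).mp (hPU h')).1
        · exact Finset.mem_singleton.mp h'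
      subst hav
      rcases Finset.mem_union.mp (hS₀sub haS₀) with h' | h'
      · exact ((hUmem a).mp (hCU (hC'C h'))).1 haA
      · exact hvE h'
end

section
/- Let k ≥ 3 be an integer, let F be a (3, 2k)-conditionally intersecting family of k-element subsets of [n], let A, B ∈ F be disjoint, and set U = [n] − (A ∪ B). Let i be an integer with 2 ≤ i and 2i ≤ k+1. Then |F_i| ≤ w_i + k_i·b_i − n_i, where F_i = {F ∈ F : |F ∩ (A ∪ B)| = i}, w_i = binomial(k−1, i−1)·binomial(n−2k, k−i), k_i = binomial(2k, i) − binomial(k−1, i−1) + 1, n_i is the number of non-perfect (k−i)-element subsets of U, and b_i is the number of (k−i)-element subsets of U that are non-perfect and contained in no perfect (k−i+1)-element subset of U. -/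
section Aux

variable {n k : ℕ} {F : Finset (Finset (Fin n))} {A B U C D E E' E₁ R S T : Finset (Fin n)}

lemma mem_FamC : E ∈ FamC F U C ↔ ∃ S, (S ∈ F ∧ S ∩ U = C) ∧ S \ C = E := by
  simp [FamC, Finset.mem_image, Finset.mem_filter]

lemma mem_starFam {m : ℕ} {v : Fin n} :
    E ∈ starFam m A v ↔ E ⊆ A ∧ E.card = m ∧ v ∈ E := by
  simp [starFam, Finset.mem_powersetCard, and_assoc]

lemma starFam_card {m : ℕ} {v : Fin n} (hv : v ∈ A) (hm : 1 ≤ m) :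
    (starFam m A v).card = (A.card - 1).choose (m - 1) := by
  have himg : starFam m A v = ((A.erase v).powersetCard (m - 1)).image (insert v) := by
    ext E
    simp only [mem_starFam, Finset.mem_image, Finset.mem_powersetCard]
    constructor
    · rintro ⟨hEA, hc, hvE⟩
      refine ⟨E.erase v, ⟨fun x hx => ?_, ?_⟩, Finset.insert_erase hvE⟩
      · exact Finset.mem_erase.2 ⟨(Finset.mem_erase.1 hx).1, hEA (Finset.mem_erase.1 hx).2⟩
      · rw [Finset.card_erase_of_mem hvE, hc]
    · rintro ⟨G, ⟨hGA, hGc⟩, rfl⟩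
      have hvG : v ∉ G := fun h => (Finset.mem_erase.1 (hGA h)).1 rfl
      refine ⟨?_, ?_, Finset.mem_insert_self _ _⟩
      · exact Finset.insert_subset hv (hGA.trans (Finset.erase_subset _ _))
      · rw [Finset.card_insert_of_notMem hvG, hGc]; omega
  rw [himg, Finset.card_image_of_injOn, Finset.card_powersetCard,
    Finset.card_erase_of_mem hv]
  intro G hG G' hG' h
  simp only [Finset.mem_coe, Finset.mem_powersetCard] at hG hG'
  have hvG : v ∉ G := fun hh => (Finset.mem_erase.1 (hG.1 hh)).1 rfl
  have hvG' : v ∉ G' := fun hh => (Finset.mem_erase.1 (hG'.1 hh)).1 rfl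
  rw [← Finset.erase_insert hvG, h, Finset.erase_insert hvG']

lemma FamC_unpack (hunif : ∀ S ∈ F, S.card = k) (hE : E ∈ FamC F U C) :
    ∃ S ∈ F, S ∩ U = C ∧ C ⊆ S ∧ S = E ∪ C ∧ E = S \ C ∧ E.card + C.card = k := by
  obtain ⟨S, ⟨hSF, hSU⟩, hSE⟩ := mem_FamC.1 hE
  have hCS : C ⊆ S := hSU ▸ Finset.inter_subset_left
  have hcard : C.card ≤ S.card := Finset.card_le_card hCS
  refine ⟨S, hSF, hSU, hCS, ?_, hSE.symm, ?_⟩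
  · rw [← hSE]; exact (Finset.sdiff_union_of_subset hCS).symm
  · rw [← hSE, Finset.card_sdiff_of_subset hCS, hunif S hSF]
    rw [hunif S hSF] at hcard; omega

lemma FamC_subset_I (hU : U = Finset.univ \ (A ∪ B)) (hE : E ∈ FamC F U C) :
    E ⊆ A ∪ B := by
  obtain ⟨S, ⟨hSF, hSU⟩, hSE⟩ := mem_FamC.1 hE
  intro y hy
  rw [← hSE] at hy
  by_contra hyAB
  have hyU : y ∈ U := by rw [hU]; simp [hyAB]
  have : y ∈ C := by rw [← hSU]; exact Finset.mem_inter.2 ⟨(Finset.mem_sdiff.1 hy).1, hyU⟩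
  exact (Finset.mem_sdiff.1 hy).2 this

/-- Master lemma: a triple `{C ∪ E, D ∪ E₁, R}` gives a contradiction. -/
lemma masterTriple (hci : CondIntersecting 3 (2 * k) F)
    (hCD : C ⊆ D) (hCne : C.Nonempty) (hCU : C ⊆ U) (hDU : D ⊆ U)
    (hE : E ∈ FamC F U C) (hE₁ : E₁ ∈ FamC F U D)
    (hR : R ∈ F) (hUR : ∀ x ∈ R, x ∉ U)
    (hne : C = D → E ≠ E₁)
    (hcard : D.card + (((E ∪ E₁) \ R).card + R.card) ≤ 2 * k)
    (hint : E ∩ E₁ ∩ R = ∅) : False := by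
  obtain ⟨S, ⟨hSF, hSU⟩, hSE⟩ := mem_FamC.1 hE
  obtain ⟨S₁, ⟨h1F, h1U⟩, h1E⟩ := mem_FamC.1 hE₁
  have hCS : C ⊆ S := hSU ▸ Finset.inter_subset_left
  have hDS₁ : D ⊆ S₁ := h1U ▸ Finset.inter_subset_left
  have hSeq : S = E ∪ C := by rw [← hSE]; exact (Finset.sdiff_union_of_subset hCS).symm
  have h1eq : S₁ = E₁ ∪ D := by rw [← h1E]; exact (Finset.sdiff_union_of_subset hDS₁).symm
  obtain ⟨c, hc⟩ := hCne
  have hSS₁ : S ≠ S₁ := by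
    intro hss
    have hCDeq : C = D := by rw [← hSU, ← h1U, hss]
    exact hne hCDeq (by rw [← hSE, ← h1E, hss, hCDeq])
  have hSR : S ≠ R := by
    intro hss; exact hUR c (hss ▸ hCS hc) (hCU hc)
  have hS₁R : S₁ ≠ R := by
    intro hss; exact hUR c (hss ▸ hDS₁ (hCD hc)) (hCU hc)
  apply hci
  refine ⟨{S, S₁, R}, ?_, ?_, ?_, ?_⟩
  · intro Y hY
    simp only [Finset.mem_insert, Finset.mem_singleton] at hY
    rcases hY with rfl | rfl | rfl <;> assumption
  · rw [Finset.card_insert_of_notMem (by simp [hSS₁, hSR]),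
      Finset.card_insert_of_notMem (by simp [hS₁R]), Finset.card_singleton]
  · have hsup : ({S, S₁, R} : Finset (Finset (Fin n))).sup id = S ∪ (S₁ ∪ R) := by
      simp [Finset.sup_insert, Finset.sup_singleton]
    rw [hsup]
    have hsub : S ∪ (S₁ ∪ R) ⊆ D ∪ (((E ∪ E₁) \ R) ∪ R) := by
      intro y hy
      simp only [Finset.mem_union] at hy ⊢
      by_cases hyR : y ∈ R
      · tauto
      · rcases hy with hy | hy | hy
        · rw [hSeq] at hy
          rcases Finset.mem_union.1 hy with hy | hy
          · exact Or.inr (Or.inl (Finset.mem_sdiff.2 ⟨Finset.mem_union_left _ hy, hyR⟩))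
          · exact Or.inl (hCD hy)
        · rw [h1eq] at hy
          rcases Finset.mem_union.1 hy with hy | hy
          · exact Or.inr (Or.inl (Finset.mem_sdiff.2 ⟨Finset.mem_union_right _ hy, hyR⟩))
          · exact Or.inl hy
        · exact absurd hy hyR
    calc (S ∪ (S₁ ∪ R)).card ≤ (D ∪ (((E ∪ E₁) \ R) ∪ R)).card := Finset.card_le_card hsub
      _ ≤ D.card + (((E ∪ E₁) \ R) ∪ R).card := Finset.card_union_le _ _
      _ ≤ D.card + (((E ∪ E₁) \ R).card + R.card) :=
          Nat.add_le_add_left (Finset.card_union_le _ _) _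
      _ ≤ 2 * k := hcard
  · have hinf : ({S, S₁, R} : Finset (Finset (Fin n))).inf id = S ∩ (S₁ ∩ R) := by
      simp [Finset.inf_insert, Finset.inf_singleton]
    rw [hinf]
    apply Finset.eq_empty_of_forall_notMem
    intro y hy
    simp only [Finset.mem_inter] at hy
    obtain ⟨hyS, hyS₁, hyR⟩ := hy
    have hyU : y ∉ U := hUR y hyR
    have hyE : y ∈ E := by
      rw [hSeq] at hyS
      rcases Finset.mem_union.1 hyS with h | h
      · exact h
      · exact absurd (hCU h) hyU
    have hyE₁ : y ∈ E₁ := by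
      rw [h1eq] at hyS₁
      rcases Finset.mem_union.1 hyS₁ with h | h
      · exact h
      · exact absurd (hDU h) hyU
    have : y ∈ E ∩ E₁ ∩ R := by simp [hyE, hyE₁, hyR]
    rw [hint] at this
    exact absurd this (Finset.notMem_empty y)

/-- Master lemma with a set `T = insert t D`. -/
lemma masterTripleT (hci : CondIntersecting 3 (2 * k) F)
    (hCD : C ⊆ D) (hCneD : C ≠ D) (hCne : C.Nonempty) (hCU : C ⊆ U) (hDU : D ⊆ U)
    (hE : E ∈ FamC F U C) {t : Fin n} (hT : T ∈ F) (hTD : T = insert t D)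
    (hR : R ∈ F) (hUR : ∀ x ∈ R, x ∉ U)
    (hcard : D.card + (((E ∪ {t}) \ R).card + R.card) ≤ 2 * k)
    (hint : ¬ (t ∈ E ∧ t ∈ R)) : False := by
  obtain ⟨S, ⟨hSF, hSU⟩, hSE⟩ := mem_FamC.1 hE
  have hCS : C ⊆ S := hSU ▸ Finset.inter_subset_left
  have hSeq : S = E ∪ C := by rw [← hSE]; exact (Finset.sdiff_union_of_subset hCS).symm
  obtain ⟨c, hc⟩ := hCne
  obtain ⟨x, hxD, hxC⟩ := Finset.exists_of_ssubset (hCD.ssubset_of_ne hCneD)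
  have hxT : x ∈ T := by rw [hTD]; exact Finset.mem_insert_of_mem hxD
  have hxS : x ∉ S := by
    intro h
    exact hxC (by rw [← hSU]; exact Finset.mem_inter.2 ⟨h, hDU hxD⟩)
  have hST : S ≠ T := fun h => hxS (h ▸ hxT)
  have hSR : S ≠ R := fun h => hUR c (h ▸ hCS hc) (hCU hc)
  have hTR : T ≠ R := fun h => hUR x (h ▸ hxT) (hDU hxD)
  apply hci
  refine ⟨{S, T, R}, ?_, ?_, ?_, ?_⟩
  · intro Y hY
    simp only [Finset.mem_insert, Finset.mem_singleton] at hY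
    rcases hY with rfl | rfl | rfl <;> assumption
  · rw [Finset.card_insert_of_notMem (by simp [hST, hSR]),
      Finset.card_insert_of_notMem (by simp [hTR]), Finset.card_singleton]
  · have hsup : ({S, T, R} : Finset (Finset (Fin n))).sup id = S ∪ (T ∪ R) := by
      simp [Finset.sup_insert, Finset.sup_singleton]
    rw [hsup]
    have hsub : S ∪ (T ∪ R) ⊆ D ∪ (((E ∪ {t}) \ R) ∪ R) := by
      intro y hy
      simp only [Finset.mem_union] at hy ⊢
      by_cases hyR : y ∈ R
      · tauto
      · rcases hy with hy | hy | hy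
        · rw [hSeq] at hy
          rcases Finset.mem_union.1 hy with hy | hy
          · exact Or.inr (Or.inl (Finset.mem_sdiff.2 ⟨Finset.mem_union_left _ hy, hyR⟩))
          · exact Or.inl (hCD hy)
        · rw [hTD] at hy
          rcases Finset.mem_insert.1 hy with rfl | hy
          · exact Or.inr (Or.inl (Finset.mem_sdiff.2
              ⟨Finset.mem_union_right _ (Finset.mem_singleton_self y), hyR⟩))
          · exact Or.inl hy
        · exact absurd hy hyR
    calc (S ∪ (T ∪ R)).card ≤ (D ∪ (((E ∪ {t}) \ R) ∪ R)).card := Finset.card_le_card hsub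
      _ ≤ D.card + (((E ∪ {t}) \ R) ∪ R).card := Finset.card_union_le _ _
      _ ≤ D.card + (((E ∪ {t}) \ R).card + R.card) :=
          Nat.add_le_add_left (Finset.card_union_le _ _) _
      _ ≤ 2 * k := hcard
  · have hinf : ({S, T, R} : Finset (Finset (Fin n))).inf id = S ∩ (T ∩ R) := by
      simp [Finset.inf_insert, Finset.inf_singleton]
    rw [hinf]
    apply Finset.eq_empty_of_forall_notMem
    intro y hy
    simp only [Finset.mem_inter] at hy
    obtain ⟨hyS, hyT, hyR⟩ := hy
    have hyU : y ∉ U := hUR y hyR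
    have hyE : y ∈ E := by
      rw [hSeq] at hyS
      rcases Finset.mem_union.1 hyS with h | h
      · exact h
      · exact absurd (hCU h) hyU
    have hyt : y = t := by
      rw [hTD] at hyT
      rcases Finset.mem_insert.1 hyT with h | h
      · exact h
      · exact absurd (hDU h) hyU
    exact hint ⟨hyt ▸ hyE, hyt ▸ hyR⟩


/-- Core lemma for `i ≥ 3`: if `F(insert x C)` is a full star on `A` with core `v`,
then `F(C)` is contained in the star on `A` with core `v`. -/
lemma subset_star (hunif : ∀ S ∈ F, S.card = k) (hci : CondIntersecting 3 (2 * k) F)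
    (hU : U = Finset.univ \ (A ∪ B)) (hA : A ∈ F) (hB : B ∈ F) (hAB : Disjoint A B)
    (hAk : A.card = k) (hBk : B.card = k)
    {i : ℕ} (hi1 : 3 ≤ i) (hi2 : 2 * i ≤ k + 1)
    (hCU : C ⊆ U) (hCc : C.card = k - i)
    {x : Fin n} (hxU : x ∈ U) (hxC : x ∉ C)
    {v : Fin n} (hv : v ∈ A)
    (hstar : FamC F U (insert x C) = starFam (i - 1) A v) :
    FamC F U C ⊆ starFam i A v := by
  have hki : 2 * i ≤ k + 1 := hi2
  have hik : i ≤ k := by omega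
  have hUA : ∀ y ∈ A, y ∉ U := by
    intro y hy hyU; rw [hU] at hyU; exact (Finset.mem_sdiff.1 hyU).2 (Finset.mem_union_left _ hy)
  have hUB : ∀ y ∈ B, y ∉ U := by
    intro y hy hyU; rw [hU] at hyU; exact (Finset.mem_sdiff.1 hyU).2 (Finset.mem_union_right _ hy)
  have hCne : C.Nonempty := by
    rw [← Finset.card_pos, hCc]; omega
  have hCD : C ⊆ insert x C := Finset.subset_insert _ _
  have hDU : insert x C ⊆ U := Finset.insert_subset hxU hCU
  have hDc : (insert x C).card = k - i + 1 := by
    rw [Finset.card_insert_of_notMem hxC, hCc]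
  have hCneD : C ≠ insert x C := fun h => hxC (h ▸ Finset.mem_insert_self x C)
  have hvA : v ∉ B := Finset.disjoint_left.1 hAB hv
  -- star elements of F(insert x C)
  have hmk : ∀ G : Finset (Fin n), G ⊆ A.erase v → G.card = i - 2 →
      insert v G ∈ FamC F U (insert x C) ∧ insert v G ⊆ A ∧ (insert v G).card = i - 1
        ∧ v ∈ insert v G := by
    intro G hGA hGc
    have hvG : v ∉ G := fun h => (Finset.mem_erase.1 (hGA h)).1 rfl
    have hsubA : insert v G ⊆ A := Finset.insert_subset hv (hGA.trans (Finset.erase_subset _ _))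
    have hcard : (insert v G).card = i - 1 := by
      rw [Finset.card_insert_of_notMem hvG, hGc]; omega
    exact ⟨hstar ▸ mem_starFam.2 ⟨hsubA, hcard, Finset.mem_insert_self _ _⟩,
      hsubA, hcard, Finset.mem_insert_self _ _⟩
  intro E hE
  have hEI : E ⊆ A ∪ B := FamC_subset_I hU hE
  obtain ⟨S, hSF, hSU, hCS, hSeq, hSE, hEck⟩ := FamC_unpack hunif hE
  have hEc : E.card = i := by omega
  -- Step 1: E ∩ A is nonempty
  have hEA : (E ∩ A).Nonempty := by
    by_contra h
    have hEAe : E ∩ A = ∅ := Finset.not_nonempty_iff_eq_empty.1 h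
    have hEB : E ⊆ B := by
      intro y hy
      rcases Finset.mem_union.1 (hEI hy) with h' | h'
      · exact absurd (Finset.mem_inter.2 ⟨hy, h'⟩) (by simp [hEAe])
      · exact h'
    obtain ⟨G₀, hG₀A, hG₀c⟩ := Finset.exists_subset_card_eq
      (show i - 2 ≤ (A.erase v).card by rw [Finset.card_erase_of_mem hv, hAk]; omega)
    obtain ⟨hmem, hsubA, hcard, hvmem⟩ := hmk G₀ hG₀A hG₀c
    refine masterTriple hci hCD hCne hCU hDU hE hmem hB hUB (fun h => absurd h hCneD) ?_ ?_
    · have h1 : (E ∪ insert v G₀) \ B ⊆ insert v G₀ := by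
        intro y hy
        obtain ⟨hy1, hy2⟩ := Finset.mem_sdiff.1 hy
        rcases Finset.mem_union.1 hy1 with h' | h'
        · exact absurd (hEB h') hy2
        · exact h'
      have h2 : ((E ∪ insert v G₀) \ B).card ≤ i - 1 := by
        calc ((E ∪ insert v G₀) \ B).card ≤ (insert v G₀).card := Finset.card_le_card h1
          _ = i - 1 := hcard
      rw [hDc, hBk]; omega
    · apply Finset.eq_empty_of_forall_notMem
      intro y hy
      simp only [Finset.mem_inter] at hy
      exact Finset.disjoint_left.1 hAB (hsubA hy.1.2) hy.2
  -- Step 2: v ∈ E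
  have hvE : v ∈ E := by
    by_contra hvE
    have hsd : i - 2 ≤ ((A.erase v) \ E).card := by
      have := Finset.le_card_sdiff E (A.erase v)
      rw [Finset.card_erase_of_mem hv, hAk, hEc] at this
      omega
    obtain ⟨G, hGsub, hGc⟩ := Finset.exists_subset_card_eq hsd
    have hGA : G ⊆ A.erase v := hGsub.trans (Finset.sdiff_subset)
    obtain ⟨hmem, hsubA, hcard, hvmem⟩ := hmk G hGA hGc
    refine masterTriple hci hCD hCne hCU hDU hE hmem hA hUA (fun h => absurd h hCneD) ?_ ?_
    · have h1 : (E ∪ insert v G) \ A ⊆ E \ A := by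
        intro y hy
        obtain ⟨hy1, hy2⟩ := Finset.mem_sdiff.1 hy
        rcases Finset.mem_union.1 hy1 with h' | h'
        · exact Finset.mem_sdiff.2 ⟨h', hy2⟩
        · exact absurd (hsubA h') hy2
      have h2 : (E ∩ A).card + (E \ A).card = i := by
        rw [Finset.card_inter_add_card_sdiff, hEc]
      have h3 : 1 ≤ (E ∩ A).card := Finset.card_pos.2 hEA
      have h4 : ((E ∪ insert v G) \ A).card ≤ i - 1 := by
        calc ((E ∪ insert v G) \ A).card ≤ (E \ A).card := Finset.card_le_card h1
          _ ≤ i - 1 := by omega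
      rw [hDc, hAk]; omega
    · apply Finset.eq_empty_of_forall_notMem
      intro y hy
      simp only [Finset.mem_inter] at hy
      obtain ⟨⟨hy1, hy2⟩, _⟩ := hy
      rcases Finset.mem_insert.1 hy2 with rfl | h'
      · exact hvE hy1
      · exact (Finset.mem_sdiff.1 (hGsub h')).2 hy1
  -- Step 3: E ⊆ A
  have hEsubA : E ⊆ A := by
    by_contra hEsubA
    have hlt : (E ∩ A).card < i := by
      rcases lt_or_eq_of_le (le_trans (Finset.card_le_card (Finset.inter_subset_left : E ∩ A ⊆ E)) (le_of_eq hEc)) with h | h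
      · exact h
      · exfalso
        apply hEsubA
        have : E ∩ A = E := Finset.eq_of_subset_of_card_le Finset.inter_subset_left (by omega)
        exact Finset.inter_eq_left.1 this
    obtain ⟨E₁, hsubE₁, hE₁A, hE₁c⟩ := Finset.exists_subsuperset_card_eq (n := i - 1)
      (Finset.inter_subset_right : E ∩ A ⊆ A) (by omega) (by rw [hAk]; omega)
    have hvE₁ : v ∈ E₁ := hsubE₁ (Finset.mem_inter.2 ⟨hvE, hv⟩)
    have hE₁mem : E₁ ∈ FamC F U (insert x C) :=
      hstar ▸ mem_starFam.2 ⟨hE₁A, hE₁c, hvE₁⟩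
    refine masterTriple hci hCD hCne hCU hDU hE hE₁mem hB hUB (fun h => absurd h hCneD) ?_ ?_
    · have h1 : (E ∪ E₁) \ B ⊆ E₁ := by
        intro y hy
        obtain ⟨hy1, hy2⟩ := Finset.mem_sdiff.1 hy
        rcases Finset.mem_union.1 hy1 with h' | h'
        · rcases Finset.mem_union.1 (hEI h') with h'' | h''
          · exact hsubE₁ (Finset.mem_inter.2 ⟨h', h''⟩)
          · exact absurd h'' hy2
        · exact h'
      have h2 : ((E ∪ E₁) \ B).card ≤ i - 1 := by
        calc ((E ∪ E₁) \ B).card ≤ E₁.card := Finset.card_le_card h1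
          _ = i - 1 := hE₁c
      rw [hDc, hBk]; omega
    · apply Finset.eq_empty_of_forall_notMem
      intro y hy
      simp only [Finset.mem_inter] at hy
      exact Finset.disjoint_left.1 hAB (hE₁A hy.1.2) hy.2
  exact mem_starFam.2 ⟨hEsubA, hEc, hvE⟩


lemma mixed_repr (hk : 3 ≤ k) (hunif : ∀ S ∈ F, S.card = k) (hAB : Disjoint A B)
    (hCc : C.card = k - 2) (hE : E ∈ FamC F U C)
    (hEA : (E ∩ A).Nonempty) (hEB : (E ∩ B).Nonempty) :
    ∃ a b, a ∈ A ∧ b ∈ B ∧ E = {a, b} ∧ E ∩ A = {a} ∧ E ∩ B = {b} := by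
  obtain ⟨S, hSF, hSU, hCS, hSeq, hSE, hEck⟩ := FamC_unpack hunif hE
  have hEc : E.card = 2 := by omega
  obtain ⟨a, ha⟩ := hEA
  obtain ⟨b, hb⟩ := hEB
  obtain ⟨haE, haA⟩ := Finset.mem_inter.1 ha
  obtain ⟨hbE, hbB⟩ := Finset.mem_inter.1 hb
  have hab : a ≠ b := fun h => Finset.disjoint_left.1 hAB haA (h ▸ hbB)
  have hEeq : E = {a, b} := by
    refine (Finset.eq_of_subset_of_card_le ?_ ?_).symm
    · intro y hy
      rcases Finset.mem_insert.1 hy with rfl | hy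
      · exact haE
      · exact Finset.mem_singleton.1 hy ▸ hbE
    · rw [hEc, Finset.card_pair hab]
  refine ⟨a, b, haA, hbB, hEeq, ?_, ?_⟩
  · ext y
    simp only [Finset.mem_inter, hEeq, Finset.mem_insert, Finset.mem_singleton]
    constructor
    · rintro ⟨rfl | rfl, hyA⟩
      · rfl
      · exact absurd hyA (Finset.disjoint_right.1 hAB hbB)
    · rintro rfl; exact ⟨Or.inl rfl, haA⟩
  · ext y
    simp only [Finset.mem_inter, hEeq, Finset.mem_insert, Finset.mem_singleton]
    constructor
    · rintro ⟨rfl | rfl, hyB⟩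
      · exact absurd hyB (Finset.disjoint_left.1 hAB haA)
      · rfl
    · rintro rfl; exact ⟨Or.inr rfl, hbB⟩

lemma AB_conflict (hk : 3 ≤ k) (hunif : ∀ S ∈ F, S.card = k)
    (hci : CondIntersecting 3 (2 * k) F)
    (hU : U = Finset.univ \ (A ∪ B)) (hA : A ∈ F) (hAB : Disjoint A B)
    (hAk : A.card = k)
    (hCU : C ⊆ U) (hCc : C.card = k - 2)
    (hE : E ∈ FamC F U C) (hE' : E' ∈ FamC F U C)
    (hEA : E ⊆ A) (hE'B : E' ⊆ B) : False := by
  have hUA : ∀ y ∈ A, y ∉ U := by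
    intro y hy hyU; rw [hU] at hyU; exact (Finset.mem_sdiff.1 hyU).2 (Finset.mem_union_left _ hy)
  have hCne : C.Nonempty := by rw [← Finset.card_pos, hCc]; omega
  obtain ⟨S, hSF, hSU, hCS, hSeq, hSE, hEck⟩ := FamC_unpack hunif hE
  have hEc : E.card = 2 := by omega
  obtain ⟨S', hS'F, hS'U, hCS', hS'eq, hS'E, hE'ck⟩ := FamC_unpack hunif hE'
  have hE'c : E'.card = 2 := by omega
  have hEne : E.Nonempty := by rw [← Finset.card_pos, hEc]; omega
  obtain ⟨a, haE⟩ := hEne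
  have hEE' : E ≠ E' := fun h =>
    Finset.disjoint_left.1 hAB (hEA haE) (hE'B (h ▸ haE))
  refine masterTriple hci (Finset.Subset.refl C) hCne hCU hCU hE hE' hA hUA
    (fun _ => hEE') ?_ ?_
  · have h1 : (E ∪ E') \ A ⊆ E' := by
      intro y hy
      obtain ⟨hy1, hy2⟩ := Finset.mem_sdiff.1 hy
      rcases Finset.mem_union.1 hy1 with h' | h'
      · exact absurd (hEA h') hy2
      · exact h'
    have h2 : ((E ∪ E') \ A).card ≤ 2 := le_trans (Finset.card_le_card h1) (le_of_eq hE'c)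
    rw [hAk, hCc]; omega
  · apply Finset.eq_empty_of_forall_notMem
    intro y hy
    simp only [Finset.mem_inter] at hy
    exact Finset.disjoint_left.1 hAB (hEA hy.1.1) (hE'B hy.1.2)

lemma mixed_conflict (hk : 3 ≤ k) (hunif : ∀ S ∈ F, S.card = k)
    (hci : CondIntersecting 3 (2 * k) F)
    (hU : U = Finset.univ \ (A ∪ B)) (hA : A ∈ F) (hB : B ∈ F) (hAB : Disjoint A B)
    (hAk : A.card = k) (hBk : B.card = k)
    (hCU : C ⊆ U) (hCc : C.card = k - 2)
    (hE : E ∈ FamC F U C) (hE' : E' ∈ FamC F U C)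
    (hEA : (E ∩ A).Nonempty) (hEB : (E ∩ B).Nonempty) (hE'A : E' ⊆ A) : False := by
  have hUA : ∀ y ∈ A, y ∉ U := by
    intro y hy hyU; rw [hU] at hyU; exact (Finset.mem_sdiff.1 hyU).2 (Finset.mem_union_left _ hy)
  have hUB : ∀ y ∈ B, y ∉ U := by
    intro y hy hyU; rw [hU] at hyU; exact (Finset.mem_sdiff.1 hyU).2 (Finset.mem_union_right _ hy)
  have hCne : C.Nonempty := by rw [← Finset.card_pos, hCc]; omega
  obtain ⟨a, b, haA, hbB, hEeq, hEiA, hEiB⟩ := mixed_repr hk hunif hAB hCc hE hEA hEB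
  obtain ⟨S', hS'F, hS'U, hCS', hS'eq, hS'E, hE'ck⟩ := FamC_unpack hunif hE'
  have hE'c : E'.card = 2 := by omega
  have hbA : b ∉ A := Finset.disjoint_right.1 hAB hbB
  have hEE' : E ≠ E' := by
    intro h
    exact hbA (hE'A (h ▸ (hEeq ▸ Finset.mem_insert_of_mem (Finset.mem_singleton_self b))))
  have haE' : a ∈ E' := by
    by_contra haE'
    refine masterTriple hci (Finset.Subset.refl C) hCne hCU hCU hE hE' hA hUA
      (fun _ => hEE') ?_ ?_
    · have h1 : (E ∪ E') \ A ⊆ {b} := by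
        intro y hy
        obtain ⟨hy1, hy2⟩ := Finset.mem_sdiff.1 hy
        rcases Finset.mem_union.1 hy1 with h' | h'
        · rw [hEeq] at h'
          rcases Finset.mem_insert.1 h' with rfl | h'
          · exact absurd haA hy2
          · exact h'
        · exact absurd (hE'A h') hy2
      have h2 : ((E ∪ E') \ A).card ≤ 1 :=
        le_trans (Finset.card_le_card h1) (le_of_eq (Finset.card_singleton b))
      rw [hAk, hCc]; omega
    · apply Finset.eq_empty_of_forall_notMem
      intro y hy
      simp only [Finset.mem_inter] at hy
      obtain ⟨⟨hy1, hy2⟩, hy3⟩ := hy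
      have : y ∈ E ∩ A := Finset.mem_inter.2 ⟨hy1, hy3⟩
      rw [hEiA, Finset.mem_singleton] at this
      exact haE' (this ▸ hy2)
  refine masterTriple hci (Finset.Subset.refl C) hCne hCU hCU hE hE' hB hUB
    (fun _ => hEE') ?_ ?_
  · have h1 : (E ∪ E') \ B ⊆ E' := by
      intro y hy
      obtain ⟨hy1, hy2⟩ := Finset.mem_sdiff.1 hy
      rcases Finset.mem_union.1 hy1 with h' | h'
      · rw [hEeq] at h'
        rcases Finset.mem_insert.1 h' with rfl | h'
        · exact haE'
        · exact absurd (Finset.mem_singleton.1 h' ▸ hbB) hy2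
      · exact h'
    have h2 : ((E ∪ E') \ B).card ≤ 2 := le_trans (Finset.card_le_card h1) (le_of_eq hE'c)
    rw [hBk, hCc]; omega
  · apply Finset.eq_empty_of_forall_notMem
    intro y hy
    simp only [Finset.mem_inter] at hy
    exact Finset.disjoint_left.1 hAB (hE'A hy.1.2) hy.2

lemma mixed_unique (hk : 3 ≤ k) (hunif : ∀ S ∈ F, S.card = k)
    (hci : CondIntersecting 3 (2 * k) F)
    (hU : U = Finset.univ \ (A ∪ B)) (hA : A ∈ F) (hB : B ∈ F) (hAB : Disjoint A B)
    (hAk : A.card = k) (hBk : B.card = k)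
    (hCU : C ⊆ U) (hCc : C.card = k - 2)
    (hE : E ∈ FamC F U C) (hE' : E' ∈ FamC F U C)
    (hEA : (E ∩ A).Nonempty) (hEB : (E ∩ B).Nonempty)
    (hE'A : (E' ∩ A).Nonempty) (hE'B : (E' ∩ B).Nonempty) : E = E' := by
  have hUA : ∀ y ∈ A, y ∉ U := by
    intro y hy hyU; rw [hU] at hyU; exact (Finset.mem_sdiff.1 hyU).2 (Finset.mem_union_left _ hy)
  have hUB : ∀ y ∈ B, y ∉ U := by
    intro y hy hyU; rw [hU] at hyU; exact (Finset.mem_sdiff.1 hyU).2 (Finset.mem_union_right _ hy)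
  have hCne : C.Nonempty := by rw [← Finset.card_pos, hCc]; omega
  obtain ⟨a, b, haA, hbB, hEeq, hEiA, hEiB⟩ := mixed_repr hk hunif hAB hCc hE hEA hEB
  obtain ⟨a', b', ha'A, hb'B, hE'eq, hE'iA, hE'iB⟩ := mixed_repr hk hunif hAB hCc hE' hE'A hE'B
  by_contra hne
  have ha : a = a' := by
    by_contra hne'
    refine masterTriple hci (Finset.Subset.refl C) hCne hCU hCU hE hE' hA hUA
      (fun _ => hne) ?_ ?_
    · have h1 : (E ∪ E') \ A ⊆ {b, b'} := by
        intro y hy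
        obtain ⟨hy1, hy2⟩ := Finset.mem_sdiff.1 hy
        rcases Finset.mem_union.1 hy1 with h' | h'
        · rw [hEeq] at h'
          rcases Finset.mem_insert.1 h' with rfl | h'
          · exact absurd haA hy2
          · rw [Finset.mem_singleton.1 h']; exact Finset.mem_insert_self b {b'}
        · rw [hE'eq] at h'
          rcases Finset.mem_insert.1 h' with rfl | h'
          · exact absurd ha'A hy2
          · rw [Finset.mem_singleton.1 h']
            exact Finset.mem_insert_of_mem (Finset.mem_singleton_self _)
      have hbb : ({b, b'} : Finset (Fin n)).card ≤ 2 := by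
        have := Finset.card_insert_le b ({b'} : Finset (Fin n))
        simpa using this
      have h2 : ((E ∪ E') \ A).card ≤ 2 := le_trans (Finset.card_le_card h1) hbb
      rw [hAk, hCc]; omega
    · apply Finset.eq_empty_of_forall_notMem
      intro y hy
      simp only [Finset.mem_inter] at hy
      obtain ⟨⟨hy1, hy2⟩, hy3⟩ := hy
      have h1 : y ∈ E ∩ A := Finset.mem_inter.2 ⟨hy1, hy3⟩
      have h2 : y ∈ E' ∩ A := Finset.mem_inter.2 ⟨hy2, hy3⟩
      rw [hEiA, Finset.mem_singleton] at h1
      rw [hE'iA, Finset.mem_singleton] at h2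
      exact hne' (h1 ▸ h2)
  have hb : b = b' := by
    by_contra hne'
    refine masterTriple hci (Finset.Subset.refl C) hCne hCU hCU hE hE' hB hUB
      (fun _ => hne) ?_ ?_
    · have h1 : (E ∪ E') \ B ⊆ {a, a'} := by
        intro y hy
        obtain ⟨hy1, hy2⟩ := Finset.mem_sdiff.1 hy
        rcases Finset.mem_union.1 hy1 with h' | h'
        · rw [hEeq] at h'
          rcases Finset.mem_insert.1 h' with rfl | h'
          · exact Finset.mem_insert_self _ _
          · exact absurd (Finset.mem_singleton.1 h' ▸ hbB) hy2
        · rw [hE'eq] at h'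
          rcases Finset.mem_insert.1 h' with rfl | h'
          · exact Finset.mem_insert_of_mem (Finset.mem_singleton_self _)
          · exact absurd (Finset.mem_singleton.1 h' ▸ hb'B) hy2
      have haa : ({a, a'} : Finset (Fin n)).card ≤ 2 := by
        have := Finset.card_insert_le a ({a'} : Finset (Fin n))
        simpa using this
      have h2 : ((E ∪ E') \ B).card ≤ 2 := le_trans (Finset.card_le_card h1) haa
      rw [hBk, hCc]; omega
    · apply Finset.eq_empty_of_forall_notMem
      intro y hy
      simp only [Finset.mem_inter] at hy
      obtain ⟨⟨hy1, hy2⟩, hy3⟩ := hy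
      have h1 : y ∈ E ∩ B := Finset.mem_inter.2 ⟨hy1, hy3⟩
      have h2 : y ∈ E' ∩ B := Finset.mem_inter.2 ⟨hy2, hy3⟩
      rw [hEiB, Finset.mem_singleton] at h1
      rw [hE'iB, Finset.mem_singleton] at h2
      exact hne' (h1 ▸ h2)
  exact hne (by rw [hEeq, hE'eq, ha, hb])


lemma case_i2_aux (hk : 3 ≤ k) (hunif : ∀ S ∈ F, S.card = k)
    (hci : CondIntersecting 3 (2 * k) F)
    (hU : U = Finset.univ \ (A ∪ B)) (hA : A ∈ F) (hB : B ∈ F) (hAB : Disjoint A B)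
    (hAk : A.card = k) (hBk : B.card = k)
    (hCU : C ⊆ U) (hCc : C.card = k - 2)
    {x : Fin n} (hxU : x ∈ U) (hxC : x ∉ C)
    {t : Fin n} (ht : t ∈ A) {T : Finset (Fin n)} (hT : T ∈ F)
    (hTt : T = insert t (insert x C)) :
    (FamC F U C).card ≤ 1 ∨ FamC F U C ⊆ starFam 2 A t := by
  have hUA : ∀ y ∈ A, y ∉ U := by
    intro y hy hyU; rw [hU] at hyU; exact (Finset.mem_sdiff.1 hyU).2 (Finset.mem_union_left _ hy)
  have hUB : ∀ y ∈ B, y ∉ U := by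
    intro y hy hyU; rw [hU] at hyU; exact (Finset.mem_sdiff.1 hyU).2 (Finset.mem_union_right _ hy)
  have hCne : C.Nonempty := by rw [← Finset.card_pos, hCc]; omega
  have hCD : C ⊆ insert x C := Finset.subset_insert _ _
  have hDU : insert x C ⊆ U := Finset.insert_subset hxU hCU
  have hDc : (insert x C).card = k - 1 := by
    rw [Finset.card_insert_of_notMem hxC, hCc]; omega
  have hCneD : C ≠ insert x C := fun h => hxC (h ▸ Finset.mem_insert_self x C)
  have htB : t ∉ B := Finset.disjoint_left.1 hAB ht
  have hnoB : ∀ E ∈ FamC F U C, ¬ E ⊆ B := by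
    intro E hE hEB
    refine masterTripleT hci hCD hCneD hCne hCU hDU hE hT hTt hB hUB ?_ ?_
    · have h1 : (E ∪ {t}) \ B ⊆ {t} := by
        intro y hy
        obtain ⟨hy1, hy2⟩ := Finset.mem_sdiff.1 hy
        rcases Finset.mem_union.1 hy1 with h' | h'
        · exact absurd (hEB h') hy2
        · exact h'
      have h2 : ((E ∪ {t}) \ B).card ≤ 1 :=
        le_trans (Finset.card_le_card h1) (le_of_eq (Finset.card_singleton t))
      rw [hBk, hDc]; omega
    · rintro ⟨_, h⟩; exact htB h
  have hstarA : ∀ E ∈ FamC F U C, E ⊆ A → t ∈ E := by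
    intro E hE hEA
    by_contra htE
    refine masterTripleT hci hCD hCneD hCne hCU hDU hE hT hTt hA hUA ?_ ?_
    · have h1 : (E ∪ {t}) \ A = ∅ := by
        apply Finset.eq_empty_of_forall_notMem
        intro y hy
        obtain ⟨hy1, hy2⟩ := Finset.mem_sdiff.1 hy
        rcases Finset.mem_union.1 hy1 with h' | h'
        · exact hy2 (hEA h')
        · exact hy2 (Finset.mem_singleton.1 h' ▸ ht)
      rw [hAk, hDc, h1]; simp; omega
    · rintro ⟨h, _⟩; exact htE h
  by_cases hmix : ∃ E₀ ∈ FamC F U C, (E₀ ∩ A).Nonempty ∧ (E₀ ∩ B).Nonempty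
  · obtain ⟨E₀, hE₀, hE₀A, hE₀B⟩ := hmix
    left
    rw [Finset.card_le_one]
    intro E hE E' hE'
    have key : ∀ E'' ∈ FamC F U C, (E'' ∩ A).Nonempty ∧ (E'' ∩ B).Nonempty := by
      intro E'' hE''
      have hI : E'' ⊆ A ∪ B := FamC_subset_I hU hE''
      by_cases hA' : E'' ⊆ A
      · exact (mixed_conflict hk hunif hci hU hA hB hAB hAk hBk hCU hCc hE₀ hE''
          hE₀A hE₀B hA').elim
      · obtain ⟨y, hy, hyA⟩ := Finset.not_subset.1 hA'
        have hyB : y ∈ B := (Finset.mem_union.1 (hI hy)).resolve_left hyA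
        have hBne : (E'' ∩ B).Nonempty := ⟨y, Finset.mem_inter.2 ⟨hy, hyB⟩⟩
        have hAne : (E'' ∩ A).Nonempty := by
          by_contra h
          have hEAe : E'' ∩ A = ∅ := Finset.not_nonempty_iff_eq_empty.1 h
          have hEB : E'' ⊆ B := by
            intro z hz
            rcases Finset.mem_union.1 (hI hz) with h' | h'
            · exact absurd (Finset.mem_inter.2 ⟨hz, h'⟩) (by simp [hEAe])
            · exact h'
          exact hnoB E'' hE'' hEB
        exact ⟨hAne, hBne⟩
    exact mixed_unique hk hunif hci hU hA hB hAB hAk hBk hCU hCc hE hE'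
      (key E hE).1 (key E hE).2 (key E' hE').1 (key E' hE').2
  · right
    intro E hE
    have hI : E ⊆ A ∪ B := FamC_subset_I hU hE
    have hEA : E ⊆ A := by
      by_contra hA'
      obtain ⟨y, hy, hyA⟩ := Finset.not_subset.1 hA'
      have hyB : y ∈ B := (Finset.mem_union.1 (hI hy)).resolve_left hyA
      have hBne : (E ∩ B).Nonempty := ⟨y, Finset.mem_inter.2 ⟨hy, hyB⟩⟩
      have hAne : (E ∩ A).Nonempty := by
        by_contra h
        have hEAe : E ∩ A = ∅ := Finset.not_nonempty_iff_eq_empty.1 h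
        have hEB : E ⊆ B := by
          intro z hz
          rcases Finset.mem_union.1 (hI hz) with h' | h'
          · exact absurd (Finset.mem_inter.2 ⟨hz, h'⟩) (by simp [hEAe])
          · exact h'
        exact hnoB E hE hEB
      exact hmix ⟨E, hE, hAne, hBne⟩
    obtain ⟨S, hSF, hSU, hCS, hSeq, hSE, hEck⟩ := FamC_unpack hunif hE
    have hEc : E.card = 2 := by omega
    exact mem_starFam.2 ⟨hEA, hEc, hstarA E hE hEA⟩

lemma case_i2 (hk : 3 ≤ k) (hunif : ∀ S ∈ F, S.card = k)
    (hci : CondIntersecting 3 (2 * k) F)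
    (hU : U = Finset.univ \ (A ∪ B)) (hA : A ∈ F) (hB : B ∈ F) (hAB : Disjoint A B)
    (hAk : A.card = k) (hBk : B.card = k)
    (hCU : C ⊆ U) (hCc : C.card = k - 2)
    {x : Fin n} (hxU : x ∈ U) (hxC : x ∉ C)
    {T : Finset (Fin n)} (hT : T ∈ F) (hDT : insert x C ⊆ T) :
    (FamC F U C).card ≤ 1 ∨ (∃ t ∈ A, FamC F U C ⊆ starFam 2 A t) ∨
      (∃ t ∈ B, FamC F U C ⊆ starFam 2 B t) := by
  have hDc : (insert x C).card = k - 1 := by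
    rw [Finset.card_insert_of_notMem hxC, hCc]; omega
  have hTc : T.card = k := hunif T hT
  have hsd : (T \ insert x C).card = 1 := by
    rw [Finset.card_sdiff_of_subset hDT, hTc, hDc]; omega
  obtain ⟨t, hts⟩ := Finset.card_eq_one.1 hsd
  have hTt : T = insert t (insert x C) := by
    have h1 := Finset.sdiff_union_of_subset hDT
    rw [hts] at h1
    rw [← h1]; exact (Finset.insert_eq t (insert x C)).symm
  by_cases htA : t ∈ A
  · rcases case_i2_aux hk hunif hci hU hA hB hAB hAk hBk hCU hCc hxU hxC htA hT hTt with
      h | h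
    · exact Or.inl h
    · exact Or.inr (Or.inl ⟨t, htA, h⟩)
  by_cases htB : t ∈ B
  · have hU' : U = Finset.univ \ (B ∪ A) := by rw [Finset.union_comm B A]; exact hU
    rcases case_i2_aux hk hunif hci hU' hB hA hAB.symm hBk hAk hCU hCc hxU hxC htB hT hTt with
      h | h
    · exact Or.inl h
    · exact Or.inr (Or.inr ⟨t, htB, h⟩)
  · have htU : t ∈ U := by rw [hU]; simp [htA, htB]
    have hUA : ∀ y ∈ A, y ∉ U := by
      intro y hy hyU; rw [hU] at hyU
      exact (Finset.mem_sdiff.1 hyU).2 (Finset.mem_union_left _ hy)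
    have hUB : ∀ y ∈ B, y ∉ U := by
      intro y hy hyU; rw [hU] at hyU
      exact (Finset.mem_sdiff.1 hyU).2 (Finset.mem_union_right _ hy)
    have hCne : C.Nonempty := by rw [← Finset.card_pos, hCc]; omega
    have hCD : C ⊆ insert x C := Finset.subset_insert _ _
    have hDU : insert x C ⊆ U := Finset.insert_subset hxU hCU
    have hCneD : C ≠ insert x C := fun h => hxC (h ▸ Finset.mem_insert_self x C)
    have hnoA : ∀ E ∈ FamC F U C, ¬ E ⊆ A := by
      intro E hE hEA
      refine masterTripleT hci hCD hCneD hCne hCU hDU hE hT hTt hA hUA ?_ ?_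
      · have h1 : (E ∪ {t}) \ A ⊆ {t} := by
          intro y hy
          obtain ⟨hy1, hy2⟩ := Finset.mem_sdiff.1 hy
          rcases Finset.mem_union.1 hy1 with h' | h'
          · exact absurd (hEA h') hy2
          · exact h'
        have h2 : ((E ∪ {t}) \ A).card ≤ 1 :=
          le_trans (Finset.card_le_card h1) (le_of_eq (Finset.card_singleton t))
        rw [hAk, hDc]; omega
      · rintro ⟨_, h⟩; exact hUA t h htU
    have hnoB : ∀ E ∈ FamC F U C, ¬ E ⊆ B := by
      intro E hE hEB
      refine masterTripleT hci hCD hCneD hCne hCU hDU hE hT hTt hB hUB ?_ ?_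
      · have h1 : (E ∪ {t}) \ B ⊆ {t} := by
          intro y hy
          obtain ⟨hy1, hy2⟩ := Finset.mem_sdiff.1 hy
          rcases Finset.mem_union.1 hy1 with h' | h'
          · exact absurd (hEB h') hy2
          · exact h'
        have h2 : ((E ∪ {t}) \ B).card ≤ 1 :=
          le_trans (Finset.card_le_card h1) (le_of_eq (Finset.card_singleton t))
        rw [hBk, hDc]; omega
      · rintro ⟨_, h⟩; exact hUB t h htU
    left
    rw [Finset.card_le_one]
    intro E hE E' hE'
    have key : ∀ E'' ∈ FamC F U C, (E'' ∩ A).Nonempty ∧ (E'' ∩ B).Nonempty := by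
      intro E'' hE''
      have hI : E'' ⊆ A ∪ B := FamC_subset_I hU hE''
      have hAne : (E'' ∩ A).Nonempty := by
        by_contra h
        have hEAe : E'' ∩ A = ∅ := Finset.not_nonempty_iff_eq_empty.1 h
        have hEB : E'' ⊆ B := by
          intro z hz
          rcases Finset.mem_union.1 (hI hz) with h' | h'
          · exact absurd (Finset.mem_inter.2 ⟨hz, h'⟩) (by simp [hEAe])
          · exact h'
        exact hnoB E'' hE'' hEB
      have hBne : (E'' ∩ B).Nonempty := by
        by_contra h
        have hEBe : E'' ∩ B = ∅ := Finset.not_nonempty_iff_eq_empty.1 h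
        have hEA : E'' ⊆ A := by
          intro z hz
          rcases Finset.mem_union.1 (hI hz) with h' | h'
          · exact h'
          · exact absurd (Finset.mem_inter.2 ⟨hz, h'⟩) (by simp [hEBe])
        exact hnoA E'' hE'' hEA
      exact ⟨hAne, hBne⟩
    exact mixed_unique hk hunif hci hU hA hB hAB hAk hBk hCU hCc hE hE'
      (key E hE).1 (key E hE).2 (key E' hE').1 (key E' hE').2


end Aux

section Aux2

variable {n k : ℕ} {F : Finset (Finset (Fin n))} {A B U C : Finset (Fin n)}

lemma nonperf_bound (hk : 3 ≤ k) (hunif : ∀ S ∈ F, S.card = k)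
    (hci : CondIntersecting 3 (2 * k) F)
    (hU : U = Finset.univ \ (A ∪ B)) (hA : A ∈ F) (hB : B ∈ F) (hAB : Disjoint A B)
    (hAk : A.card = k) (hBk : B.card = k)
    {i : ℕ} (hi1 : 2 ≤ i) (hi2 : 2 * i ≤ k + 1)
    (hCU : C ⊆ U) (hCc : C.card = k - i) (hnp : ¬ PerfectSet k F A B U C)
    {D : Finset (Fin n)} (hDU : D ⊆ U) (hDc : D.card = k - i + 1) (hCD : C ⊆ D)
    (hPD : PerfectSet k F A B U D) :
    (FamC F U C).card < (k - 1).choose (i - 1) := by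
  have hik : i ≤ k := by omega
  have hsd : (D \ C).card = 1 := by
    rw [Finset.card_sdiff_of_subset hCD, hCc, hDc]; omega
  obtain ⟨x, hxs⟩ := Finset.card_eq_one.1 hsd
  have hDx : D = insert x C := by
    have h1 := Finset.sdiff_union_of_subset hCD
    rw [hxs] at h1
    rw [← h1]; exact (Finset.insert_eq x C).symm
  have hxD : x ∈ D \ C := by rw [hxs]; exact Finset.mem_singleton_self x
  have hxU : x ∈ U := hDU (Finset.mem_sdiff.1 hxD).1
  have hxC : x ∉ C := (Finset.mem_sdiff.1 hxD).2
  have hCnot : C.card ≠ k - 1 := by rw [hCc]; omega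
  have hknpC : k - C.card = i := by rw [hCc]; omega
  rw [PerfectSet, if_neg hCnot, hknpC] at hnp
  by_cases hi2' : i = 2
  · subst hi2'
    have hDk1 : D.card = k - 1 := by rw [hDc]; omega
    rw [PerfectSet, if_pos hDk1] at hPD
    obtain ⟨T, hT, hDT⟩ := hPD
    have hDT' : insert x C ⊆ T := hDx ▸ hDT
    have hCc2 : C.card = k - 2 := by rw [hCc]
    have hch : (k - 1).choose (2 - 1) = k - 1 := Nat.choose_one_right _
    rcases case_i2 hk hunif hci hU hA hB hAB hAk hBk hCU hCc2 hxU hxC hT hDT' with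
      h | ⟨t, ht, hsub⟩ | ⟨t, ht, hsub⟩
    · rw [hch]; omega
    · have hne : FamC F U C ≠ starFam 2 A t := fun h => hnp (Or.inl ⟨t, ht, h⟩)
      have := Finset.card_lt_card (Finset.ssubset_iff_subset_ne.2 ⟨hsub, hne⟩)
      rwa [starFam_card ht (by omega), hAk] at this
    · have hne : FamC F U C ≠ starFam 2 B t := fun h => hnp (Or.inr ⟨t, ht, h⟩)
      have := Finset.card_lt_card (Finset.ssubset_iff_subset_ne.2 ⟨hsub, hne⟩)
      rwa [starFam_card ht (by omega), hBk] at this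
  · have hi3 : 3 ≤ i := by omega
    have hDnot : D.card ≠ k - 1 := by rw [hDc]; omega
    rw [PerfectSet, if_neg hDnot] at hPD
    have hkD : k - D.card = i - 1 := by rw [hDc]; omega
    rw [hkD] at hPD
    rcases hPD with ⟨v, hv, hstar⟩ | ⟨v, hv, hstar⟩
    · have hsub := subset_star hunif hci hU hA hB hAB hAk hBk hi3 hi2 hCU hCc hxU hxC hv
        (hDx ▸ hstar)
      have hne : FamC F U C ≠ starFam i A v := fun h => hnp (Or.inl ⟨v, hv, h⟩)
      have := Finset.card_lt_card (Finset.ssubset_iff_subset_ne.2 ⟨hsub, hne⟩)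
      rwa [starFam_card hv (by omega), hAk] at this
    · have hU' : U = Finset.univ \ (B ∪ A) := by rw [Finset.union_comm B A]; exact hU
      have hsub := subset_star hunif hci hU' hB hA hAB.symm hBk hAk hi3 hi2 hCU hCc hxU hxC hv
        (hDx ▸ hstar)
      have hne : FamC F U C ≠ starFam i B v := fun h => hnp (Or.inr ⟨v, hv, h⟩)
      have := Finset.card_lt_card (Finset.ssubset_iff_subset_ne.2 ⟨hsub, hne⟩)
      rwa [starFam_card hv (by omega), hBk] at this

end Aux2


theorem stmt13 (n k : ℕ) (hk : 3 ≤ k)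
    (F : Finset (Finset (Fin n))) (hunif : ∀ S ∈ F, S.card = k)
    (hci : CondIntersecting 3 (2 * k) F)
    (A B : Finset (Fin n)) (hA : A ∈ F) (hB : B ∈ F) (hAB : Disjoint A B)
    (i : ℕ) (hi1 : 2 ≤ i) (hi2 : 2 * i ≤ k + 1) :
    ((F.filter (fun S => (S ∩ (A ∪ B)).card = i)).card : ℤ) ≤
      (((k - 1).choose (i - 1) * (n - 2 * k).choose (k - i) : ℕ) : ℤ)
      + (((2 * k).choose i : ℤ) - (((k - 1).choose (i - 1) : ℕ) : ℤ) + 1)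
          * (badCount k i F A B (Finset.univ \ (A ∪ B)) : ℤ)
      - (nonPerfectCount k i F A B (Finset.univ \ (A ∪ B)) : ℤ) := by
  classical
  set U : Finset (Fin n) := Finset.univ \ (A ∪ B) with hU
  have hAk : A.card = k := hunif A hA
  have hBk : B.card = k := hunif B hB
  have hIc : (A ∪ B).card = 2 * k := by
    rw [Finset.card_union_of_disjoint hAB, hAk, hBk]; omega
  have hUc : U.card = n - 2 * k := by
    rw [hU, Finset.card_sdiff_of_subset (Finset.subset_univ _), Finset.card_univ, Fintype.card_fin, hIc]
  have hik : i ≤ k := by omega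
  have hIU : Disjoint (A ∪ B) U := by rw [hU]; exact Finset.disjoint_sdiff
  have hkey : ∀ S ∈ F, (S ∩ (A ∪ B)).card + (S ∩ U).card = k := by
    intro S hS
    have hdisj : Disjoint (S ∩ (A ∪ B)) (S ∩ U) :=
      hIU.mono Finset.inter_subset_right Finset.inter_subset_right
    have hunion : (S ∩ (A ∪ B)) ∪ (S ∩ U) = S := by
      rw [← Finset.inter_union_distrib_left, hU,
        Finset.union_sdiff_of_subset (Finset.subset_univ _), Finset.inter_univ]
    rw [← Finset.card_union_of_disjoint hdisj, hunion, hunif S hS]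
  have hfib : (F.filter (fun S => (S ∩ (A ∪ B)).card = i)).card
      = ∑ C ∈ U.powersetCard (k - i), (F.filter (fun S => S ∩ U = C)).card := by
    rw [Finset.card_eq_sum_card_fiberwise (f := fun S => S ∩ U)
      (t := U.powersetCard (k - i)) ?_]
    · apply Finset.sum_congr rfl
      intro C hC
      obtain ⟨hCU, hCc⟩ := Finset.mem_powersetCard.1 hC
      congr 1
      rw [Finset.filter_filter]
      apply Finset.filter_congr
      intro S hS
      constructor
      · rintro ⟨_, h⟩; exact h
      · intro h
        refine ⟨?_, h⟩
        have := hkey S hS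
        rw [h, hCc] at this
        omega
    · intro S hS
      obtain ⟨hSF, hSi⟩ := Finset.mem_filter.1 hS
      refine Finset.mem_powersetCard.2 ⟨Finset.inter_subset_right, ?_⟩
      show (S ∩ U).card = k - i
      have := hkey S hSF
      omega
  have hFamC_card : ∀ C : Finset (Fin n),
      (FamC F U C).card = (F.filter (fun S => S ∩ U = C)).card := by
    intro C
    apply Finset.card_image_of_injOn
    intro S hS S' hS' hEq
    simp only [Finset.coe_filter, Set.mem_setOf_eq] at hS hS'
    have h1 : C ⊆ S := hS.2 ▸ Finset.inter_subset_left
    have h2 : C ⊆ S' := hS'.2 ▸ Finset.inter_subset_left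
    have hEq' : S \ C = S' \ C := hEq
    rw [← Finset.sdiff_union_of_subset h1, ← Finset.sdiff_union_of_subset h2, hEq']
  have hmain : ∀ C ∈ U.powersetCard (k - i),
      ((FamC F U C).card : ℤ) ≤ (((k - 1).choose (i - 1) : ℕ) : ℤ)
        + ((((2 * k).choose i : ℕ) : ℤ) - (((k - 1).choose (i - 1) : ℕ) : ℤ) + 1)
          * (if (¬ PerfectSet k F A B U C ∧ ∀ D ∈ U.powersetCard (k - i + 1), C ⊆ D →
              ¬ PerfectSet k F A B U D) then (1 : ℤ) else 0)
        - (if ¬ PerfectSet k F A B U C then (1 : ℤ) else 0) := by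
    intro C hC
    obtain ⟨hCU, hCc⟩ := Finset.mem_powersetCard.1 hC
    have hCnot : C.card ≠ k - 1 := by rw [hCc]; omega
    have hknpC : k - C.card = i := by rw [hCc]; omega
    by_cases hp : PerfectSet k F A B U C
    · rw [if_neg (fun h => h.1 hp), if_neg (not_not_intro hp)]
      have hcard : (FamC F U C).card = (k - 1).choose (i - 1) := by
        rw [PerfectSet, if_neg hCnot, hknpC] at hp
        rcases hp with ⟨v, hv, h⟩ | ⟨v, hv, h⟩
        · rw [h, starFam_card hv (by omega), hAk]
        · rw [h, starFam_card hv (by omega), hBk]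
      rw [hcard]; ring_nf; exact le_refl _
    · by_cases hb : ∀ D ∈ U.powersetCard (k - i + 1), C ⊆ D → ¬ PerfectSet k F A B U D
      · rw [if_pos ⟨hp, hb⟩, if_pos hp]
        have h1 : (FamC F U C).card ≤ (2 * k).choose i := by
          have hsub : FamC F U C ⊆ (A ∪ B).powersetCard i := by
            intro E hE
            obtain ⟨S, hSF, hSU, hCS, hSeq, hSE, hEck⟩ := FamC_unpack hunif hE
            exact Finset.mem_powersetCard.2 ⟨FamC_subset_I hU hE, by omega⟩
          calc (FamC F U C).card ≤ ((A ∪ B).powersetCard i).card := Finset.card_le_card hsub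
            _ = (2 * k).choose i := by rw [Finset.card_powersetCard, hIc]
        have h1' : ((FamC F U C).card : ℤ) ≤ (((2 * k).choose i : ℕ) : ℤ) := by
          exact_mod_cast h1
        linarith
      · push_neg at hb
        obtain ⟨D, hD, hCD, hPD⟩ := hb
        rw [if_neg (fun h => h.2 D hD hCD hPD), if_pos hp]
        obtain ⟨hDU, hDc⟩ := Finset.mem_powersetCard.1 hD
        have h2 := nonperf_bound hk hunif hci hU hA hB hAB hAk hBk hi1 hi2 hCU hCc hp
          hDU hDc hCD hPD
        have h2' : ((FamC F U C).card : ℤ) + 1 ≤ (((k - 1).choose (i - 1) : ℕ) : ℤ) := by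
          exact_mod_cast h2
        linarith
  have hsum1 : ((F.filter (fun S => (S ∩ (A ∪ B)).card = i)).card : ℤ)
      = ∑ C ∈ U.powersetCard (k - i), ((FamC F U C).card : ℤ) := by
    rw [hfib, Nat.cast_sum]
    exact Finset.sum_congr rfl fun C _ => by rw [hFamC_card C]
  rw [hsum1]
  have hle := Finset.sum_le_sum hmain
  refine le_trans hle ?_
  rw [Finset.sum_sub_distrib, Finset.sum_add_distrib, ← Finset.mul_sum,
    Finset.sum_const, Finset.sum_boole, Finset.sum_boole]
  have hP : (U.powersetCard (k - i)).card = (n - 2 * k).choose (k - i) := by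
    rw [Finset.card_powersetCard, hUc]
  have hbadeq : ((U.powersetCard (k - i)).filter
      (fun C => ¬ PerfectSet k F A B U C ∧ ∀ D ∈ U.powersetCard (k - i + 1), C ⊆ D →
        ¬ PerfectSet k F A B U D)).card = badCount k i F A B U := by
    rw [badCount]
  have hnpeq : ((U.powersetCard (k - i)).filter
      (fun C => ¬ PerfectSet k F A B U C)).card = nonPerfectCount k i F A B U := by
    rw [nonPerfectCount]
  rw [hbadeq, hnpeq, hP, nsmul_eq_mul]
  push_cast
  ring_nf
  linarith
end
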